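/- arXiv:quant-ph/0501126 — 8 statements merged into one kernel-verified Lean document; each statement's English description precedes it below -/
import Mathlib

section
/- Let q be a prime power, m ≥ 2 an integer, and n = q^m − 1. Let α be a primitive element of F_{q^m} (a generator of the multiplicative group of F_{q^m}), and for an integer δ with 2 ≤ δ ≤ n let C be the primitive, narrow-sense BCH code of designed distance δ, i.e. C = {c ∈ F_q^n : Σ_{i=0}^{n−1} c_i α^{ij} = 0 in F_{q^m} for every integer j with 1 ≤ j ≤ δ−1}. Then the Euclidean dual code C^⊥ is contained in C if and only if δ ≤ q^{⌈m/2⌉} − 1 − (q−2)·[m is odd], where [P] equals 1 if P holds and 0 otherwise. -/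
/-- Primitive, narrow-sense BCH code of designed distance `δ`: all words
`c ∈ F_q^n` such that `∑ i, c i * α ^ (i*j) = 0` for `1 ≤ j ≤ δ - 1`. -/
def bchCode (F : Type*) {E : Type*} [Field F] [Field E] [Algebra F E]
    (n : ℕ) (α : E) (δ : ℕ) : Submodule F (Fin n → F) where
  carrier := {c | ∀ j : ℕ, 1 ≤ j → j ≤ δ - 1 →
    ∑ i : Fin n, algebraMap F E (c i) * α ^ ((i : ℕ) * j) = 0}
  zero_mem' := by intro j _ _; simp
  add_mem' := by
    intro a b ha hb j h1 h2
    have hA := ha j h1 h2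
    have hB := hb j h1 h2
    simp only [Pi.add_apply, map_add, add_mul]
    rw [Finset.sum_add_distrib, hA, hB, add_zero]
  smul_mem' := by
    intro r a ha j h1 h2
    have hA := ha j h1 h2
    simp only [Pi.smul_apply, smul_eq_mul, map_mul, mul_assoc]
    rw [← Finset.mul_sum, hA, mul_zero]

/-- Euclidean dual of a set of codewords. -/
def dualSet {F : Type*} [Field F] {n : ℕ} (C : Set (Fin n → F)) : Set (Fin n → F) :=
  {y | ∀ x ∈ C, ∑ i, x i * y i = 0}

section BCHAuxLemmas
open Polynomial Finset

set_option maxHeartbeats 2000000 in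
lemma bch_arith (q m δ : ℕ) (hq : 2 ≤ q) (hm : 2 ≤ m) (hδ1 : 2 ≤ δ) (hδ2 : δ ≤ q ^ m - 1) :
    (∀ j j' k : ℕ, 1 ≤ j → j ≤ δ - 1 → 1 ≤ j' → j' ≤ δ - 1 → k < m →
      ¬ (q ^ m - 1) ∣ (j * q ^ k + j')) ↔
    δ ≤ q ^ ((m + 1) / 2) - 1 - (q - 2) * (if Odd m then 1 else 0) := by
  set t := m / 2 with ht
  have hQ2 : 2 ≤ q ^ t := by
    calc 2 ≤ q := hq
    _ = q ^ 1 := (pow_one q).symm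
    _ ≤ q ^ t := Nat.pow_le_pow_right (by omega) (by omega)
  constructor
  · -- contrapositive: if bound fails, find a witness
    intro h
    by_contra hB
    push_neg at hB
    rcases Nat.even_or_odd m with hme | hmo
    · -- m even, bound = q^t - 1, witness j = j' = q^t - 1, k = t
      have hmeq : m = t * 2 := by
        rcases hme with ⟨r, hr⟩; omega
      have hodd : ¬ Odd m := by simp [Nat.not_odd_iff_even.mpr hme]
      rw [if_neg hodd, Nat.mul_zero, Nat.sub_zero] at hB
      have hBt : (m + 1) / 2 = t := by omega
      rw [hBt] at hB
      -- so q^t - 1 ≤ δ - 1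
      have hjle : q ^ t - 1 ≤ δ - 1 := by omega
      have hdvd : (q ^ m - 1) ∣ ((q ^ t - 1) * q ^ t + (q ^ t - 1)) := by
        have hpow : q ^ m = q ^ t * q ^ t := by
          rw [hmeq, pow_mul, sq]
        obtain ⟨R, hR⟩ : ∃ R, q ^ t = R + 1 := ⟨q ^ t - 1, by omega⟩
        have e : R * (R + 1) + R + 1 = (R + 1) * (R + 1) := by ring
        have : (q ^ t - 1) * q ^ t + (q ^ t - 1) = q ^ m - 1 := by
          rw [hpow, hR, Nat.add_sub_cancel]; omega
        rw [this]
      exact h (q ^ t - 1) (q ^ t - 1) t (by omega) hjle (by omega) hjle (by omega) hdvd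
    · -- m odd, m = 2t+1, bound = q^(t+1) - q + 1
      have hmeq : m = 2 * t + 1 := by
        rcases hmo with ⟨r, hr⟩; omega
      have ht1 : 1 ≤ t := by omega
      rw [if_pos hmo, Nat.mul_one] at hB
      have hBt : (m + 1) / 2 = t + 1 := by omega
      rw [hBt] at hB
      have hQq : q ≤ q ^ t := by
        calc q = q ^ 1 := (pow_one q).symm
        _ ≤ q ^ t := Nat.pow_le_pow_right (by omega) ht1
      have hqq : q ≤ q ^ (t+1) := by
        calc q = q ^ 1 := (pow_one q).symm
        _ ≤ q ^ (t+1) := Nat.pow_le_pow_right (by omega) (by omega)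
      have hqt1 : q ^ (t + 1) = q * q ^ t := by rw [pow_succ]; ring
      -- bound B = q^(t+1) - q + 1 ≤ δ - 1
      have hjle : q ^ (t+1) - q + 1 ≤ δ - 1 := by omega
      have hQQ : q ^ t + 2 ≤ q ^ (t + 1) := by
        have : 2 * q ^ t ≤ q * q ^ t := mul_le_mul_left hq _
        omega
      have hj'le : q ^ (t+1) - q ^ t - 1 ≤ δ - 1 := by omega
      have hdvd : (q ^ m - 1) ∣ ((q ^ (t+1) - q + 1) * q ^ t + (q ^ (t+1) - q ^ t - 1)) := by
        have hpow : q ^ m = q * (q ^ t * q ^ t) := by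
          rw [hmeq, pow_succ, pow_mul, sq]; ring
        have key : ∀ Q : ℕ, 2 ≤ Q →
            (q * Q - q + 1) * Q + (q * Q - Q - 1) = q * (Q * Q) - 1 := by
          intro Q hQ
          have h1 : q ≤ q * Q := Nat.le_mul_of_pos_right q (by omega)
          have h2 : Q + 1 ≤ q * Q := by nlinarith
          have h3 : 1 ≤ q * (Q * Q) := Nat.one_le_iff_ne_zero.mpr (by positivity)
          zify [h1, h3, show Q ≤ q * Q by omega, show 1 ≤ q * Q - Q by omega]
          ring
        have : (q ^ (t+1) - q + 1) * q ^ t + (q ^ (t+1) - q ^ t - 1) = q ^ m - 1 := by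
          rw [hqt1, hpow]
          exact key (q ^ t) hQ2
        rw [this]
      exact h (q ^ (t+1) - q + 1) (q ^ (t+1) - q ^ t - 1) t (by omega) hjle (by omega)
        hj'le (by omega) hdvd
  · -- backward: bound holds ⇒ no witness
    intro hB j j' k hj1 hjD hj'1 hj'D hk hdvd
    -- key claim for k ≤ t
    have claim : ∀ a b k' : ℕ, 1 ≤ a → a ≤ δ - 1 → 1 ≤ b → b ≤ δ - 1 → k' ≤ t →
        ¬ (q ^ m - 1) ∣ (a * q ^ k' + b) := by
      intro a b k' ha1 haD hb1 hbD hk' hdvd'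
      have hpos : 1 ≤ a * q ^ k' + b := by omega
      have hle : q ^ m - 1 ≤ a * q ^ k' + b := Nat.le_of_dvd (by omega) hdvd'
      have hqk : q ^ k' ≤ q ^ t := Nat.pow_le_pow_right (by omega) hk'
      have hub : a * q ^ k' + b ≤ (δ - 1) * q ^ t + (δ - 1) :=
        Nat.add_le_add (Nat.mul_le_mul haD hqk) hbD
      -- show (δ-1) * q^t + (δ-1) < q^m - 1
      rcases Nat.even_or_odd m with hme | hmo
      · have hmeq : m = t * 2 := by rcases hme with ⟨r, hr⟩; omega
        have hodd : ¬ Odd m := Nat.not_odd_iff_even.mpr hme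
        rw [if_neg hodd, Nat.mul_zero, Nat.sub_zero, show (m+1)/2 = t by omega] at hB
        have hD : δ - 1 + 2 ≤ q ^ t := by omega
        have hpow : q ^ m = q ^ t * q ^ t := by rw [hmeq, pow_mul, sq]
        have hmul : (δ - 1 + 2) * q ^ t ≤ q ^ t * q ^ t := mul_le_mul_left hD _
        have : (δ - 1) * q ^ t + (δ - 1) + 1 < q ^ t * q ^ t := by nlinarith
        omega
      · have hmeq : m = 2 * t + 1 := by rcases hmo with ⟨r, hr⟩; omega
        have ht1 : 1 ≤ t := by omega
        rw [if_pos hmo, Nat.mul_one, show (m+1)/2 = t + 1 by omega] at hB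
        have hqq : q ≤ q ^ (t+1) := by
          calc q = q ^ 1 := (pow_one q).symm
          _ ≤ q ^ (t+1) := Nat.pow_le_pow_right (by omega) (by omega)
        have hqt1 : q ^ (t + 1) = q * q ^ t := by rw [pow_succ]; ring
        have hD : δ - 1 + q ≤ q * q ^ t := by omega
        have hpow : q ^ m = q * q ^ t * q ^ t := by
          rw [hmeq, pow_succ, pow_mul, sq]; ring
        have hmul : (δ - 1 + q) * q ^ t ≤ q * q ^ t * q ^ t := mul_le_mul_left hD _
        have hq2' : 2 * q ^ t ≤ q * q ^ t := mul_le_mul_left hq _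
        have : (δ - 1) * q ^ t + (δ - 1) + 1 < q * q ^ t * q ^ t := by nlinarith
        omega
    rcases le_or_gt k t with hkt | hkt
    · exact claim j j' k hj1 hjD hj'1 hj'D hkt hdvd
    · -- swap: n ∣ j' * q^(m-k) + j
      have hmk : m - k ≤ t := by omega
      have h1 : 1 ≤ q ^ m := Nat.one_le_two_pow.trans (Nat.pow_le_pow_left hq m)
      have hpowsplit : q ^ k * q ^ (m - k) = q ^ m := by
        rw [← pow_add]; congr 1; omega
      have hdvd1 : (q ^ m - 1) ∣ (j * q ^ k + j') * q ^ (m - k) := hdvd.mul_right _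
      have heq : (j * q ^ k + j') * q ^ (m - k)
          = j * (q ^ m - 1) + (j' * q ^ (m - k) + j) := by
        have e1 : (j * q ^ k + j') * q ^ (m - k)
            = j * (q ^ k * q ^ (m - k)) + j' * q ^ (m - k) := by ring
        rw [e1, hpowsplit]
        have : j * q ^ m = j * (q ^ m - 1) + j := by
          rw [← Nat.mul_succ]; congr 1; omega
        omega
      rw [heq] at hdvd1
      have hdvd2 : (q ^ m - 1) ∣ (j' * q ^ (m - k) + j) :=
        (Nat.dvd_add_right (Dvd.intro_left j rfl : (q^m-1) ∣ j * (q^m-1))).mp hdvd1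
      exact claim j' j (m - k) hj'1 hj'D hj1 hjD hmk hdvd2


open Polynomial Finset

/-- A nonzero additive polynomial `∑_{k ∈ K} X^(q^k)` with exponents `< m`
does not vanish identically on a field of `q^m` elements. -/
lemma exists_sum_pow_ne_zero (E : Type*) [Field E] [Fintype E] (q m : ℕ) (hq : 2 ≤ q)
    (hE : Fintype.card E = q ^ m) (K : Finset ℕ) (hK : K.Nonempty) (hKm : ∀ k ∈ K, k < m) :
    ∃ β : E, ∑ k ∈ K, β ^ q ^ k ≠ 0 := by
  classical
  by_contra hall
  push_neg at hall
  obtain ⟨k0, hk0⟩ := hK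
  have hm1 : 1  ≤ m := lt_of_le_of_lt (Nat.zero_le _) (hKm k0 hk0)
  set g : E[X] := ∑ k ∈ K, X ^ q ^ k with hg
  have hgne : g ≠ 0 := by
    intro h0
    have hco : g.coeff (q ^ k0) = 1 := by
      rw [hg, finset_sum_coeff]
      have hrw : ∀ k ∈ K, ((X : E[X]) ^ q ^ k).coeff (q ^ k0)
          = if k = k0 then (1 : E) else 0 := by
        intro k _
        rw [coeff_X_pow]
        congr 1
        rw [(Nat.pow_right_injective hq).eq_iff]; exact propext eq_comm
      rw [Finset.sum_congr rfl hrw, Finset.sum_ite_eq' K k0 (fun _ => (1 : E))]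
      simp [hk0]
    rw [h0] at hco
    simp at hco
  have hdeg : g.natDegree ≤ q ^ (m - 1) := by
    apply natDegree_sum_le_of_forall_le
    intro k hk
    rw [natDegree_X_pow]
    exact Nat.pow_le_pow_right (by omega) (by have := hKm k hk; omega)
  have hsub : (Finset.univ : Finset E) ⊆ g.roots.toFinset := by
    intro β _
    rw [Multiset.mem_toFinset, mem_roots hgne]
    simp only [IsRoot, hg, eval_finset_sum, eval_pow, eval_X]
    exact hall β
  have hcard : q ^ m ≤ q ^ (m - 1) := by
    calc q ^ m = Fintype.card E := hE.symm
    _ = (Finset.univ : Finset E).card := (Finset.card_univ).symm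
    _ ≤ g.roots.toFinset.card := Finset.card_le_card hsub
    _ ≤ Multiset.card g.roots := Multiset.toFinset_card_le _
    _ ≤ g.natDegree := g.card_roots'
    _ ≤ q ^ (m - 1) := hdeg
  have : q ^ (m - 1) < q ^ m := Nat.pow_lt_pow_right (by omega) (by omega)
  omega

/-- Elements of `E` fixed by `x ↦ x^q` lie in the image of `F`, `|F| = q`. -/
lemma fixed_mem_algebraMap (F E : Type*) [Field F] [Fintype F] [Field E] [Fintype E]
    [Algebra F E] (q : ℕ) (hF : Fintype.card F = q) (x : E) (hx : x ^ q = x) :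
    ∃ a : F, algebraMap F E a = x := by
  classical
  have hq : 2 ≤ q := hF ▸ Fintype.one_lt_card
  set f : E[X] := X ^ q - X with hf
  have hfne : f ≠ 0 := by
    intro h0
    have hco : f.coeff q = 1 := by
      rw [hf, coeff_sub, coeff_X_pow, coeff_X]
      rw [if_pos rfl, if_neg (by omega)]
      ring
    rw [h0] at hco
    simp at hco
  have hfdeg : f.natDegree ≤ q :=
    le_trans (natDegree_sub_le _ _) (by simp [natDegree_X_pow]; omega)
  have hroot : ∀ y : E, y ^ q = y → y ∈ f.roots.toFinset := by
    intro y hy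
    rw [Multiset.mem_toFinset, mem_roots hfne]
    simp [IsRoot, hf, hy]
  set I : Finset E := Finset.univ.image (algebraMap F E) with hI
  have hIcard : I.card = q := by
    rw [hI, Finset.card_image_of_injective _ (algebraMap F E).injective,
      Finset.card_univ, hF]
  have hIsub : I ⊆ f.roots.toFinset := by
    intro y hy
    rw [hI, Finset.mem_image] at hy
    obtain ⟨a, _, rfl⟩ := hy
    apply hroot
    rw [← map_pow]
    congr 1
    rw [← hF]
    exact FiniteField.pow_card a
  have heq : I = f.roots.toFinset := by
    apply Finset.eq_of_subset_of_card_le hIsub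
    calc f.roots.toFinset.card ≤ Multiset.card f.roots := Multiset.toFinset_card_le _
    _ ≤ f.natDegree := f.card_roots'
    _ ≤ q := hfdeg
    _ = I.card := hIcard.symm
  have : x ∈ I := heq ▸ hroot x hx
  rw [hI, Finset.mem_image] at this
  obtain ⟨a, _, ha⟩ := this
  exact ⟨a, ha⟩

/-- Geometric sum over the cyclic group generated by a primitive element. -/
lemma geom_sum_primitive (E : Type*) [Field E] [Fintype E] (q m : ℕ) (hq : 2 ≤ q)
    (hm : 1 ≤ m) (hE : Fintype.card E = q ^ m) (α : E) (hα : orderOf α = q ^ m - 1)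
    (s : ℕ) :
    ∑ i : Fin (q ^ m - 1), α ^ ((i : ℕ) * s) = if (q ^ m - 1) ∣ s then -1 else 0 := by
  have hqm1 : 2 ≤ q ^ m := le_trans hq (Nat.le_self_pow (by omega) q)
  have hcast : ((q ^ m - 1 : ℕ) : E) = -1 := by
    rw [Nat.cast_sub (by omega), Nat.cast_pow]
    have : ((q : E)) ^ m = ((q ^ m : ℕ) : E) := by push_cast; ring
    rw [this, ← hE, Nat.cast_card_eq_zero]
    ring
  have hrw : ∀ i : Fin (q ^ m - 1), α ^ ((i : ℕ) * s) = (α ^ s) ^ (i : ℕ) := by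
    intro i; rw [← pow_mul, mul_comm]
  simp only [hrw]
  rw [Fin.sum_univ_eq_sum_range (fun i => (α ^ s) ^ i)]
  by_cases hdvd : (q ^ m - 1) ∣ s
  · rw [if_pos hdvd]
    have h1 : α ^ s = 1 := by
      rw [← hα] at hdvd
      exact orderOf_dvd_iff_pow_eq_one.mp hdvd
    rw [h1]
    simp [hcast]
  · rw [if_neg hdvd]
    have hne : α ^ s ≠ 1 := by
      intro h1
      exact hdvd (hα ▸ orderOf_dvd_iff_pow_eq_one.mpr h1)
    rw [geom_sum_eq hne]
    have : (α ^ s) ^ (q ^ m - 1) = 1 := by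
      rw [← pow_mul, mul_comm, pow_mul, ← hα, pow_orderOf_eq_one, one_pow]
    rw [this]
    simp


open Polynomial Finset

lemma frob_sum {E : Type*} [Field E] [Fintype E] {q m : ℕ} (hq : IsPrimePow q)
    (hE : Fintype.card E = q ^ m) (hm : 1 ≤ m) {ι : Type*} (s : Finset ι) (f : ι → E)
    (k : ℕ) : (∑ i ∈ s, f i) ^ q ^ k = ∑ i ∈ s, f i ^ q ^ k := by
  obtain ⟨p', e, hp', he, rfl⟩ := hq
  set p := ringChar E with hp
  haveI : CharP E p := ringChar.charP E
  have hpprime : p.Prime := CharP.char_is_prime E p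
  have hdvd : p ∣ p' ^ (e * m) := by
    rw [← (CharP.cast_eq_zero_iff E p _), pow_mul]
    rw [← hE]
    exact Nat.cast_card_eq_zero E
  have hpp' : p = p' := by
    have := hpprime.dvd_of_dvd_pow hdvd
    exact (Nat.prime_dvd_prime_iff_eq hpprime hp'.nat_prime).mp this
  have hqk : (p' ^ e) ^ k = p ^ (e * k) := by rw [hpp', ← pow_mul]
  haveI := Fact.mk hpprime
  rw [hqk]
  exact sum_pow_char_pow (p := p) (n := e * k) s f

lemma key_sum {E : Type*} [Field E] [Fintype E] {q m : ℕ} (hq : IsPrimePow q)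
    (hm : 1 ≤ m) (hE : Fintype.card E = q ^ m) (α : E) (hα : orderOf α = q ^ m - 1)
    (β : E) (j j' : ℕ) :
    ∑ i : Fin (q ^ m - 1), (∑ k ∈ Finset.range m, (β * α ^ ((i : ℕ) * j)) ^ q ^ k)
        * α ^ ((i : ℕ) * j')
      = - ∑ k ∈ (Finset.range m).filter (fun k => (q ^ m - 1) ∣ (j * q ^ k + j')),
          β ^ q ^ k := by
  have hq2 : 2 ≤ q := hq.two_le
  have step1 : ∀ i : Fin (q ^ m - 1),
      (∑ k ∈ Finset.range m, (β * α ^ ((i : ℕ) * j)) ^ q ^ k) * α ^ ((i : ℕ) * j')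
      = ∑ k ∈ Finset.range m, β ^ q ^ k * α ^ ((i : ℕ) * (j * q ^ k + j')) := by
    intro i
    rw [Finset.sum_mul]
    refine Finset.sum_congr rfl fun k _ => ?_
    rw [mul_pow, ← pow_mul, mul_assoc, ← pow_add]
    congr 2
    ring
  simp only [step1]
  rw [Finset.sum_comm]
  have step2 : ∀ k ∈ Finset.range m,
      ∑ i : Fin (q ^ m - 1), β ^ q ^ k * α ^ ((i : ℕ) * (j * q ^ k + j'))
      = if (q ^ m - 1) ∣ (j * q ^ k + j') then -β ^ q ^ k else 0 := by
    intro k _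
    rw [← Finset.mul_sum,
      geom_sum_primitive E q m hq2 hm hE α hα (j * q ^ k + j')]
    split <;> ring
  rw [Finset.sum_congr rfl step2, ← Finset.sum_filter]
  rw [Finset.sum_neg_distrib]


open Polynomial Finset

lemma trace_exists {F E : Type*} [Field F] [Fintype F] [Field E] [Fintype E] [Algebra F E]
    {q m : ℕ} (hqpp : IsPrimePow q) (hm : 1 ≤ m) (hF : Fintype.card F = q)
    (hE : Fintype.card E = q ^ m) (x : E) :
    ∃ a : F, algebraMap F E a = ∑ k ∈ Finset.range m, x ^ q ^ k := by
  apply fixed_mem_algebraMap F E q hF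
  have h1 : (∑ k ∈ Finset.range m, x ^ q ^ k) ^ q
      = ∑ k ∈ Finset.range m, (x ^ q ^ k) ^ q := by
    have := frob_sum hqpp hE hm (Finset.range m) (fun k => x ^ q ^ k) 1
    simpa [pow_one] using this
  rw [h1]
  have h2 : ∀ k : ℕ, (x ^ q ^ k) ^ q = x ^ q ^ (k + 1) := by
    intro k; rw [← pow_mul, pow_succ]
  simp only [h2]
  have h3 := Finset.sum_range_succ' (fun k => x ^ q ^ k) m
  have h4 := Finset.sum_range_succ (fun k => x ^ q ^ k) m
  have h5 : x ^ q ^ m = x ^ q ^ 0 := by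
    rw [pow_zero, pow_one, ← hE, FiniteField.pow_card]
  have h6 := h3.symm.trans h4
  simp only [h5] at h6
  exact add_right_cancel h6

lemma pairing {F E : Type*} [Field F] [Fintype F] [Field E] [Fintype E] [Algebra F E]
    {q m : ℕ} (hqpp : IsPrimePow q) (hm : 1 ≤ m) (hF : Fintype.card F = q)
    (hE : Fintype.card E = q ^ m) {n : ℕ} (x w : Fin n → F) (v : Fin n → E) (β : E)
    (hw : ∀ i, algebraMap F E (w i) = ∑ k ∈ Finset.range m, (β * v i) ^ q ^ k) :
    algebraMap F E (∑ i, x i * w i)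
      = ∑ k ∈ Finset.range m, (β * ∑ i, algebraMap F E (x i) * v i) ^ q ^ k := by
  have hfix : ∀ (a : F) (k : ℕ), (algebraMap F E a) ^ q ^ k = algebraMap F E a := by
    intro a k
    induction k with
    | zero => simp
    | succ k ih => rw [pow_succ, pow_mul, ih, ← map_pow, ← hF, FiniteField.pow_card]
  rw [map_sum]
  have e1 : ∀ i, algebraMap F E (x i * w i)
      = ∑ k ∈ Finset.range m, (algebraMap F E (x i) * (β * v i)) ^ q ^ k := by
    intro i
    rw [map_mul, hw i, Finset.mul_sum]
    refine Finset.sum_congr rfl fun k _ => ?_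
    conv_rhs => rw [mul_pow, hfix]
  simp only [e1]
  rw [Finset.sum_comm]
  refine Finset.sum_congr rfl fun k _ => ?_
  rw [← frob_sum hqpp hE hm]
  congr 1
  rw [Finset.mul_sum]
  refine Finset.sum_congr rfl fun i _ => ?_
  ring

end BCHAuxLemmas

set_option maxHeartbeats 1000000 in
/-- A primitive, narrow-sense BCH code of length `q^m - 1`, `m ≥ 2`, over `F_q`
contains its Euclidean dual code iff its designed distance `δ` satisfies
`δ ≤ q^⌈m/2⌉ - 1 - (q-2)·[m odd]`. -/
theorem bch_contains_euclidean_dual_iff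
    (q m : ℕ) (hq : IsPrimePow q) (hm : 2 ≤ m)
    (F E : Type*) [Field F] [Fintype F] [Field E] [Fintype E] [Algebra F E]
    (hF : Fintype.card F = q) (hE : Fintype.card E = q ^ m)
    (α : E) (hα : orderOf α = q ^ m - 1)
    (δ : ℕ) (hδ1 : 2 ≤ δ) (hδ2 : δ ≤ q ^ m - 1) :
    dualSet (bchCode F (q ^ m - 1) α δ : Set (Fin (q ^ m - 1) → F)) ⊆
        (bchCode F (q ^ m - 1) α δ : Set (Fin (q ^ m - 1) → F)) ↔
      δ ≤ q ^ ((m + 1) / 2) - 1 - (q - 2) * (if Odd m then 1 else 0) := by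
  classical
  have hq2 : 2 ≤ q := hq.two_le
  have hm1 : 1 ≤ m := by omega
  have memC : ∀ x : Fin (q ^ m - 1) → F,
      x ∈ (bchCode F (q ^ m - 1) α δ : Set (Fin (q ^ m - 1) → F)) ↔
      ∀ j : ℕ, 1 ≤ j → j ≤ δ - 1 →
        ∑ i : Fin (q ^ m - 1), algebraMap F E (x i) * α ^ ((i : ℕ) * j) = 0 :=
    fun x => Iff.rfl
  have memD : ∀ y : Fin (q ^ m - 1) → F,
      y ∈ dualSet (bchCode F (q ^ m - 1) α δ : Set (Fin (q ^ m - 1) → F)) ↔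
      ∀ x ∈ (bchCode F (q ^ m - 1) α δ : Set (Fin (q ^ m - 1) → F)),
        ∑ i, x i * y i = 0 := fun y => Iff.rfl
  rw [← bch_arith q m δ hq2 hm hδ1 hδ2]
  constructor
  · -- containment ⇒ numeric condition
    intro hsub
    by_contra hP
    push_neg at hP
    obtain ⟨j, j', k, hj1, hjD, hj'1, hj'D, hkm, hdvd⟩ := hP
    set K := (Finset.range m).filter (fun k => (q ^ m - 1) ∣ (j * q ^ k + j')) with hK
    have hKne : K.Nonempty :=
      ⟨k, by simp only [hK, Finset.mem_filter, Finset.mem_range]; exact ⟨hkm, hdvd⟩⟩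
    have hKm : ∀ k' ∈ K, k' < m := fun k' hk' =>
      Finset.mem_range.mp (Finset.mem_filter.mp hk').1
    obtain ⟨β, hβ⟩ := exists_sum_pow_ne_zero E q m hq2 hE K hKne hKm
    have hwex : ∀ i : Fin (q ^ m - 1), ∃ a : F,
        algebraMap F E a = ∑ k' ∈ Finset.range m, (β * α ^ ((i : ℕ) * j)) ^ q ^ k' :=
      fun i => trace_exists hq hm1 hF hE _
    choose w hw using hwex
    have hwdual : w ∈ dualSet (bchCode F (q ^ m - 1) α δ : Set (Fin (q ^ m - 1) → F)) := by
      rw [memD]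
      intro x hx
      have hx' := (memC x).mp hx
      have hpair := pairing hq hm1 hF hE x w (fun i => α ^ ((i : ℕ) * j)) β hw
      simp only [hx' j hj1 hjD, mul_zero] at hpair
      have h0 : (∑ k' ∈ Finset.range m, (0 : E) ^ q ^ k') = 0 :=
        Finset.sum_eq_zero fun k' _ => zero_pow (by positivity)
      rw [h0] at hpair
      exact (algebraMap F E).injective (by rw [hpair, map_zero])
    have hwnotC : w ∉ (bchCode F (q ^ m - 1) α δ : Set (Fin (q ^ m - 1) → F)) := by
      intro hmem
      have hx' := (memC w).mp hmem j' hj'1 hj'D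
      have hsum : ∑ i : Fin (q ^ m - 1),
          (∑ k' ∈ Finset.range m, (β * α ^ ((i : ℕ) * j)) ^ q ^ k') * α ^ ((i : ℕ) * j')
          = 0 := by
        rw [← hx']
        exact Finset.sum_congr rfl fun i _ => by rw [hw i]
      rw [key_sum hq hm1 hE α hα β j j'] at hsum
      exact hβ (neg_eq_zero.mp hsum)
    exact hwnotC (hsub hwdual)
  · -- numeric condition ⇒ containment
    intro hP y hy
    rw [memC]
    intro j' hj'1 hj'D
    by_contra hs
    set s := ∑ i : Fin (q ^ m - 1), algebraMap F E (y i) * α ^ ((i : ℕ) * j') with hsdef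
    have key : ∀ β : E, ∑ k ∈ Finset.range m, (β * s) ^ q ^ k = 0 := by
      intro β
      have hwex : ∀ i : Fin (q ^ m - 1), ∃ a : F,
          algebraMap F E a = ∑ k' ∈ Finset.range m, (β * α ^ ((i : ℕ) * j')) ^ q ^ k' :=
        fun i => trace_exists hq hm1 hF hE _
      choose w hw using hwex
      have hwC : w ∈ (bchCode F (q ^ m - 1) α δ : Set (Fin (q ^ m - 1) → F)) := by
        rw [memC]
        intro jj hjj1 hjj2
        have hfe : (Finset.range m).filter
            (fun k => (q ^ m - 1) ∣ (j' * q ^ k + jj)) = ∅ := by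
          rw [Finset.filter_eq_empty_iff]
          intro k hk
          exact hP j' jj k hj'1 hj'D hjj1 hjj2 (Finset.mem_range.mp hk)
        have hsum : ∑ i : Fin (q ^ m - 1),
            algebraMap F E (w i) * α ^ ((i : ℕ) * jj)
            = ∑ i : Fin (q ^ m - 1),
              (∑ k' ∈ Finset.range m, (β * α ^ ((i : ℕ) * j')) ^ q ^ k')
                * α ^ ((i : ℕ) * jj) :=
          Finset.sum_congr rfl fun i _ => by rw [hw i]
        rw [hsum, key_sum hq hm1 hE α hα β j' jj, hfe]
        simp
      have hdual := (memD y).mp hy w hwC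
      have hpair := pairing hq hm1 hF hE y w (fun i => α ^ ((i : ℕ) * j')) β hw
      rw [show ∑ i, y i * w i = ∑ i, w i * y i from
        Finset.sum_congr rfl fun i _ => mul_comm _ _, hdual, map_zero] at hpair
      exact hpair.symm
    obtain ⟨β0, hβ0⟩ := exists_sum_pow_ne_zero E q m hq2 hE (Finset.range m)
      ⟨0, Finset.mem_range.mpr (by omega)⟩ (fun k hk => Finset.mem_range.mp hk)
    apply hβ0
    have hkey := key (β0 * s⁻¹)
    have hrw : β0 * s⁻¹ * s = β0 := by
      rw [mul_assoc, inv_mul_cancel₀ hs, mul_one]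
    rw [hrw] at hkey
    exact hkey
end

section
/- Let q be a prime power, m a positive integer with m ≠ 2, and n = q^{2m} − 1. Let α be a primitive element of F_{q^{2m}}, and for an integer δ with 2 ≤ δ ≤ n let C ⊆ F_{q^2}^n be the primitive, narrow-sense BCH code of designed distance δ over F_{q^2}, i.e. C = {c ∈ F_{q^2}^n : Σ_{i=0}^{n−1} c_i α^{ij} = 0 in F_{q^{2m}} for every integer j with 1 ≤ j ≤ δ−1}. Then the Hermitian dual code C^{⊥h} is contained in C if and only if δ ≤ q^{m + [m is even]} − 1 − (q^2 − 2)·[m is even], where [P] equals 1 if P holds and 0 otherwise. -/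
open Polynomial Finset


private lemma dvd_swap (q m n a b r : ℕ) (hn : n + 1 = q^(2*m)) (hr : r ≤ 2*m)
    (h : n ∣ a * q^r + b) : n ∣ b * q^(2*m - r) + a := by
  have h2 : n ∣ (a * q^r + b) * q^(2*m - r) := h.mul_right _
  have h3 : (a * q^r + b) * q^(2*m - r) = a * n + (b * q^(2*m - r) + a) := by
    have hqq : q ^ r * q ^ (2*m - r) = q ^ (2*m) := by
      rw [← pow_add, Nat.add_sub_cancel' hr]
    calc (a * q^r + b) * q^(2*m - r) = a * (q^r * q^(2*m-r)) + b * q^(2*m-r) := by ring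
    _ = a * (n+1) + b * q^(2*m-r) := by rw [hqq, hn]
    _ = a * n + (b * q^(2*m - r) + a) := by ring
  rw [h3] at h2
  exact (Nat.dvd_add_right (Dvd.intro_left a rfl)).mp h2

/-- Forward combinatorial lemma: if `δ` is at most the bound, there is no solution. -/
private lemma comb_forward (q m δ : ℕ) (hq : 2 ≤ q) (hm : 0 < m) (hm2 : m ≠ 2)
    (hδ : δ ≤ q ^ (m + if Even m then 1 else 0) - 1 - (q ^ 2 - 2) * (if Even m then 1 else 0)) :
    ∀ a b k, 1 ≤ a → a ≤ δ - 1 → 1 ≤ b → b ≤ δ - 1 → k < m →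
      ¬ (q^(2*m) - 1) ∣ (a * q^(2*k+1) + b) := by
  intro a b k ha1 ha2 hb1 hb2 hkm hdvd
  set n := q^(2*m) - 1 with hndef
  have hq2 : 4 ≤ q^2 := by calc (4:ℕ) = 2^2 := rfl
                                _ ≤ q^2 := Nat.pow_le_pow_left hq 2
  have hq2m : 4 ≤ q^(2*m) := by
    calc (4:ℕ) ≤ q^2 := hq2
    _ ≤ q^(2*m) := Nat.pow_le_pow_right (by omega) (by omega)
  have hn1 : n + 1 = q^(2*m) := by omega
  rcases Nat.even_or_odd m with hev | hod
  · -- m even, m ≥ 4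
    have hm4 : 4 ≤ m := by rcases hev with ⟨t, ht⟩; omega
    have hq2m1 : q^2 ≤ q^(m+1) := Nat.pow_le_pow_right (by omega) (by omega)
    have hB : q ^ (m + if Even m then 1 else 0) - 1 - (q ^ 2 - 2) * (if Even m then 1 else 0)
        = q^(m+1) - q^2 + 1 := by
      simp only [if_pos hev, mul_one]; omega
    rw [hB] at hδ
    have haB : a ≤ q^(m+1) - q^2 := by omega
    have hbB : b ≤ q^(m+1) - q^2 := by omega
    have key : ∀ a' b' r, 1 ≤ a' → a' ≤ q^(m+1) - q^2 → b' ≤ q^(m+1) - q^2 → 1 ≤ r → r ≤ m - 1 →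
        ¬ n ∣ (a' * q^r + b') := by
      intro a' b' r ha0' ha' hb' _ hrm hdvd'
      have hqrpos : 0 < q^r := Nat.pow_pos (by omega)
      have hpos : 0 < a' * q^r := Nat.mul_pos (by omega) hqrpos
      have hle : n ≤ a' * q^r + b' := Nat.le_of_dvd (by omega) hdvd'
      set R := q^(m+1) - q^2 with hRdef
      have hR : R + q^2 = q^(m+1) := by omega
      have hqr : q^r ≤ q^(m-1) := Nat.pow_le_pow_right (by omega) hrm
      have h2 : a' * q^r ≤ R * q^(m-1) := Nat.mul_le_mul ha' hqr
      have h3 : R * q^(m-1) + q^(m+1) = q^(2*m) := by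
        have e1 : (R + q^2) * q^(m-1) = q^(m+1) * q^(m-1) := by rw [hR]
        have e2 : q^2 * q^(m-1) = q^(m+1) := by rw [← pow_add]; congr 1; omega
        have e3 : q^(m+1) * q^(m-1) = q^(2*m) := by rw [← pow_add]; congr 1; omega
        rw [add_mul, e2, e3] at e1
        omega
      omega
    set r := 2*k+1 with hrdef
    rcases lt_or_ge r m with hrm | hrm
    · exact key a b r ha1 haB hbB (by omega) (by omega) hdvd
    · have hrm' : m + 1 ≤ r := by
        rcases hev with ⟨t, ht⟩; omega
      have h2 := dvd_swap q m n a b r hn1 (by omega) hdvd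
      exact key b a (2*m - r) hb1 hbB haB (by omega) (by omega) h2
  · -- m odd
    have hmo : m % 2 = 1 := Nat.odd_iff.mp hod
    have hB : q ^ (m + if Even m then 1 else 0) - 1 - (q ^ 2 - 2) * (if Even m then 1 else 0)
        = q^m - 1 := by
      simp only [if_neg (by rw [Nat.even_iff]; omega : ¬ Even m), add_zero, mul_zero]
      omega
    rw [hB] at hδ
    have hQ2 : 2 ≤ q^m := by
      calc (2:ℕ) = 2^1 := rfl
      _ ≤ q^1 := Nat.pow_le_pow_left hq 1
      _ ≤ q^m := Nat.pow_le_pow_right (by omega) (by omega)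
    have haB : a ≤ q^m - 2 := by omega
    have hbB : b ≤ q^m - 2 := by omega
    have hQQ : n + 1 = q^m * q^m := by rw [hn1, two_mul, pow_add]
    have key : ∀ a' b' r, 1 ≤ a' → a' ≤ q^m - 2 → b' ≤ q^m - 2 → 1 ≤ r → r ≤ m →
        ¬ n ∣ (a' * q^r + b') := by
      intro a' b' r ha0' ha' hb' _ hrm hdvd'
      have hqrpos : 0 < q^r := Nat.pow_pos (by omega)
      have hpos : 0 < a' * q^r := Nat.mul_pos (by omega) hqrpos
      have hle : n ≤ a' * q^r + b' := Nat.le_of_dvd (by omega) hdvd'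
      have hqr : q^r ≤ q^m := Nat.pow_le_pow_right (by omega) hrm
      have h2 : a' * q^r ≤ (q^m - 2) * q^m := Nat.mul_le_mul ha' hqr
      have h3 : (q^m - 2) * q^m + 2 * q^m = q^m * q^m := by
        rw [← add_mul]; congr 1; omega
      omega
    set r := 2*k+1 with hrdef
    rcases le_or_gt r m with hrm | hrm
    · exact key a b r ha1 haB hbB (by omega) hrm hdvd
    · have h2 := dvd_swap q m n a b r hn1 (by omega) hdvd
      exact key b a (2*m - r) hb1 hbB haB (by omega) (by omega) h2

/-- Backward combinatorial lemma: if `δ` exceeds the bound, there is a solution. -/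
private lemma comb_backward (q m δ : ℕ) (hq : 2 ≤ q) (hm : 0 < m) (hm2 : m ≠ 2)
    (hδ2 : δ ≤ q ^ (2*m) - 1)
    (hδ : ¬ δ ≤ q ^ (m + if Even m then 1 else 0) - 1 - (q ^ 2 - 2) * (if Even m then 1 else 0)) :
    ∃ a b k, 1 ≤ a ∧ a ≤ δ - 1 ∧ 1 ≤ b ∧ b ≤ δ - 1 ∧ k < m ∧
      (q^(2*m) - 1) ∣ (a * q^(2*k+1) + b) := by
  set n := q^(2*m) - 1 with hndef
  have hq2 : 4 ≤ q^2 := by calc (4:ℕ) = 2^2 := rfl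
                                _ ≤ q^2 := Nat.pow_le_pow_left hq 2
  have hq2m : 4 ≤ q^(2*m) := by
    calc (4:ℕ) ≤ q^2 := hq2
    _ ≤ q^(2*m) := Nat.pow_le_pow_right (by omega) (by omega)
  have hn1 : n + 1 = q^(2*m) := by omega
  rcases Nat.even_or_odd m with hev | hod
  · -- m even, m ≥ 4: a = q^(m+1)-q^2+1, b = q^(m+1)-q^(m-1)-1, r = m-1
    have hm4 : 4 ≤ m := by rcases hev with ⟨t, ht⟩; omega
    have hq2m1 : q^2 ≤ q^(m-1) := Nat.pow_le_pow_right (by omega) (by omega)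
    have hqm1m1 : q^(m-1) ≤ q^(m+1) := Nat.pow_le_pow_right (by omega) (by omega)
    have hB : q ^ (m + if Even m then 1 else 0) - 1 - (q ^ 2 - 2) * (if Even m then 1 else 0)
        = q^(m+1) - q^2 + 1 := by
      simp only [if_pos hev, mul_one]
      have : q^2 ≤ q^(m+1) := le_trans hq2m1 hqm1m1
      omega
    rw [hB] at hδ
    have hCD : q^2 * q^(m-1) = q^(m+1) := by rw [← pow_add]; congr 1; omega
    have hAD : q^(m+1) * q^(m-1) = q^(2*m) := by rw [← pow_add]; congr 1; omega
    refine ⟨q^(m+1) - q^2 + 1, q^(m+1) - q^(m-1) - 1, (m-2)/2, by omega, by omega, ?_, ?_, by omega, ?_⟩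
    · -- 1 ≤ b
      have : q^2 * q^(m-1) ≥ 4 * q^(m-1) := Nat.mul_le_mul_right _ hq2
      omega
    · -- b ≤ δ - 1
      omega
    · have hk : 2*((m-2)/2)+1 = m - 1 := by rcases hev with ⟨t, ht⟩; omega
      rw [hk]
      have habd : (q^(m+1) - q^2 + 1) * q^(m-1) + (q^(m+1) - q^(m-1) - 1) = n := by
        set A := q^(m+1) - q^2 + 1 with hAdef
        clear_value A
        have e1 : A + q^2 = q^(m+1) + 1 := by
          have : q^2 ≤ q^(m+1) := le_trans hq2m1 hqm1m1
          omega
        have e2 : A * q^(m-1) + q^2 * q^(m-1) = q^(m+1) * q^(m-1) + q^(m-1) := by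
          calc A * q^(m-1) + q^2 * q^(m-1) = (A + q^2) * q^(m-1) := by ring
          _ = (q^(m+1)+1) * q^(m-1) := by rw [e1]
          _ = q^(m+1)*q^(m-1) + q^(m-1) := by ring
        rw [hCD, hAD] at e2
        have h4D : 4 * q^(m-1) ≤ q^(m+1) := by
          rw [← hCD]; exact Nat.mul_le_mul_right _ hq2
        have hDpos : 1 ≤ q^(m-1) := Nat.pow_pos (by omega)
        omega
      rw [habd]
  · -- m odd: a = b = q^m - 1, r = m
    have hmo : m % 2 = 1 := Nat.odd_iff.mp hod
    have hB : q ^ (m + if Even m then 1 else 0) - 1 - (q ^ 2 - 2) * (if Even m then 1 else 0)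
        = q^m - 1 := by
      simp only [if_neg (by rw [Nat.even_iff]; omega : ¬ Even m), add_zero, mul_zero]
      omega
    rw [hB] at hδ
    have hQ2 : 2 ≤ q^m := by
      calc (2:ℕ) = 2^1 := rfl
      _ ≤ q^1 := Nat.pow_le_pow_left hq 1
      _ ≤ q^m := Nat.pow_le_pow_right (by omega) (by omega)
    have hQQ : n + 1 = q^m * q^m := by rw [hn1, two_mul, pow_add]
    refine ⟨q^m - 1, q^m - 1, (m-1)/2, by omega, by omega, by omega, by omega, by omega, ?_⟩
    have hk : 2*((m-1)/2)+1 = m := by omega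
    rw [hk]
    have habd : (q^m - 1) * q^m + (q^m - 1) = n := by
      have e2 : ((q^m - 1) + 1) * q^m = q^m * q^m := by
        congr 1; omega
      rw [add_mul, one_mul] at e2
      omega
    rw [habd]

open Polynomial Finset

private lemma sum_pow_prime_pow {R : Type*} [CommRing R] (p : ℕ) [Fact p.Prime] [CharP R p]
    {ι : Type*} (s : Finset ι) (f : ι → R) (N : ℕ) :
    (∑ i ∈ s, f i) ^ p ^ N = ∑ i ∈ s, f i ^ p ^ N := by
  classical
  have hp : p ≠ 0 := (Fact.out : p.Prime).ne_zero
  induction s using Finset.induction with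
  | empty => simp [zero_pow (pow_ne_zero N hp)]
  | @insert a s h ih => rw [Finset.sum_insert h, add_pow_char_pow, ih, Finset.sum_insert h]

/-- A nonzero linearized polynomial `∑ c k • X^(q^(2k))` of degree < |E| has a non-root. -/
private lemma exists_nonroot {E : Type*} [Field E] [Fintype E] (q m : ℕ) (hq : 2 ≤ q)
    (hm : 0 < m) (hE : Fintype.card E = q ^ (2*m)) (c : ℕ → E) (hc : ∃ k, k < m ∧ c k ≠ 0) :
    ∃ γ : E, ∑ k ∈ Finset.range m, c k * γ ^ q ^ (2*k) ≠ 0 := by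
  classical
  set P : E[X] := ∑ k ∈ Finset.range m, C (c k) * X ^ q ^ (2*k) with hPdef
  have heval : ∀ γ : E, P.eval γ = ∑ k ∈ Finset.range m, c k * γ ^ q ^ (2*k) := by
    intro γ; simp [hPdef, eval_finset_sum]
  obtain ⟨k0, hk0m, hk0⟩ := hc
  have hinj : ∀ k1 k2 : ℕ, q ^ (2*k1) = q ^ (2*k2) → k1 = k2 := by
    intro k1 k2 h
    have := Nat.pow_right_injective hq h
    omega
  have hcoeff : P.coeff (q ^ (2*k0)) = c k0 := by
    rw [hPdef, finset_sum_coeff]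
    rw [Finset.sum_eq_single k0]
    · simp
    · intro k hk hne
      rw [coeff_C_mul, coeff_X_pow, if_neg (fun h => hne (hinj k0 k h).symm)]
      simp
    · intro h; exact absurd (Finset.mem_range.mpr hk0m) h
  have hP0 : P ≠ 0 := fun h => hk0 (by rw [← hcoeff, h, coeff_zero])
  have hdeg : P.natDegree ≤ q ^ (2*(m-1)) := by
    apply Polynomial.natDegree_sum_le_of_forall_le
    intro k hk
    apply le_trans (natDegree_C_mul_le _ _)
    rw [natDegree_X_pow]
    exact Nat.pow_le_pow_right (by omega) (by have := Finset.mem_range.mp hk; omega)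
  have hlt : P.roots.toFinset.card < Fintype.card E := by
    calc P.roots.toFinset.card ≤ Multiset.card P.roots := Multiset.toFinset_card_le _
    _ ≤ P.natDegree := Polynomial.card_roots' P
    _ ≤ q ^ (2*(m-1)) := hdeg
    _ < q ^ (2*m) := Nat.pow_lt_pow_right (by omega) (by omega)
    _ = Fintype.card E := hE.symm
  have hcompl : (P.roots.toFinsetᶜ).Nonempty := by
    rw [← Finset.card_pos, Finset.card_compl]
    omega
  obtain ⟨γ, hγc⟩ := hcompl
  have hγ : γ ∉ P.roots.toFinset := Finset.mem_compl.mp hγc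
  refine ⟨γ, ?_⟩
  rw [← heval]
  intro h
  exact hγ (Multiset.mem_toFinset.mpr ((mem_roots hP0).mpr h))

private lemma mem_range_algebraMap {F E : Type*} [Field F] [Fintype F] [Field E] [Fintype E]
    [Algebra F E] (Q : ℕ) (hQ : 2 ≤ Q) (hF : Fintype.card F = Q) (β : E) (hβ : β ^ Q = β) :
    ∃ a : F, algebraMap F E a = β := by
  classical
  set P : E[X] := X ^ Q - X with hPdef
  have hP0 : P ≠ 0 := by
    intro h
    have h1 : P.coeff Q = 1 := by
      rw [hPdef, coeff_sub, coeff_X_pow, if_pos rfl, coeff_X, if_neg (by omega)]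
      ring
    rw [h, coeff_zero] at h1
    exact one_ne_zero h1.symm
  have hdeg : P.natDegree ≤ Q := by
    apply le_trans (natDegree_sub_le _ _)
    simp [natDegree_X_pow, natDegree_X]
    omega
  have hroot : ∀ a : F, (algebraMap F E a) ∈ P.roots := by
    intro a
    rw [mem_roots hP0]
    have : a ^ Q = a := by rw [← hF]; exact FiniteField.pow_card a
    simp only [IsRoot, hPdef, eval_sub, eval_pow, eval_X]
    rw [← map_pow, this, sub_self]
  set T : Finset E := Finset.univ.image (algebraMap F E) with hTdef
  have hTsub : T ⊆ P.roots.toFinset := by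
    intro x hx
    rw [hTdef] at hx
    obtain ⟨a, _, rfl⟩ := Finset.mem_image.mp hx
    exact Multiset.mem_toFinset.mpr (hroot a)
  have hTcard : T.card = Q := by
    rw [hTdef, Finset.card_image_of_injective _ (algebraMap F E).injective,
      Finset.card_univ, hF]
  have hRcard : P.roots.toFinset.card ≤ Q := by
    calc P.roots.toFinset.card ≤ Multiset.card P.roots := Multiset.toFinset_card_le _
    _ ≤ P.natDegree := Polynomial.card_roots' P
    _ ≤ Q := hdeg
  have hTeq : T = P.roots.toFinset := Finset.eq_of_subset_of_card_le hTsub (by omega)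
  have hβroot : β ∈ P.roots.toFinset := by
    rw [Multiset.mem_toFinset, mem_roots hP0]
    simp only [IsRoot, hPdef, eval_sub, eval_pow, eval_X]
    rw [hβ, sub_self]
  rw [← hTeq, hTdef] at hβroot
  obtain ⟨a, _, ha⟩ := Finset.mem_image.mp hβroot
  exact ⟨a, ha⟩


/-- Hermitian dual (with respect to exponent `q`) of a set of codewords
over `F_{q^2}`. -/
def hermDualSet {K : Type*} [Field K] (q : ℕ) {n : ℕ} (C : Set (Fin n → K)) :
    Set (Fin n → K) :=
  {y | ∀ x ∈ C, ∑ i, (y i) ^ q * x i = 0}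

/-- A primitive, narrow-sense BCH code of length `q^{2m} - 1` over `F_{q^2}`,
`m ≠ 2`, contains its Hermitian dual code iff its designed distance `δ`
satisfies `δ ≤ q^{m + [m even]} - 1 - (q^2 - 2)·[m even]`. -/
theorem bch_contains_hermitian_dual_iff
    (q m : ℕ) (hq : IsPrimePow q) (hm : 0 < m) (hm2 : m ≠ 2)
    (F E : Type*) [Field F] [Fintype F] [Field E] [Fintype E] [Algebra F E]
    (hF : Fintype.card F = q ^ 2) (hE : Fintype.card E = q ^ (2 * m))
    (α : E) (hα : orderOf α = q ^ (2 * m) - 1)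
    (δ : ℕ) (hδ1 : 2 ≤ δ) (hδ2 : δ ≤ q ^ (2 * m) - 1) :
    hermDualSet q (bchCode F (q ^ (2 * m) - 1) α δ : Set (Fin (q ^ (2 * m) - 1) → F)) ⊆
        (bchCode F (q ^ (2 * m) - 1) α δ : Set (Fin (q ^ (2 * m) - 1) → F)) ↔
      δ ≤ q ^ (m + (if Even m then 1 else 0)) - 1 - (q ^ 2 - 2) * (if Even m then 1 else 0) := by
  classical
  have hq2 : 2 ≤ q := hq.two_le
  obtain ⟨p, e, hpp, he, hpe⟩ := hq
  have hp' : p.Prime := Nat.prime_iff.mpr hpp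
  set n := q ^ (2 * m) - 1 with hndef
  have hq2m4 : 4 ≤ q ^ (2*m) := by
    calc (4:ℕ) = 2^2 := rfl
    _ ≤ q^2 := Nat.pow_le_pow_left hq2 2
    _ ≤ q^(2*m) := Nat.pow_le_pow_right (by omega) (by omega)
  have hn1 : n + 1 = q ^ (2*m) := by omega
  have hnpos : 0 < n := by omega
  -- characteristic
  haveI hcrc : CharP E (ringChar E) := ringChar.charP E
  obtain ⟨nE, hnEp, hcardE⟩ := FiniteField.card E (ringChar E)
  have hqdvd : p ∣ ringChar E ^ (nE : ℕ) := by
    rw [← hcardE, hE, ← hpe]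
    exact dvd_pow (dvd_pow_self p he.ne') (by omega)
  have hprc : p = ringChar E := by
    exact (Nat.prime_dvd_prime_iff_eq hp' hnEp).mp (hp'.dvd_of_dvd_pow hqdvd)
  haveI hcp : CharP E p := by rw [hprc]; exact hcrc
  haveI : Fact p.Prime := ⟨hp'⟩
  -- basic facts about α
  have hα1 : α ^ n = 1 := by rw [← hα]; exact pow_orderOf_eq_one α
  have hmodα : ∀ a b : ℕ, a % n = b % n → α ^ a = α ^ b := by
    have h1 : ∀ a : ℕ, α ^ a = α ^ (a % n) := by
      intro a
      conv_lhs => rw [← Nat.div_add_mod a n]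
      rw [pow_add, pow_mul, hα1, one_pow, one_mul]
    intro a b h
    rw [h1 a, h1 b, h]
  -- cast facts
  have hqE : (q : E) = 0 := by
    rw [← hpe]
    push_cast
    rw [CharP.cast_eq_zero E p]
    exact zero_pow he.ne'
  have hnE : ((n : ℕ) : E) = -1 := by
    rw [hndef]
    rw [Nat.cast_sub (by omega : 1 ≤ q ^ (2*m))]
    push_cast
    rw [hqE, zero_pow (by omega : 2*m ≠ 0)]
    ring
  have hnne : ((n : ℕ) : E) ≠ 0 := by rw [hnE]; exact neg_ne_zero.mpr one_ne_zero
  -- geometric sums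
  have geom : ∀ s : ℕ, (∑ i ∈ Finset.range n, α ^ (i * s)) = if s % n = 0 then ((n:ℕ):E) else 0 := by
    intro s
    have hpow : ∀ i : ℕ, α ^ (i * s) = (α ^ s) ^ i := by
      intro i; rw [← pow_mul, mul_comm]
    by_cases h : s % n = 0
    · rw [if_pos h]
      have hs1 : α ^ s = 1 := by
        rw [hmodα s 0 (by simpa using h), pow_zero]
      simp [hpow, hs1]
    · rw [if_neg h]
      have hs1 : α ^ s ≠ 1 := by
        intro hcon
        have hdvd := orderOf_dvd_of_pow_eq_one hcon
        rw [hα] at hdvd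
        obtain ⟨t, ht⟩ := hdvd
        subst ht
        simp [Nat.mul_mod_right] at h
      have hsn : (α ^ s) ^ n = 1 := by
        rw [← pow_mul, mul_comm, pow_mul, hα1, one_pow]
      calc ∑ i ∈ Finset.range n, α ^ (i * s) = ∑ i ∈ Finset.range n, (α ^ s) ^ i :=
            Finset.sum_congr rfl (fun i _ => hpow i)
      _ = ((α ^ s) ^ n - 1) / (α ^ s - 1) := geom_sum_eq hs1 n
      _ = 0 := by rw [hsn, sub_self, zero_div]
  -- Frobenius distributes over sums
  have frob : ∀ (j : ℕ) (g : Fin n → E), (∑ i, g i) ^ q ^ j = ∑ i, (g i) ^ q ^ j := by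
    intro j g
    have hqj : q ^ j = p ^ (e * j) := by rw [pow_mul, hpe]
    rw [hqj]
    exact sum_pow_prime_pow p Finset.univ g (e * j)
  have frobR : ∀ (j : ℕ) (M : ℕ) (g : ℕ → E),
      (∑ k ∈ Finset.range M, g k) ^ q ^ j = ∑ k ∈ Finset.range M, (g k) ^ q ^ j := by
    intro j M g
    have hqj : q ^ j = p ^ (e * j) := by rw [pow_mul, hpe]
    rw [hqj]
    exact sum_pow_prime_pow p (Finset.range M) g (e * j)
  -- elements of F are fixed by x ↦ x^(q^2)
  have hIm : ∀ a : F, (algebraMap F E a) ^ q ^ 2 = algebraMap F E a := by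
    intro a
    rw [← map_pow]
    congr 1
    rw [← hF]
    exact FiniteField.pow_card a
  have hIm2k : ∀ (a : F) (k : ℕ), (algebraMap F E a) ^ q ^ (2*k) = algebraMap F E a := by
    intro a k
    induction k with
    | zero => simp
    | succ k ih =>
        have h1 : q ^ (2*(k+1)) = q ^ (2*k) * q ^ 2 := by rw [← pow_add]; congr 1
        rw [h1, pow_mul, ih, hIm]
  have hxcard : ∀ x : E, x ^ q ^ (2*m) = x := by
    intro x; rw [← hE]; exact FiniteField.pow_card x
  -- the syndrome sum
  set S : (Fin n → F) → ℕ → E :=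
    fun c s => ∑ i : Fin n, algebraMap F E (c i) * α ^ ((i : ℕ) * s) with hSdef
  have memC : ∀ c : Fin n → F,
      c ∈ (bchCode F n α δ : Set (Fin n → F)) ↔ ∀ j : ℕ, 1 ≤ j → j ≤ δ - 1 → S c j = 0 :=
    fun c => Iff.rfl
  have Smod : ∀ (c : Fin n → F) (s s' : ℕ), s % n = s' % n → S c s = S c s' := by
    intro c s s' h
    apply Finset.sum_congr rfl
    intro i _
    congr 1
    exact hmodα _ _ (Nat.ModEq.mul_left (i:ℕ) h)
  have Sfrob : ∀ (c : Fin n → F) (s k : ℕ), S c (s * q ^ (2*k)) = (S c s) ^ q ^ (2*k) := by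
    intro c s k
    rw [hSdef]
    simp only
    rw [frob (2*k)]
    apply Finset.sum_congr rfl
    intro i _
    have hexp : (i:ℕ) * (s * q ^ (2*k)) = (i:ℕ) * s * q ^ (2*k) := by ring
    rw [hexp, mul_pow, hIm2k, ← pow_mul]
  -- key double sum computation
  have keySum : ∀ (γ : E) (u z : ℕ),
      (∑ i : Fin n, (∑ k ∈ Finset.range m, γ ^ q ^ (2*k) * α ^ ((i:ℕ) * u * q ^ (2*k)))
          * α ^ ((i:ℕ) * z)) =
      ∑ k ∈ Finset.range m, γ ^ q ^ (2*k) *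
        (if (u * q ^ (2*k) + z) % n = 0 then ((n:ℕ):E) else 0) := by
    intro γ u z
    have step1 : ∀ i : Fin n,
        (∑ k ∈ Finset.range m, γ ^ q ^ (2*k) * α ^ ((i:ℕ) * u * q ^ (2*k))) * α ^ ((i:ℕ) * z)
        = ∑ k ∈ Finset.range m, γ ^ q ^ (2*k) * α ^ ((i:ℕ) * (u * q ^ (2*k) + z)) := by
      intro i
      rw [Finset.sum_mul]
      apply Finset.sum_congr rfl
      intro k _
      rw [mul_assoc, ← pow_add]
      congr 2
      ring
    rw [Finset.sum_congr rfl (fun i _ => step1 i), Finset.sum_comm]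
    apply Finset.sum_congr rfl
    intro k _
    rw [← Finset.mul_sum]
    congr 1
    rw [Fin.sum_univ_eq_sum_range (fun i => α ^ (i * (u * q ^ (2*k) + z))) n]
    exact geom _
  -- existence of "trace words"
  have word : ∀ (γ : E) (u : ℕ), ∃ w : Fin n → F, ∀ i : Fin n,
      algebraMap F E (w i) = ∑ k ∈ Finset.range m, γ ^ q ^ (2*k) * α ^ ((i:ℕ) * u * q ^ (2*k)) := by
    intro γ u
    have hfix : ∀ i : Fin n,
        (∑ k ∈ Finset.range m, γ ^ q ^ (2*k) * α ^ ((i:ℕ) * u * q ^ (2*k))) ^ q ^ 2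
        = ∑ k ∈ Finset.range m, γ ^ q ^ (2*k) * α ^ ((i:ℕ) * u * q ^ (2*k)) := by
      intro i
      set g : ℕ → E := fun k => γ ^ q ^ (2*k) * α ^ ((i:ℕ) * u * q ^ (2*k)) with hgdef
      have hshift : ∀ k : ℕ, (g k) ^ q ^ 2 = g (k+1) := by
        intro k
        rw [hgdef]
        simp only
        rw [mul_pow, ← pow_mul, ← pow_mul, ← pow_add]
        have e1 : 2*k + 2 = 2*(k+1) := by ring
        have e2 : (i:ℕ) * u * q ^ (2*k) * q ^ 2 = (i:ℕ) * u * q ^ (2*(k+1)) := by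
          rw [mul_assoc, ← pow_add, e1]
        rw [e1, e2]
      have hgm : g m = g 0 := by
        rw [hgdef]
        simp only [Nat.mul_zero, pow_zero, pow_one]
        rw [hxcard γ]
        congr 1
        apply hmodα
        have h1 : (i:ℕ) * u * q ^ (2*m) = (i:ℕ) * u + ((i:ℕ) * u) * n := by
          rw [← hn1]; ring
        rw [h1, Nat.add_mul_mod_self_right, Nat.mul_one]
      rw [frobR 2 m g]
      have h2 : ∑ k ∈ Finset.range m, (g k) ^ q ^ 2 = ∑ k ∈ Finset.range m, g (k+1) :=
        Finset.sum_congr rfl (fun k _ => hshift k)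
      rw [h2]
      have h3 := Finset.sum_range_succ' g m
      have h4 := Finset.sum_range_succ g m
      rw [hgm] at h4
      have : (∑ k ∈ Finset.range m, g (k+1)) + g 0 = (∑ k ∈ Finset.range m, g k) + g 0 := by
        rw [← h3, h4]
      exact add_right_cancel this
    choose w hw using fun i : Fin n =>
      mem_range_algebraMap (q^2) (by have := Nat.pow_le_pow_left hq2 2; omega : 2 ≤ q^2) hF _ (hfix i)
    exact ⟨w, hw⟩
  -- pairing computation
  have pairing : ∀ (c : Fin n → F) (h : ℕ → E) (u' : ℕ),
      ∑ i : Fin n, (∑ k ∈ Finset.range m, h k * α ^ ((i:ℕ) * u' * q ^ (2*k)))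
          * algebraMap F E (c i)
      = ∑ k ∈ Finset.range m, h k * S c (u' * q ^ (2*k)) := by
    intro c h u'
    have step1 : ∀ i : Fin n,
        (∑ k ∈ Finset.range m, h k * α ^ ((i:ℕ) * u' * q ^ (2*k))) * algebraMap F E (c i)
        = ∑ k ∈ Finset.range m, h k * (algebraMap F E (c i) * α ^ ((i:ℕ) * (u' * q ^ (2*k)))) := by
      intro i
      rw [Finset.sum_mul]
      apply Finset.sum_congr rfl
      intro k _
      have hexp : (i:ℕ) * u' * q ^ (2*k) = (i:ℕ) * (u' * q ^ (2*k)) := by ring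
      rw [hexp]; ring
    rw [Finset.sum_congr rfl (fun i _ => step1 i), Finset.sum_comm]
    apply Finset.sum_congr rfl
    intro k _
    rw [← Finset.mul_sum]
  -- Frobenius of a syndrome
  have hSq : ∀ (y : Fin n → F) (w' : ℕ),
      S (fun i => (y i) ^ q) (w' * q) = (S y w') ^ q := by
    intro y w'
    have h1 : (S y w') ^ q = (S y w') ^ q ^ 1 := by rw [pow_one]
    rw [h1, frob 1]
    apply Finset.sum_congr rfl
    intro i _
    rw [mul_pow, ← map_pow, ← pow_mul, pow_one, mul_assoc]
  constructor
  · -- containment → δ ≤ bound (contrapositive)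
    intro hsub
    by_contra hB
    obtain ⟨a, b, k0, ha1, ha2, hb1, hb2, hk0, hdvd⟩ :=
      comb_backward q m δ hq2 hm hm2 hδ2 hB
    set s := a * q ^ (2*k0) with hsdef
    haveI : NeZero n := ⟨hnpos.ne'⟩
    have hsmod : s % n ≠ 0 := by
      intro h
      have hdvd' : n ∣ s := Nat.dvd_of_mod_eq_zero h
      have hcop : Nat.Coprime n q := by
        have h1 : Nat.Coprime n (q ^ (2*m)) := by
          rw [← hn1]
          simp
        exact Nat.Coprime.coprime_dvd_right (dvd_pow_self q (by omega : 2*m ≠ 0)) h1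
      have hna : n ∣ a := (hcop.pow_right (2*k0)).dvd_of_dvd_mul_right hdvd'
      have := Nat.le_of_dvd (by omega) hna
      omega
    set u := n - s % n with hudef
    have hu : (u + s) % n = 0 := by
      have h1 : 0 < s % n := Nat.pos_of_ne_zero hsmod
      have h2 : s % n < n := Nat.mod_lt s hnpos
      have hu_lt : u < n := by omega
      calc (u + s) % n = (u % n + s % n) % n := by rw [Nat.add_mod]
      _ = (u + s % n) % n := by rw [Nat.mod_eq_of_lt hu_lt]
      _ = n % n := by congr 1; omega
      _ = 0 := Nat.mod_self n
    obtain ⟨γ, hγ⟩ := exists_nonroot q m hq2 hm hE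
        (fun k => if (u * q ^ (2*k) + s) % n = 0 then ((n:ℕ):E) else 0)
        ⟨0, hm, by
          simp only [Nat.mul_zero, pow_zero, mul_one]
          rw [if_pos hu]
          exact hnne⟩
    obtain ⟨w, hw⟩ := word γ u
    -- casts to ZMod n for modular computations
    have hz1 : ((u : ZMod n) + (s : ℕ)) = 0 := by
      have hd := Nat.dvd_of_mod_eq_zero hu
      have h2 : ((u + s : ℕ) : ZMod n) = 0 := (ZMod.natCast_eq_zero_iff _ _).mpr hd
      push_cast at h2
      exact h2
    have hz2 : ((s : ℕ) : ZMod n) * (q : ZMod n) + ((b : ℕ) : ZMod n) = 0 := by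
      have h2 : ((a * q^(2*k0+1) + b : ℕ) : ZMod n) = 0 :=
        (ZMod.natCast_eq_zero_iff _ _).mpr hdvd
      push_cast at h2 ⊢
      rw [hsdef]
      push_cast
      linear_combination h2
    have hmodk : ∀ k : ℕ, ((u*q) * q^(2*k)) % n = (b * q^(2*k)) % n := by
      intro k
      have hz : (((u*q) * q^(2*k) : ℕ) : ZMod n) = ((b * q^(2*k) : ℕ) : ZMod n) := by
        push_cast
        linear_combination ((q : ZMod n) * (q : ZMod n)^(2*k)) * hz1
          - ((q : ZMod n)^(2*k)) * hz2
      exact (ZMod.natCast_eq_natCast_iff _ _ _).mp hz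
    -- w lies in the Hermitian dual
    have hyq : ∀ i : Fin n, (algebraMap F E (w i)) ^ q
        = ∑ k ∈ Finset.range m, (γ ^ (q ^ (2*k) * q)) * α ^ ((i:ℕ) * (u*q) * q ^ (2*k)) := by
      intro i
      rw [hw i]
      have h1 : ∀ x : E, x ^ q = x ^ q ^ 1 := fun x => by rw [pow_one]
      rw [h1, frobR 1]
      apply Finset.sum_congr rfl
      intro k _
      have hexp : (i:ℕ) * u * q^(2*k) * q = (i:ℕ) * (u*q) * q^(2*k) := by ring
      rw [mul_pow, ← pow_mul, ← pow_mul, pow_one, hexp]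
    have hwdual : w ∈ hermDualSet q (bchCode F n α δ : Set (Fin n → F)) := by
      intro x hx
      have hxm := (memC x).mp hx
      have hmapped : ∑ i : Fin n, algebraMap F E ((w i)^q * x i) = 0 := by
        calc ∑ i : Fin n, algebraMap F E ((w i)^q * x i)
            = ∑ i : Fin n, (algebraMap F E (w i))^q * algebraMap F E (x i) := by
              apply Finset.sum_congr rfl; intro i _; rw [map_mul, map_pow]
        _ = ∑ i : Fin n, (∑ k ∈ Finset.range m,
              (γ ^ (q^(2*k)*q)) * α ^ ((i:ℕ) * (u*q) * q^(2*k))) * algebraMap F E (x i) := by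
              apply Finset.sum_congr rfl; intro i _; rw [hyq i]
        _ = ∑ k ∈ Finset.range m, (γ ^ (q^(2*k)*q)) * S x ((u*q) * q^(2*k)) :=
              pairing x _ (u*q)
        _ = 0 := by
              apply Finset.sum_eq_zero
              intro k _
              have h0 : S x ((u*q) * q^(2*k)) = 0 := by
                rw [Smod x _ _ (hmodk k), Sfrob x b k, hxm b hb1 hb2,
                  zero_pow (Nat.pow_pos (by omega : 0 < q)).ne']
              rw [h0, mul_zero]
      apply (algebraMap F E).injective
      rw [map_sum, map_zero]
      exact hmapped
    have hwC := hsub hwdual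
    have hxm' := (memC w).mp hwC
    have hSwa := hxm' a ha1 ha2
    have hSws : S w s = 0 := by
      rw [hsdef, Sfrob w a k0, hSwa,
        zero_pow (Nat.pow_pos (by omega : 0 < q)).ne']
    have hSws' : S w s = ∑ k ∈ Finset.range m,
        (if (u * q ^ (2*k) + s) % n = 0 then ((n:ℕ):E) else 0) * γ ^ q ^ (2*k) := by
      calc S w s = ∑ i : Fin n, (∑ k ∈ Finset.range m,
              γ ^ q ^ (2*k) * α ^ ((i:ℕ)*u*q^(2*k))) * α ^ ((i:ℕ)*s) := by
            apply Finset.sum_congr rfl; intro i _; rw [hw i]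
      _ = ∑ k ∈ Finset.range m, γ ^ q ^ (2*k) *
            (if (u * q ^ (2*k) + s) % n = 0 then ((n:ℕ):E) else 0) := keySum γ u s
      _ = _ := by apply Finset.sum_congr rfl; intro k _; ring
    rw [hSws] at hSws'
    exact hγ hSws'.symm
  · -- δ ≤ bound → containment
    intro hδB
    have NoSol := comb_forward q m δ hq2 hm hm2 hδB
    intro y hy
    apply (memC y).mpr
    intro j hj1 hj2
    have hall : ∀ γ : E, ∑ k ∈ Finset.range m,
        (S y (j * q ^ (2*k)))^q * γ ^ q ^ (2*k) = 0 := by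
      intro γ
      obtain ⟨x, hxw⟩ := word γ (j*q)
      have hxC : x ∈ (bchCode F n α δ : Set (Fin n → F)) := by
        apply (memC x).mpr
        intro b hb1 hb2
        calc S x b = ∑ i : Fin n, (∑ k ∈ Finset.range m,
              γ ^ q ^ (2*k) * α ^ ((i:ℕ)*(j*q)*q^(2*k))) * α ^ ((i:ℕ)*b) := by
              apply Finset.sum_congr rfl; intro i _; rw [hxw i]
        _ = ∑ k ∈ Finset.range m, γ ^ q ^ (2*k) *
              (if ((j*q) * q ^ (2*k) + b) % n = 0 then ((n:ℕ):E) else 0) := keySum γ (j*q) b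
        _ = 0 := by
              apply Finset.sum_eq_zero
              intro k hk
              rw [if_neg, mul_zero]
              intro hmod0
              have hd : n ∣ j * q^(2*k+1) + b := by
                have he' : j * q^(2*k+1) + b = (j*q) * q^(2*k) + b := by
                  rw [pow_succ]; ring
                rw [he']
                exact Nat.dvd_of_mod_eq_zero hmod0
              exact NoSol j b k hj1 hj2 hb1 hb2 (Finset.mem_range.mp hk) hd
      have hyx := hy x hxC
      have hmapped : (∑ i : Fin n, algebraMap F E ((y i)^q * x i)) = 0 := by
        rw [← map_sum, hyx, map_zero]
      calc ∑ k ∈ Finset.range m, (S y (j * q ^ (2*k)))^q * γ ^ q ^ (2*k)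
          = ∑ k ∈ Finset.range m, γ ^ q ^ (2*k) * S (fun i => (y i)^q) ((j*q) * q^(2*k)) := by
            apply Finset.sum_congr rfl
            intro k _
            have h1 : (j*q) * q^(2*k) = (j * q^(2*k)) * q := by ring
            rw [h1, hSq y (j * q^(2*k))]
            ring
      _ = ∑ i : Fin n, (∑ k ∈ Finset.range m,
            γ ^ q ^ (2*k) * α ^ ((i:ℕ)*(j*q)*q^(2*k))) * algebraMap F E ((y i)^q) :=
            (pairing _ _ _).symm
      _ = ∑ i : Fin n, algebraMap F E ((y i)^q * x i) := by
            apply Finset.sum_congr rfl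
            intro i _
            rw [map_mul, ← hxw i, mul_comm]
      _ = 0 := hmapped
    by_contra hSyj
    have hc0 : ∃ k, k < m ∧ (fun k => (S y (j * q ^ (2*k)))^q) k ≠ 0 := by
      refine ⟨0, hm, ?_⟩
      simp only [Nat.mul_zero, pow_zero, mul_one]
      exact pow_ne_zero q hSyj
    obtain ⟨γ, hγ'⟩ := exists_nonroot q m hq2 hm hE _ hc0
    exact hγ' (hall γ)
end

section
/- Let q be a prime power and n a positive integer with gcd(n, q) = 1. Let α be a primitive n-th root of unity in an extension field of F_q, and let Z ⊆ {0, 1, …, n−1} be a set closed under multiplication by q modulo n (a union of q-ary cyclotomic cosets). Let C = {c ∈ F_q^n : Σ_{i=0}^{n−1} c_i α^{iz} = 0 for all z ∈ Z} be the cyclic code with defining set Z. Then C^⊥ ⊆ C if and only if Z ∩ Z^{−1} = ∅, where Z^{−1} = {(−z) mod n : z ∈ Z}. -/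
section Aux

variable {E : Type*} [Field E]

lemma aux_pow_mod {n : ℕ} {α : E} (hα : α ^ n = 1) (a : ℕ) : α ^ a = α ^ (a % n) := by
  conv_lhs => rw [← Nat.mod_add_div a n, pow_add, pow_mul, hα, one_pow, mul_one]

lemma aux_pow_modEq {n : ℕ} {α : E} (hα : α ^ n = 1) {a b : ℕ} (h : a ≡ b [MOD n]) :
    α ^ a = α ^ b := by
  have h' : a % n = b % n := h
  rw [aux_pow_mod hα a, aux_pow_mod hα b, h']

lemma aux_sum_pow {n : ℕ} {α : E} (hα : IsPrimitiveRoot α n) (u : ℕ) :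
    ∑ i : Fin n, α ^ ((i : ℕ) * u) = if n ∣ u then (n : E) else 0 := by
  have h1 : ∀ i : Fin n, α ^ ((i : ℕ) * u) = (α ^ u) ^ (i : ℕ) := fun i => by
    rw [← pow_mul, mul_comm]
  simp only [h1]
  rw [Fin.sum_univ_eq_sum_range (fun i => (α ^ u) ^ i)]
  by_cases h : n ∣ u
  · rw [if_pos h, (hα.pow_eq_one_iff_dvd u).mpr h]
    simp
  · rw [if_neg h, geom_sum_eq (fun h1 => h ((hα.pow_eq_one_iff_dvd u).mp h1)), ← pow_mul,
      mul_comm u n, pow_mul, hα.pow_eq_one, one_pow, sub_self, zero_div]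

lemma aux_vandermonde {K : Finset ℕ} {v : ℕ → E} (hv : Set.InjOn v K) (c : ℕ → E)
    (h : ∀ t : ℕ, ∑ k ∈ K, c k * v k ^ t = 0) : ∀ k ∈ K, c k = 0 := by
  classical
  intro k hk
  have key : ∀ P : Polynomial E, ∑ j ∈ K, c j * P.eval (v j) = 0 := by
    intro P
    have h2 : ∀ j ∈ K, c j * P.eval (v j)
        = ∑ t ∈ Finset.range (P.natDegree + 1), P.coeff t * (c j * v j ^ t) := by
      intro j _
      rw [Polynomial.eval_eq_sum_range, Finset.mul_sum]
      exact Finset.sum_congr rfl fun t _ => by ring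
    rw [Finset.sum_congr rfl h2, Finset.sum_comm]
    simp only [← Finset.mul_sum, h, mul_zero, Finset.sum_const_zero]
  have h2 := key (Lagrange.basis K v k)
  rw [← Finset.add_sum_erase _ _ hk, Lagrange.eval_basis_self hv hk, mul_one] at h2
  have h3 : ∑ j ∈ K.erase k, c j * (Lagrange.basis K v k).eval (v j) = 0 :=
    Finset.sum_eq_zero fun j hj => by
      rw [Lagrange.eval_basis_of_ne (Finset.mem_erase.mp hj).1.symm (Finset.mem_erase.mp hj).2,
        mul_zero]
  rw [h3, add_zero] at h2
  exact h2

lemma aux_mem_range {F : Type*} [Field F] [Fintype F] [Algebra F E]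
    {x : E} (hx : x ^ Fintype.card F = x) : ∃ a : F, algebraMap F E a = x := by
  classical
  set q := Fintype.card F with hq
  have hq2 : 1 < q := Fintype.one_lt_card
  set f : Polynomial E := Polynomial.X ^ q - Polynomial.X with hf
  have hfd : f.natDegree = q := by
    rw [hf]
    have : (Polynomial.X : Polynomial E).natDegree < (Polynomial.X ^ q : Polynomial E).natDegree := by
      simpa [Polynomial.natDegree_X_pow] using hq2
    rw [Polynomial.natDegree_sub_eq_left_of_natDegree_lt this, Polynomial.natDegree_X_pow]
  have hf0 : f ≠ 0 := fun h => by simp [h] at hfd; omega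
  set S : Finset E := Finset.univ.image (algebraMap F E) with hS
  have hScard : S.card = q := by
    rw [hS, Finset.card_image_of_injective _ (algebraMap F E).injective, Finset.card_univ]
  have hsub : S ⊆ f.roots.toFinset := by
    intro y hy
    obtain ⟨a, -, rfl⟩ := Finset.mem_image.mp hy
    rw [Multiset.mem_toFinset, Polynomial.mem_roots hf0]
    simp only [hf, Polynomial.IsRoot, Polynomial.eval_sub, Polynomial.eval_pow, Polynomial.eval_X]
    rw [← map_pow, FiniteField.pow_card, sub_self]
  have hcard : f.roots.toFinset.card ≤ q := by
    calc f.roots.toFinset.card ≤ Multiset.card f.roots := Multiset.toFinset_card_le _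
    _ ≤ f.natDegree := Polynomial.card_roots' f
    _ = q := hfd
  have heq : S = f.roots.toFinset :=
    Finset.eq_of_subset_of_card_le hsub (by rw [hScard]; exact hcard)
  have hxr : x ∈ f.roots.toFinset := by
    rw [Multiset.mem_toFinset, Polynomial.mem_roots hf0]
    simp only [hf, Polynomial.IsRoot, Polynomial.eval_sub, Polynomial.eval_pow, Polynomial.eval_X]
    rw [hx, sub_self]
  rw [← heq] at hxr
  obtain ⟨a, -, ha⟩ := Finset.mem_image.mp hxr
  exact ⟨a, ha⟩

end Aux

/-- Cyclic code of length `n` over `F` with defining set `Z`: all words `c`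
such that `∑ i, c i * α ^ (i*z) = 0` for every `z ∈ Z`. -/
def cyclicCode (F : Type*) {E : Type*} [Field F] [Field E] [Algebra F E]
    (n : ℕ) (α : E) (Z : Finset ℕ) : Submodule F (Fin n → F) where
  carrier := {c | ∀ z ∈ Z, ∑ i : Fin n, algebraMap F E (c i) * α ^ ((i : ℕ) * z) = 0}
  zero_mem' := by intro z _; simp
  add_mem' := by
    intro a b ha hb z hz
    have hA := ha z hz
    have hB := hb z hz
    simp only [Pi.add_apply, map_add, add_mul]
    rw [Finset.sum_add_distrib, hA, hB, add_zero]
  smul_mem' := by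
    intro r a ha z hz
    have hA := ha z hz
    simp only [Pi.smul_apply, smul_eq_mul, map_mul, mul_assoc]
    rw [← Finset.mul_sum, hA, mul_zero]

/-- A cyclic code of length `n` over `F_q`, `gcd(n,q) = 1`, with defining set `Z`
contains its Euclidean dual code iff `Z ∩ Z⁻¹ = ∅`, where
`Z⁻¹ = {-z mod n : z ∈ Z}`. -/
theorem cyclic_contains_euclidean_dual_iff
    (q n : ℕ) (hq : IsPrimePow q) (hn : 0 < n) (hgcd : Nat.gcd n q = 1)
    (F E : Type*) [Field F] [Fintype F] [Field E] [Algebra F E]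
    (hF : Fintype.card F = q)
    (α : E) (hα : IsPrimitiveRoot α n)
    (Z : Finset ℕ) (hZn : ∀ z ∈ Z, z < n) (hZq : ∀ z ∈ Z, z * q % n ∈ Z) :
    dualSet (cyclicCode F n α Z : Set (Fin n → F)) ⊆
        (cyclicCode F n α Z : Set (Fin n → F)) ↔
      Z ∩ Z.image (fun z => (n - z) % n) = ∅ := by
  classical
  haveI : NeZero n := ⟨hn.ne'⟩
  have hαn : α ^ n = 1 := hα.pow_eq_one
  -- characteristic
  obtain ⟨p, hcp⟩ := CharP.exists F
  haveI := hcp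
  obtain ⟨e, hp, hpe⟩ := FiniteField.card F p
  haveI : Fact p.Prime := ⟨hp⟩
  haveI : CharP E p := charP_of_injective_algebraMap (algebraMap F E).injective p
  have hqpe : q = p ^ (e : ℕ) := by rw [← hF, hpe]
  have hpn : ¬ p ∣ n := by
    intro hdvd
    have h1 : p ∣ Nat.gcd n q := Nat.dvd_gcd hdvd (hqpe ▸ dvd_pow_self p e.2.ne')
    rw [hgcd, Nat.dvd_one] at h1
    exact hp.one_lt.ne' h1
  have hnE : (n : E) ≠ 0 := fun h => hpn ((CharP.cast_eq_zero_iff E p n).mp h)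
  have hfrob : ∀ (s : Finset ℕ) (f : ℕ → E), (∑ k ∈ s, f k) ^ q = ∑ k ∈ s, f k ^ q := by
    intro s f
    rw [hqpe]
    exact sum_pow_char_pow p (e : ℕ) s f
  -- order of q mod n
  have hcop : Nat.Coprime q n := Nat.coprime_comm.mp hgcd
  set u : (ZMod n)ˣ := ZMod.unitOfCoprime q hcop with hu
  set m := orderOf u with hm
  have hm0 : 0 < m := orderOf_pos u
  have hcast : ∀ k : ℕ, ((u ^ k : (ZMod n)ˣ) : ZMod n) = ((q ^ k : ℕ) : ZMod n) := by
    intro k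
    push_cast [hu, ZMod.coe_unitOfCoprime]
    rfl
  have hqm : q ^ m ≡ 1 [MOD n] := by
    have h1 : ((q ^ m : ℕ) : ZMod n) = ((1 : ℕ) : ZMod n) := by
      rw [← hcast, hm, pow_orderOf_eq_one]
      simp
    exact (ZMod.natCast_eq_natCast_iff _ _ _).mp h1
  -- the key vectors α ^ (q ^ k) are pairwise distinct for k < m
  have hvinj : Set.InjOn (fun k => α ^ q ^ k) (Finset.range m : Set ℕ) := by
    intro k hk l hl hkl
    simp only [Finset.coe_range, Set.mem_Iio] at hk hl
    have h1 : q ^ k % n = q ^ l % n := by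
      refine hα.pow_inj (Nat.mod_lt _ hn) (Nat.mod_lt _ hn) ?_
      rw [← aux_pow_mod hαn, ← aux_pow_mod hαn]
      exact hkl
    have h2 : u ^ k = u ^ l := by
      ext
      rw [hcast, hcast]
      exact (ZMod.natCast_eq_natCast_iff' _ _ _).mpr h1
    exact pow_injOn_Iio_orderOf (Set.mem_Iio.mpr hk) (Set.mem_Iio.mpr hl) h2
  -- E-valued candidate codeword entries
  set cE : ℕ → ℕ → Fin n → E :=
    fun s t i => ∑ k ∈ Finset.range m, α ^ ((t + (i : ℕ) * s) * q ^ k) with hcE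
  have hcEfix : ∀ s t i, (cE s t i) ^ q = cE s t i := by
    intro s t i
    set e0 := t + (i : ℕ) * s with he0
    rw [hcE]
    simp only
    rw [hfrob]
    have hterm : ∀ k, (α ^ (e0 * q ^ k)) ^ q = α ^ (e0 * q ^ (k + 1)) := by
      intro k
      rw [← pow_mul, mul_assoc, ← pow_succ]
    rw [Finset.sum_congr rfl fun k _ => hterm k]
    have hfm : α ^ (e0 * q ^ m) = α ^ (e0 * q ^ 0) := by
      apply aux_pow_modEq hαn
      simpa using Nat.ModEq.mul_left e0 hqm
    have h1 := Finset.sum_range_succ' (fun k => α ^ (e0 * q ^ k)) m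
    have h2 := Finset.sum_range_succ (fun k => α ^ (e0 * q ^ k)) m
    rw [h2, hfm] at h1
    exact add_right_cancel h1.symm
  have hex : ∀ s t i, ∃ a : F, algebraMap F E a = cE s t i := by
    intro s t i
    apply aux_mem_range
    rw [hF]
    exact hcEfix s t i
  set cvec : ℕ → ℕ → Fin n → F := fun s t i => (hex s t i).choose with hcvec
  have hcvE : ∀ s t i, algebraMap F E (cvec s t i) = cE s t i := fun s t i =>
    (hex s t i).choose_spec
  -- generic inner-product computation
  have compA : ∀ (x : Fin n → E) (s t : ℕ),
      ∑ i : Fin n, cE s t i * x i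
        = ∑ k ∈ Finset.range m,
            (α ^ q ^ k) ^ t * ∑ i : Fin n, x i * α ^ ((i : ℕ) * (s * q ^ k)) := by
    intro x s t
    rw [hcE]
    simp only [Finset.sum_mul]
    rw [Finset.sum_comm]
    refine Finset.sum_congr rfl fun k _ => ?_
    rw [Finset.mul_sum]
    refine Finset.sum_congr rfl fun i _ => ?_
    have hexp : (t + (i : ℕ) * s) * q ^ k = q ^ k * t + (i : ℕ) * (s * q ^ k) := by ring
    rw [hexp, pow_add, pow_mul]
    ring
  have hZcl : ∀ z ∈ Z, ∀ k : ℕ, z * q ^ k % n ∈ Z := by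
    intro z hz k
    induction k with
    | zero => simpa [Nat.mod_eq_of_lt (hZn z hz)] using hz
    | succ k ih =>
      have h1 : z * q ^ (k + 1) = z * q ^ k * q := by ring
      rw [h1, ← Nat.mod_mul_mod]
      exact hZq _ ih
  -- syndrome of cvec s t at z0
  have hsynd : ∀ s t z0, ∑ i : Fin n, algebraMap F E (cvec s t i) * α ^ ((i : ℕ) * z0)
      = ∑ k ∈ Finset.range m,
          (α ^ q ^ k) ^ t * (if n ∣ s * q ^ k + z0 then (n : E) else 0) := by
    intro s t z0
    have h1 : ∀ i : Fin n, algebraMap F E (cvec s t i) * α ^ ((i : ℕ) * z0)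
        = cE s t i * α ^ ((i : ℕ) * z0) := fun i => by rw [hcvE]
    rw [Finset.sum_congr rfl fun i _ => h1 i, compA (fun i => α ^ ((i : ℕ) * z0)) s t]
    refine Finset.sum_congr rfl fun k _ => ?_
    congr 1
    have h2 : ∀ i : Fin n, α ^ ((i : ℕ) * z0) * α ^ ((i : ℕ) * (s * q ^ k))
        = α ^ ((i : ℕ) * (s * q ^ k + z0)) := by
      intro i
      rw [← pow_add]
      congr 1
      ring
    rw [Finset.sum_congr rfl fun i _ => h2 i, aux_sum_pow hα]
  -- membership of cvec s t in the code, when -s avoids Z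
  have hmemC : ∀ s t, (∀ z' ∈ Z, ¬ n ∣ s + z') →
      cvec s t ∈ (cyclicCode F n α Z : Set (Fin n → F)) := by
    intro s t hs
    intro z hz
    rw [hsynd s t z]
    refine Finset.sum_eq_zero fun k hk => ?_
    rw [if_neg, mul_zero]
    intro hdvd
    have hkm : k < m := Finset.mem_range.mp hk
    set z'' := z * q ^ (m - k) % n with hz''
    have hz''Z : z'' ∈ Z := hZcl z hz (m - k)
    apply hs z'' hz''Z
    have hs1 : s * q ^ m ≡ s [MOD n] := by simpa using Nat.ModEq.mul_left s hqm
    have hz1 : z'' ≡ z * q ^ (m - k) [MOD n] := Nat.mod_modEq _ _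
    have he2 : s * q ^ m + z * q ^ (m - k) = (s * q ^ k + z) * q ^ (m - k) := by
      have hk2 : k + (m - k) = m := by omega
      rw [add_mul, mul_assoc, ← pow_add, hk2]
    have he3 : (s * q ^ k + z) * q ^ (m - k) ≡ 0 [MOD n] :=
      Nat.modEq_zero_iff_dvd.mpr (hdvd.mul_right _)
    have he4 : s + z'' ≡ 0 [MOD n] := by
      calc s + z'' ≡ s * q ^ m + z * q ^ (m - k) [MOD n] := (hs1.symm).add hz1
      _ = (s * q ^ k + z) * q ^ (m - k) := he2
      _ ≡ 0 [MOD n] := he3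
    exact Nat.modEq_zero_iff_dvd.mp he4
  -- membership of cvec s t in the dual, when s ∈ Z
  have hmemD : ∀ s t, s ∈ Z →
      cvec s t ∈ dualSet (cyclicCode F n α Z : Set (Fin n → F)) := by
    intro s t hs x hx
    apply (algebraMap F E).injective
    rw [map_sum, map_zero]
    have h1 : ∀ i : Fin n, algebraMap F E (x i * cvec s t i)
        = cE s t i * algebraMap F E (x i) := fun i => by rw [map_mul, hcvE]; ring
    rw [Finset.sum_congr rfl fun i _ => h1 i, compA (fun i => algebraMap F E (x i)) s t]
    refine Finset.sum_eq_zero fun k _ => ?_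
    have h2 : ∀ i : Fin n, algebraMap F E (x i) * α ^ ((i : ℕ) * (s * q ^ k))
        = algebraMap F E (x i) * α ^ ((i : ℕ) * (s * q ^ k % n)) := by
      intro i
      congr 1
      exact aux_pow_modEq hαn (Nat.ModEq.mul_left _ (Nat.mod_modEq _ _)).symm
    rw [Finset.sum_congr rfl fun i _ => h2 i, hx _ (hZcl s hs k), mul_zero]
  -- extraction from dual membership
  have hdualS : ∀ y ∈ dualSet (cyclicCode F n α Z : Set (Fin n → F)),
      ∀ s, (∀ z' ∈ Z, ¬ n ∣ s + z') →
        ∑ i : Fin n, algebraMap F E (y i) * α ^ ((i : ℕ) * s) = 0 := by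
    intro y hy s hs
    have hvan : ∀ t : ℕ, ∑ k ∈ Finset.range m,
        (∑ i : Fin n, algebraMap F E (y i) * α ^ ((i : ℕ) * (s * q ^ k)))
          * (α ^ q ^ k) ^ t = 0 := by
      intro t
      have h0 : (0 : F) = ∑ i : Fin n, cvec s t i * y i := (hy _ (hmemC s t hs)).symm
      have h1 : (0 : E) = ∑ i : Fin n, cE s t i * algebraMap F E (y i) := by
        have := congrArg (algebraMap F E) h0
        rw [map_zero, map_sum] at this
        simpa only [map_mul, hcvE] using this
      rw [compA (fun i => algebraMap F E (y i)) s t] at h1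
      calc ∑ k ∈ Finset.range m,
            (∑ i : Fin n, algebraMap F E (y i) * α ^ ((i : ℕ) * (s * q ^ k)))
              * (α ^ q ^ k) ^ t
          = ∑ k ∈ Finset.range m,
              (α ^ q ^ k) ^ t * ∑ i : Fin n, algebraMap F E (y i) * α ^ ((i : ℕ) * (s * q ^ k)) :=
            Finset.sum_congr rfl fun k _ => by ring
        _ = 0 := h1.symm
    have := aux_vandermonde hvinj
      (fun k => ∑ i : Fin n, algebraMap F E (y i) * α ^ ((i : ℕ) * (s * q ^ k)))
      hvan 0 (Finset.mem_range.mpr hm0)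
    simpa using this
  constructor
  · -- forward: inclusion implies empty intersection
    intro hinc
    by_contra hne
    obtain ⟨z0, hz0⟩ := Finset.nonempty_iff_ne_empty.mpr hne
    rw [Finset.mem_inter] at hz0
    obtain ⟨hz0Z, hz0I⟩ := hz0
    obtain ⟨z', hz'Z, hz'0⟩ := Finset.mem_image.mp hz0I
    have hdvd0 : n ∣ z' * q ^ 0 + z0 := by
      rcases Nat.eq_zero_or_pos z' with h | h
      · subst h
        simp only [Nat.sub_zero, Nat.mod_self] at hz'0
        simp [← hz'0]
      · have h2 : (n - z') % n = n - z' := Nat.mod_eq_of_lt (by have := hZn z' hz'Z; omega)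
        rw [h2] at hz'0
        have h3 : z' * q ^ 0 + z0 = n := by
          have := hZn z' hz'Z
          simp only [pow_zero, mul_one]
          omega
        rw [h3]
    have hkey : ∃ t, ∑ i : Fin n, algebraMap F E (cvec z' t i) * α ^ ((i : ℕ) * z0) ≠ 0 := by
      by_contra hall
      push_neg at hall
      have hvan : ∀ t : ℕ, ∑ k ∈ Finset.range m,
          (if n ∣ z' * q ^ k + z0 then (n : E) else 0) * (α ^ q ^ k) ^ t = 0 := by
        intro t
        have := hall t
        rw [hsynd z' t z0] at this
        calc ∑ k ∈ Finset.range m,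
              (if n ∣ z' * q ^ k + z0 then (n : E) else 0) * (α ^ q ^ k) ^ t
            = ∑ k ∈ Finset.range m,
                (α ^ q ^ k) ^ t * if n ∣ z' * q ^ k + z0 then (n : E) else 0 :=
              Finset.sum_congr rfl fun k _ => by ring
          _ = 0 := this
      have := aux_vandermonde hvinj
        (fun k => if n ∣ z' * q ^ k + z0 then (n : E) else 0) hvan 0
        (Finset.mem_range.mpr hm0)
      simp only [if_pos hdvd0] at this
      exact hnE this
    obtain ⟨t, ht⟩ := hkey
    exact ht (hinc (hmemD z' t hz'Z) z0 hz0Z)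
  · -- backward: empty intersection implies inclusion
    intro hdisj y hy
    intro z hz
    apply hdualS y hy z
    intro z' hz' hdvd
    obtain ⟨c, hc⟩ := hdvd
    have hzn := hZn z hz
    have hz'n := hZn z' hz'
    have hc2 : c < 2 := by
      by_contra hcge
      push_neg at hcge
      have : 2 * n ≤ n * c := by
        calc 2 * n = n * 2 := by ring
        _ ≤ n * c := Nat.mul_le_mul_left n hcge
      omega
    have hzI : z ∈ Z.image (fun w => (n - w) % n) := by
      refine Finset.mem_image.mpr ⟨z', hz', ?_⟩
      interval_cases c
      · -- z + z' = 0
        have hz0 : z = 0 := by omega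
        have hz'0 : z' = 0 := by omega
        simp [hz'0, hz0]
      · -- z + z' = n
        have h1 : n - z' = z := by omega
        rw [h1]
        exact Nat.mod_eq_of_lt hzn
    have : z ∈ Z ∩ Z.image (fun w => (n - w) % n) := Finset.mem_inter.mpr ⟨hz, hzI⟩
    rw [hdisj] at this
    exact absurd this (Finset.notMem_empty z)
end

section
/- Let q be a prime power and n a positive integer with gcd(n, q) = 1. Let α be a primitive n-th root of unity in an extension field of F_{q^2}, and let Z ⊆ {0, 1, …, n−1} be a set closed under multiplication by q^2 modulo n (a union of q^2-ary cyclotomic cosets). Let C = {c ∈ F_{q^2}^n : Σ_{i=0}^{n−1} c_i α^{iz} = 0 for all z ∈ Z} be the cyclic code over F_{q^2} with defining set Z. Then the Hermitian dual C^{⊥h} is contained in C if and only if Z ∩ Z^{−q} = ∅, where Z^{−q} = {(−qz) mod n : z ∈ Z}. -/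
open Finset Polynomial

private lemma geom_aux {K : Type*} [Field K] {n : ℕ} (hn : 0 < n) {α : K}
    (hα : IsPrimitiveRoot α n) (e : ℕ) :
    ∑ i : Fin n, α ^ ((i : ℕ) * e) = if (e : ZMod n) = 0 then (n : K) else 0 := by
  have hdvd : (e : ZMod n) = 0 ↔ n ∣ e := ZMod.natCast_eq_zero_iff e n
  have hsum : ∑ i : Fin n, α ^ ((i : ℕ) * e) = ∑ i ∈ Finset.range n, (α ^ e) ^ i := by
    rw [← Fin.sum_univ_eq_sum_range (fun i => (α ^ e) ^ i) n]
    exact Finset.sum_congr rfl fun i _ => by rw [← pow_mul, mul_comm]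
  by_cases h : (e : ZMod n) = 0
  · rw [if_pos h, hsum]
    have he : α ^ e = 1 := (hα.pow_eq_one_iff_dvd e).2 (hdvd.1 h)
    simp [he]
  · rw [if_neg h, hsum]
    have he : α ^ e ≠ 1 := fun hc => h (hdvd.2 ((hα.pow_eq_one_iff_dvd e).1 hc))
    rw [geom_sum_eq he]
    have : (α ^ e) ^ n = 1 := by
      rw [← pow_mul, mul_comm, pow_mul, hα.pow_eq_one, one_pow]
    rw [this, sub_self, zero_div]

private lemma fixed_aux {F K : Type*} [Field F] [Fintype F] [Field K] [Algebra F K]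
    {x : K} (hx : x ^ Fintype.card F = x) : ∃ a : F, algebraMap F K a = x := by
  classical
  by_contra hcon
  push_neg at hcon
  set c := Fintype.card F with hc
  have hc1 : 1 < c := Fintype.one_lt_card
  set P : K[X] := X ^ c - X with hP
  have hPdeg : P.natDegree = c := by
    rw [hP]
    have h1 : (X : K[X]).natDegree < (X ^ c : K[X]).natDegree := by
      rw [natDegree_X_pow, natDegree_X]; exact hc1
    rw [natDegree_sub_eq_left_of_natDegree_lt h1, natDegree_X_pow]
  set s : Finset K := Finset.univ.image (algebraMap F K) ∪ {x} with hs
  have hximg : x ∉ Finset.univ.image (algebraMap F K) := by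
    simp only [Finset.mem_image]
    rintro ⟨a, -, ha⟩
    exact hcon a ha
  have hcard : c + 1 ≤ s.card := by
    have : s = insert x (Finset.univ.image (algebraMap F K)) := by
      rw [hs, Finset.union_comm]; rfl
    rw [this, Finset.card_insert_of_notMem hximg,
      Finset.card_image_of_injective _ (algebraMap F K).injective, Finset.card_univ]
  have heval : ∀ y ∈ s, P.eval y = 0 := by
    intro y hy
    rcases Finset.mem_union.1 hy with h | h
    · obtain ⟨a, -, rfl⟩ := Finset.mem_image.1 h
      simp only [hP, eval_sub, eval_pow, eval_X]
      rw [← map_pow, FiniteField.pow_card, sub_self]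
    · rw [Finset.mem_singleton] at h
      subst h
      simp only [hP, eval_sub, eval_pow, eval_X]
      rw [hx, sub_self]
  have hzero : P = 0 :=
    Polynomial.eq_zero_of_natDegree_lt_card_of_eval_eq_zero' P s heval
      (by rw [hPdeg]; omega)
  have : P.coeff 1 = 0 := by rw [hzero]; simp
  rw [hP, coeff_sub, coeff_X_pow, coeff_X_one, if_neg (by omega : ¬ 1 = c)] at this
  simp at this

private lemma linindep_aux {K : Type*} [Field K] [Fintype K] {q m : ℕ} (hq : 2 ≤ q)
    (hK : Fintype.card K = q ^ (2 * m)) (T : ℕ → K)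
    (h : ∀ β : K, ∑ k ∈ Finset.range m, T k * β ^ q ^ (2 * k) = 0) :
    ∀ k ∈ Finset.range m, T k = 0 := by
  rcases Nat.eq_zero_or_pos m with hm | hm
  · subst hm; intro k hk; simp at hk
  obtain ⟨m', rfl⟩ : ∃ m', m = m' + 1 := ⟨m - 1, (Nat.succ_pred_eq_of_pos hm).symm⟩
  set P : K[X] := ∑ k ∈ Finset.range (m' + 1), C (T k) * X ^ (q ^ (2 * k)) with hP
  have heval : ∀ β : K, P.eval β = 0 := by
    intro β
    rw [hP, eval_finset_sum]
    simpa using h β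
  have hdeg : P.natDegree < Fintype.card K := by
    have h1 : P.natDegree ≤ q ^ (2 * m') := by
      rw [hP]
      apply Polynomial.natDegree_sum_le_of_forall_le
      intro k hk
      refine le_trans (natDegree_C_mul_le _ _) ?_
      rw [natDegree_X_pow]
      exact Nat.pow_le_pow_right (by omega) (by
        have := Finset.mem_range.1 hk; omega)
    rw [hK]
    exact lt_of_le_of_lt h1 (Nat.pow_lt_pow_right hq (by omega))
  have hzero : P = 0 :=
    Polynomial.eq_zero_of_natDegree_lt_card_of_eval_eq_zero P Function.injective_id
      heval hdeg
  intro k hk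
  have hcoeff : P.coeff (q ^ (2 * k)) = T k := by
    rw [hP, Polynomial.finset_sum_coeff]
    rw [Finset.sum_eq_single k]
    · rw [coeff_C_mul, coeff_X_pow, if_pos rfl, mul_one]
    · intro j hj hjk
      rw [coeff_C_mul, coeff_X_pow, if_neg, mul_zero]
      intro hpow
      have h2 : 2 * k = 2 * j := Nat.pow_right_injective hq (by simpa using hpow)
      exact hjk (by omega)
    · intro hkk; exact absurd hk hkk
  rw [← hcoeff, hzero, coeff_zero]

private theorem aux_main (p s q n m' : ℕ) (hp : Nat.Prime p) (hs : 0 < s)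
    (hqe : p ^ s = q) (hn : 0 < n) (hgcd : Nat.gcd n q = 1)
    (F K : Type*) [Field F] [Fintype F] [Field K] [Fintype K] [Algebra F K]
    (hF : Fintype.card F = q ^ 2) (hK : Fintype.card K = q ^ (2 * (m' + 1)))
    (α : K) (hα : IsPrimitiveRoot α n)
    (Z : Finset ℕ) (hZn : ∀ z ∈ Z, z < n) (hZq : ∀ z ∈ Z, z * q ^ 2 % n ∈ Z) :
    hermDualSet q (cyclicCode F n α Z : Set (Fin n → F)) ⊆
        (cyclicCode F n α Z : Set (Fin n → F)) ↔
      Z ∩ Z.image (fun z => (n - (q * z) % n) % n) = ∅ := by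
  classical
  haveI : NeZero n := ⟨hn.ne'⟩
  haveI hfact : Fact p.Prime := ⟨hp⟩
  have hq2 : 2 ≤ q := by
    calc 2 ≤ p := hp.two_le
    _ ≤ p ^ s := Nat.le_self_pow hs.ne' p
    _ = q := hqe
  have hpq : p ∣ q := hqe ▸ dvd_pow_self p hs.ne'
  haveI hcharF : CharP F p := by
    rw [CharP.charP_iff_prime_eq_zero hp]
    have h0 : ((Fintype.card F : F)) = 0 := Nat.cast_card_eq_zero F
    rw [hF, ← hqe, ← pow_mul] at h0
    push_cast at h0
    exact pow_eq_zero_iff (by positivity) |>.1 h0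
  haveI hcharK : CharP K p := charP_of_injective_algebraMap (algebraMap F K).injective p
  haveI : ExpChar K p := ExpChar.prime hp
  -- frobenius on sums
  have hfrob : ∀ (t : ℕ) {ι : Type} (S : Finset ι) (g : ι → K),
      (∑ i ∈ S, g i) ^ q ^ t = ∑ i ∈ S, g i ^ q ^ t := by
    intro t ι S g
    rw [← hqe, ← pow_mul]
    exact sum_pow_char_pow p (s * t) S g
  -- exponents mod n
  have hmodpow : ∀ a : ℕ, α ^ a = α ^ (a % n) := by
    intro a
    conv_lhs => rw [← Nat.mod_add_div a n]
    rw [pow_add, pow_mul, hα.pow_eq_one, one_pow, mul_one]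
  have hcast : ∀ a b : ℕ, (a : ZMod n) = (b : ZMod n) → α ^ a = α ^ b := by
    intro a b hab
    rw [hmodpow a, hmodpow b]
    congr 1
    exact (ZMod.natCast_eq_natCast_iff a b n).1 hab
  have hgeom : ∀ e : ℕ, ∑ i : Fin n, α ^ ((i : ℕ) * e) = if (e : ZMod n) = 0 then (n : K) else 0 :=
    geom_aux hn hα
  have hpow_card : ∀ x : K, x ^ q ^ (2 * (m' + 1)) = x := fun x => by
    rw [← hK]; exact FiniteField.pow_card x
  have hqm : ((q : ZMod n)) ^ (2 * (m' + 1)) = 1 := by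
    have hα0 : α ≠ 0 := hα.ne_zero hn.ne'
    have hge : 1 ≤ q ^ (2 * (m' + 1)) := Nat.one_le_pow _ _ (by omega)
    have h1 : α ^ (q ^ (2 * (m' + 1)) - 1) * α = α := by
      rw [← pow_succ, Nat.sub_add_cancel hge]
      exact hpow_card α
    have h2 : α ^ (q ^ (2 * (m' + 1)) - 1) = 1 :=
      mul_right_cancel₀ hα0 (h1.trans (one_mul α).symm)
    obtain ⟨t, ht⟩ := hα.dvd_of_pow_eq_one _ h2
    have ht' : q ^ (2 * (m' + 1)) = n * t + 1 := by omega
    calc ((q : ZMod n)) ^ (2 * (m' + 1)) = ((q ^ (2 * (m' + 1)) : ℕ) : ZMod n) := by push_cast; ring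
    _ = ((n * t + 1 : ℕ) : ZMod n) := by rw [ht']
    _ = 1 := by push_cast [ZMod.natCast_self]; ring
  have hn0K : (n : K) ≠ 0 := by
    rw [Ne, CharP.cast_eq_zero_iff K p n]
    intro hpn
    have hd : p ∣ Nat.gcd n q := Nat.dvd_gcd hpn hpq
    rw [hgcd, Nat.dvd_one] at hd
    exact hp.one_lt.ne' hd
  have hcop : Nat.Coprime q n := Nat.coprime_comm.mp hgcd
  set U : (ZMod n)ˣ := ZMod.unitOfCoprime q hcop with hU
  have hUq : (U : ZMod n) = q := ZMod.coe_unitOfCoprime q hcop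
  set u : ZMod n := ((U⁻¹ : (ZMod n)ˣ) : ZMod n) with hu
  have huq : u * (q : ZMod n) = 1 := by
    rw [hu, ← hUq]
    exact U.inv_mul
  have hu_eq : u = (q : ZMod n) ^ (2 * m' + 1) := by
    have h2m : (q : ZMod n) * (q : ZMod n) ^ (2 * m' + 1) = 1 := by
      rw [← pow_succ']
      rw [show 2 * m' + 1 + 1 = 2 * (m' + 1) from by ring]
      exact hqm
    calc u = u * ((q : ZMod n) * (q : ZMod n) ^ (2 * m' + 1)) := by rw [h2m, mul_one]
    _ = (u * (q : ZMod n)) * (q : ZMod n) ^ (2 * m' + 1) := by ring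
    _ = (q : ZMod n) ^ (2 * m' + 1) := by rw [huq, one_mul]
  -- closure of Z under repeated mult by q^2
  have hiter : ∀ z ∈ Z, ∀ t : ℕ, (z * q ^ (2 * t)) % n ∈ Z := by
    intro z hz t
    induction t with
    | zero => simpa [Nat.mod_eq_of_lt (hZn z hz)] using hz
    | succ t ih =>
      have he : z * q ^ (2 * (t + 1)) % n = ((z * q ^ (2 * t)) % n) * q ^ 2 % n := by
        rw [Nat.mod_mul_mod, show 2 * (t + 1) = 2 * t + 2 from by ring, pow_add, ← mul_assoc]
      rw [he]
      exact hZq _ ih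
  -- trace is fixed by q^2 power, hence comes from F
  have hTr_fixed : ∀ γ : K,
      (∑ k ∈ Finset.range (m' + 1), γ ^ q ^ (2 * k)) ^ q ^ 2
        = ∑ k ∈ Finset.range (m' + 1), γ ^ q ^ (2 * k) := by
    intro γ
    have h1 : (∑ k ∈ Finset.range (m' + 1), γ ^ q ^ (2 * k)) ^ q ^ 2
        = ∑ k ∈ Finset.range (m' + 1), γ ^ q ^ (2 * (k + 1)) := by
      rw [hfrob 2]
      refine Finset.sum_congr rfl fun k _ => ?_
      rw [← pow_mul, ← pow_add, show 2 * k + 2 = 2 * (k + 1) from by ring]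
    rw [h1]
    have h2 : (∑ k ∈ Finset.range (m' + 1), γ ^ q ^ (2 * (k + 1))) + γ ^ q ^ (2 * 0)
        = (∑ k ∈ Finset.range (m' + 1), γ ^ q ^ (2 * k)) + γ ^ q ^ (2 * (m' + 1)) := by
      rw [← Finset.sum_range_succ' (fun k => γ ^ q ^ (2 * k)) (m' + 1),
        Finset.sum_range_succ]
    rw [hpow_card γ] at h2
    simp only [Nat.mul_zero, pow_zero, pow_one] at h2
    exact add_right_cancel h2
  have hfix : ∀ γ : K, ∃ a : F,
      algebraMap F K a = ∑ k ∈ Finset.range (m' + 1), γ ^ q ^ (2 * k) := by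
    intro γ
    apply fixed_aux
    rw [hF]
    exact hTr_fixed γ
  choose tc htc using hfix
  -- key evaluation of trace codewords
  have hkey : ∀ (w e : ℕ) (β : K),
      ∑ i : Fin n, (∑ k ∈ Finset.range (m' + 1), (β * α ^ ((i : ℕ) * w)) ^ q ^ (2 * k))
          * α ^ ((i : ℕ) * e)
        = ∑ k ∈ Finset.range (m' + 1),
            (if (((w * q ^ (2 * k) + e : ℕ)) : ZMod n) = 0
              then (n : K) * β ^ q ^ (2 * k) else 0) := by
    intro w e β
    have step : ∀ i : Fin n,
        (∑ k ∈ Finset.range (m' + 1), (β * α ^ ((i : ℕ) * w)) ^ q ^ (2 * k))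
            * α ^ ((i : ℕ) * e)
          = ∑ k ∈ Finset.range (m' + 1),
              β ^ q ^ (2 * k) * α ^ ((i : ℕ) * (w * q ^ (2 * k) + e)) := by
      intro i
      rw [Finset.sum_mul]
      refine Finset.sum_congr rfl fun k _ => ?_
      rw [mul_pow, ← pow_mul, mul_assoc, ← pow_add]
      congr 2
      ring
    rw [Finset.sum_congr rfl fun i _ => step i, Finset.sum_comm]
    refine Finset.sum_congr rfl fun k _ => ?_
    rw [← Finset.mul_sum, hgeom]
    split_ifs with h
    · ring
    · simp
  -- membership criterion
  have hmem : ∀ c : Fin n → F, c ∈ (cyclicCode F n α Z : Set (Fin n → F)) ↔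
      ∀ z ∈ Z, ∑ i : Fin n, algebraMap F K (c i) * α ^ ((i : ℕ) * z) = 0 :=
    fun c => Iff.rfl
  -- cast of negation map
  have hnegcast : ∀ b : ℕ, (((n - (q * b) % n) % n : ℕ) : ZMod n) = -((q : ZMod n) * b) := by
    intro b
    have h1 : q * b % n ≤ n := (Nat.mod_lt _ hn).le
    rw [ZMod.natCast_mod, Nat.cast_sub h1, ZMod.natCast_self, zero_sub, ZMod.natCast_mod]
    push_cast
    ring
  -- equality from casts of small numbers
  have hvaleq : ∀ x y : ℕ, x < n → y < n → ((x : ZMod n) = (y : ZMod n)) → x = y := by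
    intro x y hx hy h
    have := congrArg ZMod.val h
    rwa [ZMod.val_cast_of_lt hx, ZMod.val_cast_of_lt hy] at this
  constructor
  · intro hsub
    rw [Finset.eq_empty_iff_forall_notMem]
    intro a ha
    rw [Finset.mem_inter, Finset.mem_image] at ha
    obtain ⟨haZ, z, hzZ, hza⟩ := ha
    have hcasta : (a : ZMod n) = -((q : ZMod n) * z) := by rw [← hza]; exact hnegcast z
    set s₀ : ℕ := (u * (a : ZMod n)).val with hs₀
    have hcs₀ : ((s₀ : ℕ) : ZMod n) = u * (a : ZMod n) := ZMod.natCast_rightInverse _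
    have hs₀z : ((s₀ : ℕ) : ZMod n) = -(z : ZMod n) := by
      rw [hcs₀, hcasta]
      calc u * -((q : ZMod n) * z) = -((u * (q : ZMod n)) * z) := by ring
      _ = -(z : ZMod n) := by rw [huq, one_mul]
    have hyD : ∀ β : K, (fun i : Fin n => tc (β * α ^ ((i : ℕ) * s₀))) ∈
        hermDualSet q (cyclicCode F n α Z : Set (Fin n → F)) := by
      intro β x hx
      apply (algebraMap F K).injective
      rw [map_sum, map_zero]
      have hterm : ∀ i : Fin n,
          algebraMap F K ((tc (β * α ^ ((i : ℕ) * s₀))) ^ q * x i)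
            = ∑ k ∈ Finset.range (m' + 1),
                β ^ (q ^ (2 * k) * q) *
                  (algebraMap F K (x i) * α ^ ((i : ℕ) * (s₀ * (q ^ (2 * k) * q)))) := by
        intro i
        rw [map_mul, map_pow, htc]
        have hq1 : (∑ k ∈ Finset.range (m' + 1), (β * α ^ ((i : ℕ) * s₀)) ^ q ^ (2 * k)) ^ q
            = ∑ k ∈ Finset.range (m' + 1), (β * α ^ ((i : ℕ) * s₀)) ^ (q ^ (2 * k) * q) := by
          have hfr := hfrob 1 (Finset.range (m' + 1))
            (fun k => (β * α ^ ((i : ℕ) * s₀)) ^ q ^ (2 * k))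
          rw [pow_one] at hfr
          rw [hfr]
          exact Finset.sum_congr rfl fun k _ => by rw [← pow_mul]
        rw [hq1, Finset.sum_mul]
        refine Finset.sum_congr rfl fun k _ => ?_
        rw [mul_pow, ← pow_mul,
          show (i : ℕ) * s₀ * (q ^ (2 * k) * q) = (i : ℕ) * (s₀ * (q ^ (2 * k) * q)) from by ring]
        ring
      rw [Finset.sum_congr rfl fun i _ => hterm i, Finset.sum_comm]
      apply Finset.sum_eq_zero
      intro k hk
      rw [← Finset.mul_sum]
      have hbZ : (a * q ^ (2 * k)) % n ∈ Z := hiter a haZ k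
      have hexp : ∀ i : Fin n, α ^ ((i : ℕ) * (s₀ * (q ^ (2 * k) * q)))
          = α ^ ((i : ℕ) * ((a * q ^ (2 * k)) % n)) := by
        intro i
        apply hcast
        push_cast [ZMod.natCast_mod]
        rw [hcs₀]
        linear_combination (((i : ℕ) : ZMod n) * (a : ZMod n) * (q : ZMod n) ^ (2 * k)) * huq
      have hinner : ∑ i : Fin n,
          algebraMap F K (x i) * α ^ ((i : ℕ) * (s₀ * (q ^ (2 * k) * q))) = 0 := by
        rw [Finset.sum_congr rfl fun i _ => by rw [hexp i]]
        exact (hmem x).1 hx _ hbZ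
      rw [hinner, mul_zero]
    set T : ℕ → K := fun k =>
      if (((s₀ * q ^ (2 * k) + z : ℕ)) : ZMod n) = 0 then (n : K) else 0 with hT
    have hT0 : T 0 = (n : K) := by
      have hc : ((s₀ * q ^ (2 * 0) + z : ℕ) : ZMod n) = 0 := by
        push_cast
        rw [hs₀z]
        ring
      simp only [hT]
      rw [if_pos hc]
    have hTex : ∃ β₀ : K, ∑ k ∈ Finset.range (m' + 1), T k * β₀ ^ q ^ (2 * k) ≠ 0 := by
      by_contra hall
      push_neg at hall
      have h0 := linindep_aux hq2 hK T hall 0 (Finset.mem_range.2 (Nat.succ_pos m'))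
      rw [hT0] at h0
      exact hn0K h0
    obtain ⟨β₀, hβ₀⟩ := hTex
    have hyC := hsub (hyD β₀)
    have hz0 := (hmem _).1 hyC z hzZ
    have hrw : ∑ i : Fin n, algebraMap F K (tc (β₀ * α ^ ((i : ℕ) * s₀))) * α ^ ((i : ℕ) * z)
        = ∑ k ∈ Finset.range (m' + 1), T k * β₀ ^ q ^ (2 * k) := by
      rw [Finset.sum_congr rfl fun i _ => by rw [htc], hkey s₀ z β₀]
      refine Finset.sum_congr rfl fun k _ => ?_
      simp only [hT]
      rw [ite_mul, zero_mul]
    exact hβ₀ (by rw [← hrw]; exact hz0)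
  · intro hdisj y hy
    have hdis : ∀ a ∈ Z, ∀ z ∈ Z, (n - (q * z) % n) % n ≠ a := by
      intro a ha z hz h
      have hmem2 : a ∈ Z ∩ Z.image (fun z => (n - (q * z) % n) % n) :=
        Finset.mem_inter.2 ⟨ha, Finset.mem_image.2 ⟨z, hz, h⟩⟩
      rw [hdisj] at hmem2
      exact absurd hmem2 (Finset.notMem_empty a)
    rw [hmem]
    intro z hz
    set w : ℕ := (u * (z : ZMod n)).val with hw
    have hcw : ((w : ℕ) : ZMod n) = u * (z : ZMod n) := ZMod.natCast_rightInverse _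
    have hcC : ∀ β : K, (fun i : Fin n => tc (β * α ^ ((i : ℕ) * w))) ∈
        (cyclicCode F n α Z : Set (Fin n → F)) := by
      intro β
      rw [hmem]
      intro z' hz'
      rw [Finset.sum_congr rfl fun i _ => by rw [htc], hkey w z' β]
      apply Finset.sum_eq_zero
      intro k hk
      rw [if_neg]
      intro hcond
      have hbZ : (z * q ^ (2 * (k + m'))) % n ∈ Z := hiter z hz (k + m')
      refine hdis z' hz' _ hbZ ?_
      apply hvaleq _ _ (Nat.mod_lt _ hn) (hZn z' hz')
      rw [hnegcast, ZMod.natCast_mod]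
      push_cast
      push_cast at hcond
      rw [hcw, hu_eq] at hcond
      linear_combination (-1 : ZMod n) * hcond
    have hpair : ∀ β : K, ∑ k ∈ Finset.range (m' + 1),
        (∑ i : Fin n, (algebraMap F K (y i)) ^ q * α ^ ((i : ℕ) * (w * q ^ (2 * k))))
          * β ^ q ^ (2 * k) = 0 := by
      intro β
      have h0 := hy _ (hcC β)
      have h1 : ∑ i : Fin n, (algebraMap F K (y i)) ^ q *
          (∑ k ∈ Finset.range (m' + 1), (β * α ^ ((i : ℕ) * w)) ^ q ^ (2 * k)) = 0 := by
        have hmap := congrArg (algebraMap F K) h0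
        rw [map_sum, map_zero] at hmap
        rw [← hmap]
        exact Finset.sum_congr rfl fun i _ => by rw [map_mul, map_pow, htc]
      have h2 : ∀ i : Fin n, (algebraMap F K (y i)) ^ q *
          (∑ k ∈ Finset.range (m' + 1), (β * α ^ ((i : ℕ) * w)) ^ q ^ (2 * k))
          = ∑ k ∈ Finset.range (m' + 1),
              ((algebraMap F K (y i)) ^ q * α ^ ((i : ℕ) * (w * q ^ (2 * k)))) * β ^ q ^ (2 * k) := by
        intro i
        rw [Finset.mul_sum]
        refine Finset.sum_congr rfl fun k _ => ?_
        rw [mul_pow, ← pow_mul,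
          show (i : ℕ) * w * q ^ (2 * k) = (i : ℕ) * (w * q ^ (2 * k)) from by ring]
        ring
      rw [Finset.sum_congr rfl fun i _ => h2 i, Finset.sum_comm] at h1
      rw [← h1]
      exact Finset.sum_congr rfl fun k _ => by rw [← Finset.sum_mul]
    have hV := linindep_aux hq2 hK _ hpair
    set k₁ := 1 % (m' + 1) with hk₁
    have hk₁mem : k₁ ∈ Finset.range (m' + 1) := Finset.mem_range.2 (Nat.mod_lt _ (Nat.succ_pos m'))
    have hcalc : (q : ZMod n) ^ (2 * m' + 1) * (q : ZMod n) ^ (2 * k₁) = (q : ZMod n) := by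
      rcases Nat.eq_zero_or_pos m' with h0 | h0
      · subst h0
        norm_num [hk₁]
      · have hk : k₁ = 1 := by rw [hk₁]; exact Nat.mod_eq_of_lt (by omega)
        rw [hk, ← pow_add, show 2 * m' + 1 + 2 * 1 = 2 * (m' + 1) + 1 from by ring,
          pow_succ, hqm, one_mul]
    have hzq : ((w * q ^ (2 * k₁) : ℕ) : ZMod n) = ((z * q : ℕ) : ZMod n) := by
      push_cast
      rw [hcw, hu_eq]
      linear_combination ((z : ZMod n)) * hcalc
    have hfin : (∑ i : Fin n, algebraMap F K (y i) * α ^ ((i : ℕ) * z)) ^ q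
        = ∑ i : Fin n, (algebraMap F K (y i)) ^ q * α ^ ((i : ℕ) * (w * q ^ (2 * k₁))) := by
      have hfr := hfrob 1 Finset.univ (fun i : Fin n => algebraMap F K (y i) * α ^ ((i : ℕ) * z))
      rw [pow_one] at hfr
      rw [hfr]
      refine Finset.sum_congr rfl fun i _ => ?_
      rw [mul_pow, ← pow_mul]
      congr 1
      apply hcast
      push_cast
      push_cast at hzq
      linear_combination (-(((i : ℕ) : ZMod n))) * hzq
    have hzero : (∑ i : Fin n, algebraMap F K (y i) * α ^ ((i : ℕ) * z)) ^ q = 0 := by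
      rw [hfin]
      exact hV k₁ hk₁mem
    exact pow_eq_zero_iff (by omega : q ≠ 0) |>.1 hzero

set_option synthInstance.maxHeartbeats 1000000 in
open IntermediateField in
/-- A cyclic code of length `n` over `F_{q^2}`, `gcd(n,q) = 1`, with defining set
`Z` (closed under multiplication by `q^2` mod `n`) contains its Hermitian dual
code iff `Z ∩ Z^{-q} = ∅`, where `Z^{-q} = {-qz mod n : z ∈ Z}`. -/
theorem cyclic_contains_hermitian_dual_iff
    (q n : ℕ) (hq : IsPrimePow q) (hn : 0 < n) (hgcd : Nat.gcd n q = 1)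
    (F E : Type*) [Field F] [Fintype F] [Field E] [Algebra F E]
    (hF : Fintype.card F = q ^ 2)
    (α : E) (hα : IsPrimitiveRoot α n)
    (Z : Finset ℕ) (hZn : ∀ z ∈ Z, z < n) (hZq : ∀ z ∈ Z, z * q ^ 2 % n ∈ Z) :
    hermDualSet q (cyclicCode F n α Z : Set (Fin n → F)) ⊆
        (cyclicCode F n α Z : Set (Fin n → F)) ↔
      Z ∩ Z.image (fun z => (n - (q * z) % n) % n) = ∅ := by
  obtain ⟨p, s, hp, hs, hqe⟩ := hq
  have hp' : Nat.Prime p := Nat.prime_iff.mpr hp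
  have hint : IsIntegral F α := by
    refine ⟨Polynomial.X ^ n - Polynomial.C 1, Polynomial.monic_X_pow_sub_C 1 hn.ne', ?_⟩
    simp [hα.pow_eq_one]
  haveI : FiniteDimensional F F⟮α⟯ := IntermediateField.adjoin.finiteDimensional hint
  haveI : Fintype F⟮α⟯ := Module.fintypeOfFintype (Module.finBasis F F⟮α⟯)
  set α₀ : F⟮α⟯ := IntermediateField.AdjoinSimple.gen F α with hα₀def
  have hval : algebraMap F⟮α⟯ E α₀ = α := IntermediateField.AdjoinSimple.algebraMap_gen F α
  have hinj : Function.Injective (algebraMap F⟮α⟯ E) := (algebraMap F⟮α⟯ E).injective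
  have hα₀ : IsPrimitiveRoot α₀ n := by
    constructor
    · apply hinj
      rw [map_pow, hval, map_one]
      exact hα.pow_eq_one
    · intro l hl
      apply hα.dvd_of_pow_eq_one
      rw [← hval, ← map_pow, hl, map_one]
  have hm1 : 0 < Module.finrank F F⟮α⟯ := Module.finrank_pos
  obtain ⟨m', hm'⟩ : ∃ m', Module.finrank F F⟮α⟯ = m' + 1 :=
    ⟨Module.finrank F F⟮α⟯ - 1, (Nat.succ_pred_eq_of_pos hm1).symm⟩
  have hK : Fintype.card F⟮α⟯ = q ^ (2 * (m' + 1)) := by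
    rw [Module.card_eq_pow_finrank (K := F) (V := F⟮α⟯), hF, hm', ← pow_mul]
  have hsets : (cyclicCode F n α Z : Set (Fin n → F))
      = (cyclicCode F n α₀ Z : Set (Fin n → F)) := by
    ext c
    have hEq : ∀ zz : ℕ, (∑ i : Fin n, algebraMap F E (c i) * α ^ ((i : ℕ) * zz))
        = algebraMap F⟮α⟯ E (∑ i : Fin n, algebraMap F F⟮α⟯ (c i) * α₀ ^ ((i : ℕ) * zz)) := by
      intro zz
      rw [map_sum]
      refine Finset.sum_congr rfl fun i _ => ?_
      rw [map_mul, map_pow, hval, ← IsScalarTower.algebraMap_apply]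
    constructor
    · intro hc z hz
      apply hinj
      rw [map_zero, ← hEq]
      exact hc z hz
    · intro hc z hz
      rw [hEq, hc z hz, map_zero]
  rw [hsets]
  exact aux_main p s q n m' hp' hs hqe hn hgcd F F⟮α⟯ hF hK α₀ hα₀ Z hZn hZq
end

section
/- Let q be a prime power, m a positive integer, and n = q^m − 1. For every integer x in the range 1 ≤ x < q^{⌈m/2⌉} + 1, the q-ary cyclotomic coset C_x = {x q^ℓ mod n : ℓ ≥ 0} has cardinality exactly m. -/
/-- The `q`-ary cyclotomic coset of `x` modulo `n`: `{x q^k mod n : k ≥ 0}`. -/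
def cycCoset (q n x : ℕ) : Set ℕ := {y | ∃ k : ℕ, y = x * q ^ k % n}

/-- Auxiliary:  divisibility of `X*(Q^e - 1)` descends to the gcd of exponents. -/
lemma dvd_gcd_pow_aux (N X Q : ℤ) : ∀ a b : ℕ,
    N ∣ X * (Q ^ a - 1) → N ∣ X * (Q ^ b - 1) → N ∣ X * (Q ^ (Nat.gcd a b) - 1) := by
  intro a b
  induction a, b using Nat.gcd.induction with
  | H0 n => intro _ h; simpa using h
  | H1 a b ha ih =>
    intro h1 h2
    rw [Nat.gcd_rec]
    refine ih ?_ h1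
    have hkey : X * (Q ^ (b % a) - 1)
        = X * (Q ^ b - 1) - Q ^ (b % a) * (X * ((Q ^ a) ^ (b / a) - 1)) := by
      have hb : Q ^ b = (Q ^ a) ^ (b / a) * Q ^ (b % a) := by
        rw [← pow_mul, ← pow_add, Nat.div_add_mod]
      rw [hb]; ring
    rw [hkey]
    have h3 : N ∣ X * ((Q ^ a) ^ (b / a) - 1) := by
      refine dvd_trans h1 ?_
      have := sub_dvd_pow_sub_pow (Q ^ a) 1 (b / a)
      simp only [one_pow] at this
      exact mul_dvd_mul_left X this
    exact dvd_sub h2 (Dvd.dvd.mul_left h3 _)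

/-- For `n = q^m - 1`, every `q`-ary cyclotomic coset `C_x` with
`1 ≤ x < q^⌈m/2⌉ + 1` has cardinality exactly `m`. -/
theorem cycCoset_card_eq
    (q m : ℕ) (hq : IsPrimePow q) (hm : 0 < m)
    (x : ℕ) (hx1 : 1 ≤ x) (hx2 : x < q ^ ((m + 1) / 2) + 1) :
    (cycCoset q (q ^ m - 1) x).ncard = m := by
  have hq2 : 2 ≤ q := hq.two_le
  set n := q ^ m - 1 with hn
  have hqm1 : 1 ≤ q ^ m := Nat.one_le_pow _ _ (by omega)
  have hqm2 : 2 ≤ q ^ m := by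
    calc (2:ℕ) = 2 ^ 1 := rfl
    _ ≤ q ^ 1 := Nat.pow_le_pow_left hq2 1
    _ ≤ q ^ m := Nat.pow_le_pow_right (by omega) hm
  have hnpos : 0 < n := by omega
  have hmod : q ^ m ≡ 1 [MOD n] := ((Nat.modEq_iff_dvd' hqm1).mpr dvd_rfl).symm
  have hcop : Nat.Coprime n q := by
    have h1 : Nat.Coprime (q ^ m) n := by
      have he : q ^ m = n + 1 := by omega
      rw [he]; simp [Nat.Coprime]
    exact ((Nat.coprime_pow_left_iff hm q n).mp h1).symm
  have hper : ∀ k : ℕ, x * q ^ k % n = x * q ^ (k % m) % n := by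
    intro k
    have : x * q ^ k ≡ x * q ^ (k % m) [MOD n] := by
      conv_lhs => rw [← Nat.div_add_mod k m, pow_add, pow_mul]
      calc x * ((q ^ m) ^ (k / m) * q ^ (k % m))
          ≡ x * (1 ^ (k / m) * q ^ (k % m)) [MOD n] :=
            ((hmod.pow (k / m)).mul_right _).mul_left x
        _ = x * q ^ (k % m) := by ring
    exact this
  -- key injectivity fact
  have key : ∀ i j : ℕ, i < j → j < m → x * q ^ i % n = x * q ^ j % n → False := by
    intro i j hij hjm h
    set d := j - i with hd
    have hd0 : 0 < d := by omega
    have hdm : d < m := by omega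
    have hmodeq : x * q ^ i ≡ x * q ^ j [MOD n] := h
    have hint : (n : ℤ) ∣ (x : ℤ) * (q : ℤ) ^ j - (x : ℤ) * (q : ℤ) ^ i := by
      have := hmodeq.dvd
      push_cast at this ⊢
      exact this
    have hji : j = i + d := by omega
    have h2 : (n : ℤ) ∣ ((x : ℤ) * ((q : ℤ) ^ d - 1)) * (q : ℤ) ^ i := by
      have he : (x : ℤ) * (q : ℤ) ^ j - (x : ℤ) * (q : ℤ) ^ i
          = ((x : ℤ) * ((q : ℤ) ^ d - 1)) * (q : ℤ) ^ i := by
        rw [hji, pow_add]; ring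
      rwa [he] at hint
    have hcopInt : IsCoprime (n : ℤ) ((q : ℤ) ^ i) :=
      (Nat.isCoprime_iff_coprime.mpr hcop).pow_right
    have h3 : (n : ℤ) ∣ (x : ℤ) * ((q : ℤ) ^ d - 1) := hcopInt.dvd_of_dvd_mul_right h2
    have h4 : (n : ℤ) ∣ (x : ℤ) * ((q : ℤ) ^ m - 1) := by
      have hne : (n : ℤ) = (q : ℤ) ^ m - 1 := by
        rw [hn]; push_cast [Nat.cast_sub hqm1]; ring
      rw [hne]; exact Dvd.dvd.mul_left dvd_rfl _
    set g := Nat.gcd d m with hg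
    have h5 : (n : ℤ) ∣ (x : ℤ) * ((q : ℤ) ^ g - 1) := dvd_gcd_pow_aux _ _ _ d m h3 h4
    have hg0 : 0 < g := Nat.gcd_pos_of_pos_left _ hd0
    have hgd : g ≤ d := Nat.gcd_le_left _ hd0
    have hgdvd : g ∣ m := Nat.gcd_dvd_right d m
    -- g ≤ m / 2
    have hgm2 : g ≤ m / 2 := by
      obtain ⟨c, hc⟩ := hgdvd
      have hc2 : 2 ≤ c := by
        rcases Nat.lt_or_ge c 2 with h' | h'
        · interval_cases c <;> omega
        · exact h'
      have : g * 2 ≤ m := by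
        calc g * 2 ≤ g * c := Nat.mul_le_mul_left g hc2
        _ = m := hc.symm
      omega
    -- back to ℕ divisibility
    have hpow1 : 1 ≤ q ^ g := Nat.one_le_pow _ _ (by omega)
    have h6 : n ∣ x * (q ^ g - 1) := by
      have hcast : ((x * (q ^ g - 1) : ℕ) : ℤ) = (x : ℤ) * ((q : ℤ) ^ g - 1) := by
        push_cast [Nat.cast_sub hpow1]; ring
      exact_mod_cast (hcast ▸ h5 : (n : ℤ) ∣ ((x * (q ^ g - 1) : ℕ) : ℤ))
    have hpos : 0 < x * (q ^ g - 1) := by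
      have : 2 ≤ q ^ g := by
        calc (2:ℕ) ≤ q := hq2
        _ = q ^ 1 := (pow_one q).symm
        _ ≤ q ^ g := Nat.pow_le_pow_right (by omega) hg0
      exact Nat.mul_pos (by omega) (by omega)
    have hle : n ≤ x * (q ^ g - 1) := Nat.le_of_dvd hpos h6
    -- upper bound
    set A := (m + 1) / 2 with hA
    set B := m / 2 with hB
    have hAB : A + B = m := by omega
    have hxA : x ≤ q ^ A := by omega
    have hgB : q ^ g - 1 ≤ q ^ B - 1 := by
      have := Nat.pow_le_pow_right (show 1 ≤ q by omega) hgm2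
      omega
    have hub : x * (q ^ g - 1) ≤ q ^ A * (q ^ B - 1) := Nat.mul_le_mul hxA hgB
    have hBpos : 1 ≤ q ^ B := Nat.one_le_pow _ _ (by omega)
    have he4 : q ^ A * (q ^ B - 1) + q ^ A = q ^ A * q ^ B := by
      have hle' : q ^ A ≤ q ^ A * q ^ B := Nat.le_mul_of_pos_right _ (by omega)
      rw [Nat.mul_sub, mul_one]
      omega
    have he1 : q ^ A * q ^ B = q ^ m := by rw [← pow_add, hAB]
    have hA1 : 2 ≤ q ^ A := by
      calc (2:ℕ) ≤ q := hq2
      _ = q ^ 1 := (pow_one q).symm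
      _ ≤ q ^ A := Nat.pow_le_pow_right (by omega) (by omega)
    omega
  -- the coset is the image of range m
  have hset : cycCoset q n x = ↑((Finset.range m).image fun ℓ => x * q ^ ℓ % n) := by
    ext y
    simp only [cycCoset, Set.mem_setOf_eq, Finset.coe_image, Set.mem_image,
      Finset.mem_coe, Finset.mem_range]
    constructor
    · rintro ⟨k, rfl⟩
      exact ⟨k % m, Nat.mod_lt _ hm, (hper k).symm⟩
    · rintro ⟨ℓ, _, rfl⟩
      exact ⟨ℓ, rfl⟩
  rw [hset, Set.ncard_coe_finset]
  rw [Finset.card_image_of_injOn, Finset.card_range]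
  intro i hi j hj hij
  simp only [Finset.coe_range, Set.mem_Iio] at hi hj
  rcases lt_trichotomy i j with h' | h' | h'
  · exact absurd hij (fun h => key i j h' hj h)
  · exact h'
  · exact absurd hij.symm (fun h => key j i h' hi h)
end

section
/- Let q be a prime power, m a positive integer, and n = q^m − 1. Let x and y be integers in the range 1 ≤ x, y < q^{⌈m/2⌉} + 1 with x ≢ 0 (mod q) and y ≢ 0 (mod q). If x ≠ y, then the q-ary cyclotomic cosets of x and y modulo n are disjoint: C_x ∩ C_y = ∅. -/
private lemma pow_modeq (q m n s : ℕ) (h : q ^ m = n + 1) :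
    q ^ s ≡ q ^ (s % m) [MOD n] := by
  conv_lhs => rw [← Nat.div_add_mod s m]
  rw [pow_add, pow_mul]
  have h1 : q ^ m ≡ 1 [MOD n] := by
    rw [h]; show (n + 1) % n = 1 % n; exact Nat.add_mod_left n 1
  calc (q ^ m) ^ (s / m) * q ^ (s % m)
      ≡ 1 ^ (s / m) * q ^ (s % m) [MOD n] := (h1.pow _).mul_right _
    _ = q ^ (s % m) := by rw [one_pow, one_mul]

private lemma le_n_aux (q m n x : ℕ) (hq2 : 2 ≤ q) (hm : 0 < m) (hn : q ^ m = n + 1)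
    (hx2 : x < q ^ ((m + 1) / 2) + 1) (hxq : ¬ q ∣ x) : x ≤ n := by
  rcases Nat.lt_or_ge m 2 with hm1 | hm2
  · -- m = 1
    have hm1' : m = 1 := by omega
    subst hm1'
    simp only [pow_one] at hn hx2 ⊢
    have hxne : x ≠ q := fun h => hxq (h ▸ dvd_refl q)
    simp only [show (1 + 1) / 2 = 1 from rfl, pow_one] at hx2
    omega
  · have ht : (m + 1) / 2 ≤ m - 1 := by omega
    have h1 : q ^ ((m + 1) / 2) ≤ q ^ (m - 1) := Nat.pow_le_pow_right (by omega) ht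
    have h2 : q ^ (m - 1) * q = n + 1 := by
      rw [← pow_succ, show m - 1 + 1 = m by omega, hn]
    have h3 : 2 ≤ q ^ (m - 1) := by
      calc 2 = 2 ^ 1 := rfl
        _ ≤ q ^ (m - 1) := Nat.pow_le_pow_left hq2 1 |>.trans
            (Nat.pow_le_pow_right (by omega) (by omega)) |>.trans_eq rfl
    have h4 : 2 * q ^ (m - 1) ≤ q ^ (m - 1) * q := by
      rw [mul_comm]; exact Nat.mul_le_mul_left _ hq2
    omega

private lemma key_lemma (q m t n u v j : ℕ) (hq2 : 2 ≤ q) (hm2 : 2 ≤ m)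
    (ht : t = (m + 1) / 2) (hn : q ^ m = n + 1) (hj1 : 1 ≤ j) (hj2 : j ≤ m - t)
    (hu1 : 1 ≤ u) (hu2 : u ≤ q ^ t) (hv2 : v ≤ q ^ t)
    (hqu : ¬ q ∣ u) (hqv : ¬ q ∣ v)
    (hmod : u ≡ v * q ^ j [MOD n]) : False := by
  have htm : t ≤ m - 1 := by omega
  have htpos : 1 ≤ t := by omega
  obtain ⟨c, hc⟩ := hmod.dvd
  push_cast at hc
  -- hc : (v : ℤ) * q ^ j - u = n * c
  have hnz : (n : ℤ) = (q : ℤ) ^ m - 1 := by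
    have := congrArg (Nat.cast : ℕ → ℤ) hn
    push_cast at this
    linarith
  have hqc : (q : ℤ) ∣ (u : ℤ) - c := by
    have h1 : (q : ℤ) ∣ (v : ℤ) * (q : ℤ) ^ j :=
      Dvd.dvd.mul_left (dvd_pow_self (q : ℤ) (by omega : j ≠ 0)) v
    have h2 : (q : ℤ) ∣ (q : ℤ) ^ m := dvd_pow_self (q : ℤ) (by omega)
    have heq : (u : ℤ) - c = (v : ℤ) * q ^ j - (q : ℤ) ^ m * c := by
      rw [hnz] at hc; linarith
    rw [heq]
    exact dvd_sub h1 (h2.mul_right c)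
  have hc0 : c ≠ 0 := by
    rintro rfl
    rw [sub_zero] at hqc
    exact hqu (Int.natCast_dvd_natCast.mp hqc)
  have hnpos : (1 : ℤ) ≤ (n : ℤ) := by
    have : 4 ≤ q ^ m := by
      calc 4 = 2 ^ 2 := rfl
        _ ≤ q ^ m := Nat.pow_le_pow_left hq2 2 |>.trans (Nat.pow_le_pow_right (by omega) hm2)
    have : (4 : ℤ) ≤ (q : ℤ) ^ m := by exact_mod_cast this
    linarith [hnz]
  -- bound : v * q ^ j ≤ q ^ m
  have hb1 : v * q ^ j ≤ q ^ m := by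
    calc v * q ^ j ≤ q ^ t * q ^ j := Nat.mul_le_mul_right _ hv2
      _ ≤ q ^ t * q ^ (m - t) := Nat.mul_le_mul_left _ (Nat.pow_le_pow_right (by omega) hj2)
      _ = q ^ m := by rw [← pow_add]; congr 1; omega
  have hb1' : (v : ℤ) * (q : ℤ) ^ j ≤ (q : ℤ) ^ m := by exact_mod_cast hb1
  rcases lt_or_gt_of_ne hc0 with hcneg | hcpos
  · -- c ≤ -1 : u ≥ n, impossible
    have h5 : (n : ℤ) * c ≤ -n := by nlinarith
    have h6 : (u : ℤ) ≥ (n : ℤ) := by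
      have hv0 : (0 : ℤ) ≤ (v : ℤ) * q ^ j := by positivity
      linarith
    -- but u ≤ q ^ t ≤ q ^ (m-1) < n
    have h7 : q ^ t ≤ q ^ (m - 1) := Nat.pow_le_pow_right (by omega) htm
    have h8 : 2 * q ^ (m - 1) ≤ q ^ (m - 1) * q := by
      rw [mul_comm]; exact Nat.mul_le_mul_left _ hq2
    have h9 : q ^ (m - 1) * q = n + 1 := by
      rw [← pow_succ, show m - 1 + 1 = m by omega, hn]
    have h10 : 2 ≤ q ^ (m - 1) :=
      le_trans (by norm_num) (Nat.pow_le_pow_left hq2 1 |>.trans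
        (Nat.pow_le_pow_right (by omega) (by omega)))
    have h11 : u ≤ n - 1 := by omega
    have h12 : (u : ℤ) ≤ (n : ℤ) - 1 := by
      have : (u : ℤ) ≤ ((n - 1 : ℕ) : ℤ) := by exact_mod_cast h11
      omega
    linarith
  · -- c ≥ 1 : v * q ^ j = q ^ m
    have h5 : (n : ℤ) ≤ (n : ℤ) * c := by nlinarith
    have h6 : (q : ℤ) ^ m ≤ (v : ℤ) * q ^ j := by
      have : (1 : ℤ) ≤ (u : ℤ) := by exact_mod_cast hu1
      linarith [hnz]
    have heq : (v : ℤ) * (q : ℤ) ^ j = (q : ℤ) ^ m := le_antisymm hb1' h6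
    have heqn : v * q ^ j = q ^ m := by exact_mod_cast heq
    have hveq : v = q ^ (m - j) := by
      have hq' : q ^ m = q ^ (m - j) * q ^ j := by rw [← pow_add]; congr 1; omega
      rw [hq'] at heqn
      exact Nat.eq_of_mul_eq_mul_right (Nat.pow_pos (n := j) (by omega : 0 < q)) heqn
    apply hqv
    rw [hveq]
    exact dvd_pow_self q (by omega : m - j ≠ 0)

/-- For `n = q^m - 1` and `1 ≤ x, y < q^⌈m/2⌉ + 1` with `x, y` not divisible
by `q`, distinct `x ≠ y` have disjoint `q`-ary cyclotomic cosets. -/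
theorem cycCoset_disjoint
    (q m : ℕ) (hq : IsPrimePow q) (hm : 0 < m)
    (x y : ℕ) (hx1 : 1 ≤ x) (hx2 : x < q ^ ((m + 1) / 2) + 1)
    (hy1 : 1 ≤ y) (hy2 : y < q ^ ((m + 1) / 2) + 1)
    (hxq : ¬ q ∣ x) (hyq : ¬ q ∣ y) (hxy : x ≠ y) :
    cycCoset q (q ^ m - 1) x ∩ cycCoset q (q ^ m - 1) y = ∅ := by
  have hq2 : 2 ≤ q := hq.two_le
  set n := q ^ m - 1 with hn_def
  have hqm1 : 1 ≤ q ^ m := Nat.one_le_pow _ _ (by omega)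
  have hn : q ^ m = n + 1 := by omega
  rw [Set.eq_empty_iff_forall_notMem]
  rintro z ⟨⟨a, ha⟩, ⟨b, hb⟩⟩
  have hmod : x * q ^ a ≡ y * q ^ b [MOD n] := ha.symm.trans hb
  -- multiply both sides by q ^ (a * (m - 1)) to make the left exponent a multiple of m
  have hexp : a + a * (m - 1) = a * m := by
    cases m with
    | zero => omega
    | succ m' => simp [Nat.succ_sub_one]; ring
  have hmod2 : x * q ^ (a * m) ≡ y * q ^ (b + a * (m - 1)) [MOD n] := by
    have := hmod.mul_right (q ^ (a * (m - 1)))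
    rwa [mul_assoc, mul_assoc, ← pow_add, ← pow_add, hexp] at this
  have hmodx : x ≡ x * q ^ (a * m) [MOD n] := by
    have h1 : q ^ (a * m) ≡ q ^ (a * m % m) [MOD n] := pow_modeq q m n _ hn
    rw [Nat.mul_mod_left, pow_zero] at h1
    have := h1.mul_left x
    rw [mul_one] at this
    exact this.symm
  set J := b + a * (m - 1) with hJ_def
  set j := J % m with hj_def
  have hmody : y * q ^ J ≡ y * q ^ j [MOD n] := (pow_modeq q m n J hn).mul_left y
  have hmain : x ≡ y * q ^ j [MOD n] := (hmodx.trans hmod2).trans hmody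
  have hjm : j < m := Nat.mod_lt _ hm
  have hxn : x ≤ n := le_n_aux q m n x hq2 hm hn hx2 hxq
  have hyn : y ≤ n := le_n_aux q m n y hq2 hm hn hy2 hyq
  rcases Nat.eq_zero_or_pos j with hj0 | hjpos
  · -- j = 0 : x ≡ y [MOD n], both in [1, n], so x = y
    rw [hj0, pow_zero, mul_one] at hmain
    have hdvd : (n : ℤ) ∣ (y : ℤ) - (x : ℤ) := hmain.dvd
    have : ((y : ℤ) - (x : ℤ)) = 0 := by
      refine Int.eq_zero_of_dvd_of_natAbs_lt_natAbs hdvd ?_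
      simp only [Int.natAbs_natCast]
      omega
    exact hxy (by omega)
  · -- 1 ≤ j < m, so m ≥ 2
    have hm2 : 2 ≤ m := by omega
    set t := (m + 1) / 2 with ht_def
    have hx2' : x ≤ q ^ t := by omega
    have hy2' : y ≤ q ^ t := by omega
    rcases le_or_gt j (m - t) with hjle | hjgt
    · exact key_lemma q m t n x y j hq2 hm2 rfl hn hjpos hjle hx1 hx2' hy2' hxq hyq hmain
    · -- use the reversed congruence with i = m - j
      set i := m - j with hi_def
      have hi1 : 1 ≤ i := by omega
      have hile : i ≤ m - t := by omega
      have hmod3 : x * q ^ i ≡ y * q ^ (j + i) [MOD n] := by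
        have := hmain.mul_right (q ^ i)
        rwa [mul_assoc, ← pow_add] at this
      have hji : j + i = m := by omega
      have hmod4 : y * q ^ m ≡ y [MOD n] := by
        have h1 : q ^ m ≡ q ^ (m % m) [MOD n] := pow_modeq q m n m hn
        rw [Nat.mod_self, pow_zero] at h1
        have := h1.mul_left y
        rwa [mul_one] at this
      have hmain2 : y ≡ x * q ^ i [MOD n] := by
        rw [hji] at hmod3
        exact (hmod4.symm.trans hmod3.symm)
      exact key_lemma q m t n y x i hq2 hm2 rfl hn hi1 hile hy1 hy2' hx2' hyq hxq hmain2
end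

section
/- Let q be a prime power, m a positive integer, and n = q^m − 1. Let α be a primitive element of F_{q^m}, and for an integer δ with 2 ≤ δ ≤ q^{⌈m/2⌉} + 1 let C be the primitive, narrow-sense BCH code of designed distance δ, i.e. C = {c ∈ F_q^n : Σ_{i=0}^{n−1} c_i α^{ij} = 0 in F_{q^m} for every integer j with 1 ≤ j ≤ δ−1}. Then the dimension of C as an F_q-vector space equals q^m − 1 − m·⌈(δ−1)(1 − 1/q)⌉. -/
open Finset

private lemma bch_modeq_eq {n a b : ℕ} (h : a ≡ b [MOD n]) (ha1 : 1 ≤ a) (ha2 : a ≤ n)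
    (hb1 : 1 ≤ b) (hb2 : b ≤ n) : a = b := by
  unfold Nat.ModEq at h
  rcases eq_or_lt_of_le ha2 with rfl | ha2
  · rcases eq_or_lt_of_le hb2 with rfl | hb2
    · rfl
    · rw [Nat.mod_self, Nat.mod_eq_of_lt hb2] at h; omega
  · rcases eq_or_lt_of_le hb2 with rfl | hb2
    · rw [Nat.mod_self, Nat.mod_eq_of_lt ha2] at h; omega
    · rwa [Nat.mod_eq_of_lt ha2, Nat.mod_eq_of_lt hb2] at h

private lemma bch_stepA {q m : ℕ} (hq : 2 ≤ q) (hm : 0 < m) {j j' d : ℕ}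
    (hj1 : 1 ≤ j) (hjq : ¬ q ∣ j) (hjh : j ≤ q ^ ((m + 1) / 2))
    (hj'1 : 1 ≤ j') (hj'q : ¬ q ∣ j') (hj'h : j' ≤ q ^ ((m + 1) / 2))
    (hd : d < m) (h : j * q ^ d ≡ j' [MOD q ^ m - 1]) : j = j' ∧ d = 0 := by
  set h2 := (m + 1) / 2 with hh2
  set l := m / 2 with hl
  have hhl : h2 + l = m := by omega
  have hh1 : 1 ≤ h2 := by omega
  have hn1 : 1 ≤ q ^ m - 1 := by
    have : 2 ≤ q ^ m := le_trans hq (Nat.le_self_pow hm.ne' q)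
    omega
  have hqm : q ^ m - 1 + 1 = q ^ m := by
    have : 2 ≤ q ^ m := le_trans hq (Nat.le_self_pow hm.ne' q)
    omega
  have hjlt : j ≤ q ^ h2 - 1 := by
    rcases eq_or_lt_of_le hjh with rfl | hlt
    · exact absurd (dvd_pow_self q (by omega : h2 ≠ 0)) hjq
    · omega
  have hj'lt : j' ≤ q ^ h2 - 1 := by
    rcases eq_or_lt_of_le hj'h with rfl | hlt
    · exact absurd (dvd_pow_self q (by omega : h2 ≠ 0)) hj'q
    · omega
  have hpow1 : 1 ≤ q ^ l := Nat.one_le_pow _ _ (by omega)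
  rcases le_or_gt d l with hdl | hdl
  · -- small shift: both sides ≤ n
    have hb1 : j * q ^ d ≤ q ^ m - 1 := by
      calc j * q ^ d ≤ (q ^ h2 - 1) * q ^ l :=
            Nat.mul_le_mul hjlt (Nat.pow_le_pow_right (by omega) hdl)
        _ = q ^ h2 * q ^ l - q ^ l := by rw [Nat.sub_mul, one_mul]
        _ = q ^ m - q ^ l := by rw [← pow_add, hhl]
        _ ≤ q ^ m - 1 := by omega
    have hb2 : j' ≤ q ^ m - 1 := by
      have : q ^ h2 ≤ q ^ m := Nat.pow_le_pow_right (by omega) (by omega)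
      omega
    have heq : j * q ^ d = j' :=
      bch_modeq_eq h (Nat.one_le_iff_ne_zero.2 (by positivity)) hb1 hj'1 hb2
    have hd0 : d = 0 := by
      by_contra hd0
      exact hj'q (heq ▸ Dvd.dvd.mul_left (dvd_pow_self q hd0) j)
    subst hd0
    exact ⟨by simpa using heq, rfl⟩
  · -- big shift: transfer to the other side
    have hee1 : 1 ≤ m - d := by omega
    have heeh : m - d ≤ h2 - 1 := by omega
    have hmod : j ≡ j' * q ^ (m - d) [MOD q ^ m - 1] := by
      have h1 : j * q ^ d * q ^ (m - d) ≡ j' * q ^ (m - d) [MOD q ^ m - 1] := h.mul_right _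
      have h2' : j * q ^ d * q ^ (m - d) = j * q ^ m := by
        rw [mul_assoc, ← pow_add, Nat.add_sub_cancel' hd.le]
      have h3 : q ^ m ≡ 1 [MOD q ^ m - 1] := by
        have := (Nat.modEq_iff_dvd' (by omega : 1 ≤ q ^ m)).2 dvd_rfl
        exact this.symm
      calc j = j * 1 := (mul_one j).symm
        _ ≡ j * q ^ m [MOD q ^ m - 1] := (h3.symm).mul_left j
        _ = j * q ^ d * q ^ (m - d) := h2'.symm
        _ ≡ j' * q ^ (m - d) [MOD q ^ m - 1] := h1
    have hb : j' * q ^ (m - d) ≤ q ^ m - 1 := by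
      have h2h : 2 * h2 - 1 ≤ m := by omega
      have hp1 : 1 ≤ q ^ (h2 - 1) := Nat.one_le_pow _ _ (by omega)
      calc j' * q ^ (m - d) ≤ (q ^ h2 - 1) * q ^ (h2 - 1) :=
            Nat.mul_le_mul hj'lt (Nat.pow_le_pow_right (by omega) heeh)
        _ = q ^ h2 * q ^ (h2 - 1) - q ^ (h2 - 1) := by rw [Nat.sub_mul, one_mul]
        _ = q ^ (2 * h2 - 1) - q ^ (h2 - 1) := by rw [← pow_add]; congr 2; omega
        _ ≤ q ^ m - 1 := by
            have : q ^ (2 * h2 - 1) ≤ q ^ m := Nat.pow_le_pow_right (by omega) h2h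
            omega
    have hb' : j ≤ q ^ m - 1 := by
      have : q ^ h2 ≤ q ^ m := Nat.pow_le_pow_right (by omega) (by omega)
      omega
    have heq : j = j' * q ^ (m - d) :=
      bch_modeq_eq hmod hj1 hb' (Nat.one_le_iff_ne_zero.2 (by positivity)) hb
    exact absurd (heq ▸ Dvd.dvd.mul_left (dvd_pow_self q (by omega : m - d ≠ 0)) j') hjq

private lemma bch_stepInj {q m : ℕ} (hq : 2 ≤ q) (hm : 0 < m) {j a j' b : ℕ}
    (hj1 : 1 ≤ j) (hjq : ¬ q ∣ j) (hjh : j ≤ q ^ ((m + 1) / 2))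
    (hj'1 : 1 ≤ j') (hj'q : ¬ q ∣ j') (hj'h : j' ≤ q ^ ((m + 1) / 2))
    (ha : a < m) (hb : b < m)
    (h : j * q ^ a ≡ j' * q ^ b [MOD q ^ m - 1]) : j = j' ∧ a = b := by
  have hcop : Nat.Coprime q (q ^ m - 1) := by
    have h1 : Nat.Coprime (q ^ m) (q ^ m - 1) := by
      have h2 : 2 ≤ q ^ m := le_trans hq (Nat.le_self_pow hm.ne' q)
      have hcs : Nat.Coprime (q ^ m - 1 + 1) (q ^ m - 1) := by
        have hg : Nat.gcd (q ^ m - 1 + 1) (q ^ m - 1) = Nat.gcd 1 (q ^ m - 1) := by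
          have := Nat.gcd_add_self_left 1 (q ^ m - 1)
          simpa [add_comm] using this
        simpa [Nat.Coprime] using hg
      rwa [Nat.sub_add_cancel (by omega)] at hcs
    exact (Nat.coprime_pow_left_iff hm q (q ^ m - 1)).1 h1
  rcases le_total b a with hba | hab
  · have h' : j * q ^ (a - b) * q ^ b ≡ j' * q ^ b [MOD q ^ m - 1] := by
      rwa [mul_assoc, ← pow_add, Nat.sub_add_cancel hba]
    have h'' : j * q ^ (a - b) ≡ j' [MOD q ^ m - 1] :=
      Nat.ModEq.cancel_right_of_coprime (by simpa using ((hcop.pow_left b).symm).gcd_eq_one) h'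
    obtain ⟨hjj, hd⟩ := bch_stepA hq hm hj1 hjq hjh hj'1 hj'q hj'h (by omega) h''
    exact ⟨hjj, by omega⟩
  · have h' : j' * q ^ (b - a) * q ^ a ≡ j * q ^ a [MOD q ^ m - 1] := by
      rw [mul_assoc, ← pow_add, Nat.sub_add_cancel hab]; exact h.symm
    have h'' : j' * q ^ (b - a) ≡ j [MOD q ^ m - 1] :=
      Nat.ModEq.cancel_right_of_coprime (by simpa using ((hcop.pow_left a).symm).gcd_eq_one) h'
    obtain ⟨hjj, hd⟩ := bch_stepA hq hm hj'1 hj'q hj'h hj1 hjq hjh (by omega) h''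
    exact ⟨hjj.symm, by omega⟩

private lemma bch_qm_modeq {q m : ℕ} (hq : 2 ≤ q) (hm : 0 < m) :
    q ^ m ≡ 1 [MOD q ^ m - 1] := by
  have h2 : 2 ≤ q ^ m := le_trans hq (Nat.le_self_pow hm.ne' q)
  exact ((Nat.modEq_iff_dvd' (by omega)).2 dvd_rfl).symm

private lemma bch_mem_S {q m δ : ℕ} (hq : 2 ≤ q) (hm : 0 < m) :
    ∀ j, 1 ≤ j → j ≤ δ - 1 → ∀ k, k < m →
      (j * q ^ k) % (q ^ m - 1) ∈
        ((((Finset.Ico 1 δ).filter (fun j => ¬ q ∣ j)) ×ˢ Finset.range m).image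
          (fun pr => pr.1 * q ^ pr.2 % (q ^ m - 1))) := by
  intro j
  induction j using Nat.strong_induction_on with
  | _ j ih =>
    intro hj1 hj2 k hk
    by_cases hdvd : q ∣ j
    · obtain ⟨j', rfl⟩ := hdvd
      have hj'1 : 1 ≤ j' := by
        rcases Nat.eq_zero_or_pos j' with rfl | h; · simp at hj1
        · exact h
      have hj'lt : j' < q * j' := by
        calc j' = 1 * j' := (one_mul j').symm
          _ < q * j' := (Nat.mul_lt_mul_right hj'1).2 (by omega)
      have hj'2 : j' ≤ δ - 1 := le_trans hj'lt.le hj2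
      rcases lt_or_ge (k + 1) m with hk1 | hk1
      · have := ih j' hj'lt hj'1 hj'2 (k + 1) hk1
        rw [show q * j' * q ^ k = j' * q ^ (k + 1) by ring]
        exact this
      · have hkm : k + 1 = m := by omega
        have hmem := ih j' hj'lt hj'1 hj'2 0 hm
        have heq : (q * j' * q ^ k) % (q ^ m - 1) = (j' * q ^ 0) % (q ^ m - 1) := by
          have h1 : q * j' * q ^ k = j' * q ^ m := by rw [← hkm]; ring
          have h3 : j' * q ^ m ≡ j' * 1 [MOD q ^ m - 1] :=
            (bch_qm_modeq hq hm).mul_left j'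
          rw [h1]
          simpa [Nat.ModEq] using h3
        rw [heq]
        exact hmem
    · exact Finset.mem_image.2 ⟨(j, k), Finset.mem_product.2
        ⟨Finset.mem_filter.2 ⟨Finset.mem_Ico.2 ⟨hj1, by omega⟩, hdvd⟩,
          Finset.mem_range.2 hk⟩, rfl⟩

private lemma bch_card_R {q δ : ℕ} (hq : 2 ≤ q) :
    ((Finset.Ico 1 δ).filter (fun j => ¬ q ∣ j)).card = (δ - 1) - (δ - 1) / q := by
  have hsplit := Finset.card_filter_add_card_filter_not
    (s := Finset.Ico 1 δ) (p := fun j => q ∣ j)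
  have hIco : (Finset.Ico 1 δ).card = δ - 1 := by rw [Nat.card_Ico]
  have hdvd : ((Finset.Ico 1 δ).filter (fun j => q ∣ j)).card = (δ - 1) / q := by
    have himg : (Finset.Ico 1 δ).filter (fun j => q ∣ j) =
        ((Finset.range (δ - 1)).filter (fun e => q ∣ e + 1)).image (· + 1) := by
      ext a
      simp only [Finset.mem_filter, Finset.mem_image, Finset.mem_Ico, Finset.mem_range]
      constructor
      · rintro ⟨⟨h1, h2⟩, h3⟩
        exact ⟨a - 1, ⟨by omega, by rwa [Nat.sub_add_cancel h1]⟩, by omega⟩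
      · rintro ⟨b, ⟨hb1, hb2⟩, rfl⟩
        exact ⟨⟨by omega, by omega⟩, hb2⟩
    rw [himg, Finset.card_image_of_injective _ (fun a b h => by omega),
      Nat.card_multiples]
  omega

private lemma bch_coprime {q m : ℕ} (hq : 2 ≤ q) (hm : 0 < m) :
    Nat.Coprime q (q ^ m - 1) := by
  have h2 : 2 ≤ q ^ m := le_trans hq (Nat.le_self_pow hm.ne' q)
  have h1 : Nat.Coprime (q ^ m) (q ^ m - 1) := by
    have hcs : Nat.Coprime (q ^ m - 1 + 1) (q ^ m - 1) := by
      have hg : Nat.gcd (q ^ m - 1 + 1) (q ^ m - 1) = Nat.gcd 1 (q ^ m - 1) := by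
        have := Nat.gcd_add_self_left 1 (q ^ m - 1)
        simpa [add_comm] using this
      simpa [Nat.Coprime] using hg
    rwa [Nat.sub_add_cancel (by omega)] at hcs
  exact (Nat.coprime_pow_left_iff hm q (q ^ m - 1)).1 h1

private lemma bch_card_S {q m δ : ℕ} (hq : 2 ≤ q) (hm : 0 < m)
    (hδ2 : δ ≤ q ^ ((m + 1) / 2) + 1) :
    (((((Finset.Ico 1 δ).filter (fun j => ¬ q ∣ j)) ×ˢ Finset.range m)).image
        (fun pr => pr.1 * q ^ pr.2 % (q ^ m - 1))).card = m * ((δ - 1) - (δ - 1) / q) := by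
  rw [Finset.card_image_of_injOn, Finset.card_product, Finset.card_range, bch_card_R hq,
    mul_comm]
  intro x hx y hy hxy
  simp only [Finset.mem_coe, Finset.mem_product, Finset.mem_filter, Finset.mem_Ico,
    Finset.mem_range] at hx hy
  obtain ⟨⟨⟨hx1, hx2⟩, hx3⟩, hx4⟩ := hx
  obtain ⟨⟨⟨hy1, hy2⟩, hy3⟩, hy4⟩ := hy
  have h := bch_stepInj hq hm hx1 hx3 (by omega : x.1 ≤ q ^ ((m + 1) / 2))
    hy1 hy3 (by omega) hx4 hy4 hxy
  exact Prod.ext h.1 h.2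

set_option maxHeartbeats 2000000 in
open Polynomial in
/-- A primitive, narrow-sense BCH code of length `q^m - 1` over `F_q` with
designed distance `2 ≤ δ ≤ q^⌈m/2⌉ + 1` has dimension
`q^m - 1 - m·⌈(δ-1)(1-1/q)⌉`, where `⌈(δ-1)(1-1/q)⌉ = (δ-1) - ⌊(δ-1)/q⌋`. -/
theorem bch_dimension
    (q m : ℕ) (hq : IsPrimePow q) (hm : 0 < m)
    (F E : Type*) [Field F] [Fintype F] [Field E] [Fintype E] [Algebra F E]
    (hF : Fintype.card F = q) (hE : Fintype.card E = q ^ m)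
    (α : E) (hα : orderOf α = q ^ m - 1)
    (δ : ℕ) (hδ1 : 2 ≤ δ) (hδ2 : δ ≤ q ^ ((m + 1) / 2) + 1) :
    Module.finrank F (bchCode F (q ^ m - 1) α δ) =
      q ^ m - 1 - m * ((δ - 1) - (δ - 1) / q) := by
  classical
  have hq2 : 2 ≤ q := hq.two_le
  obtain ⟨p, e, hpp, he, hpe⟩ := hq
  have hp : p.Prime := hpp.nat_prime
  haveI : Fact p.Prime := ⟨hp⟩
  have hqm2 : 2 ≤ q ^ m := le_trans hq2 (Nat.le_self_pow hm.ne' q)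
  have hn1 : 1 ≤ q ^ m - 1 := by omega
  -- characteristic of F and E is p
  haveI hFp : CharP F p := by
    obtain ⟨p', hcp'⟩ := CharP.exists F
    haveI := hcp'
    have hp' : p'.Prime := CharP.char_is_prime F p'
    obtain ⟨k, hk⟩ := FiniteField.card F p'
    have hpq : p ∣ q := hpe ▸ dvd_pow_self p he.ne'
    have hppk : p ∣ p' ^ (k : ℕ) := by rw [← hk.2, hF]; exact hpq
    have : p = p' := (Nat.prime_dvd_prime_iff_eq hp hp').1 (hp.dvd_of_dvd_pow hppk)
    rwa [this]
  haveI hEp : CharP E p := charP_of_injective_algebraMap (algebraMap F E).injective p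
  haveI : ExpChar E p := .prime hp
  -- Frobenius fixes the base field
  have hfix : ∀ y : F, (algebraMap F E y) ^ q = algebraMap F E y := by
    intro y
    rw [← map_pow]
    congr 1
    have := FiniteField.pow_card y
    rwa [hF] at this
  have hfixk : ∀ (k : ℕ) (y : F), (algebraMap F E y) ^ q ^ k = algebraMap F E y := by
    intro k y
    induction k with
    | zero => simp
    | succ k ihk => rw [pow_succ, pow_mul, ihk, hfix]
  -- facts about α
  have hα1 : α ^ (q ^ m - 1) = 1 := hα ▸ pow_orderOf_eq_one α
  have hα0 : α ≠ 0 := by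
    intro h0
    rw [h0, zero_pow (by omega)] at hα1
    exact one_ne_zero hα1.symm
  have hαmod : ∀ a : ℕ, α ^ (a % (q ^ m - 1)) = α ^ a := by
    intro a
    conv_lhs => rw [← hα]
    exact pow_mod_orderOf _ _
  have hαinj : ∀ s < q ^ m - 1, ∀ t < q ^ m - 1, α ^ s = α ^ t → s = t := by
    have key : ∀ s t : ℕ, s ≤ t → t < q ^ m - 1 → α ^ s = α ^ t → s = t := by
      intro s t hst ht hEq
      have h2 : α ^ s * α ^ (t - s) = α ^ s * 1 := by
        rw [mul_one, ← pow_add, Nat.add_sub_cancel' hst]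
        exact hEq.symm
      have h3 : α ^ (t - s) = 1 := mul_left_cancel₀ (pow_ne_zero s hα0) h2
      have h4 : orderOf α ∣ t - s := orderOf_dvd_of_pow_eq_one h3
      rw [hα] at h4
      rcases Nat.eq_zero_or_pos (t - s) with h5 | h5
      · omega
      · have := Nat.le_of_dvd h5 h4
        omega
    intro s hs t ht hEq
    rcases le_total s t with h | h
    · exact key s t h ht hEq
    · exact (key t s h hs hEq.symm).symm
  -- the defining set S of exponents
  set S : Finset ℕ := ((((Finset.Ico 1 δ).filter (fun j => ¬ q ∣ j)) ×ˢ Finset.range m)).image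
    (fun pr => pr.1 * q ^ pr.2 % (q ^ m - 1)) with hSdef
  have hScard : S.card = m * ((δ - 1) - (δ - 1) / q) := bch_card_S hq2 hm hδ2
  have hSlt : ∀ s ∈ S, s < q ^ m - 1 := by
    intro s hs
    obtain ⟨pr, _, rfl⟩ := Finset.mem_image.1 hs
    exact Nat.mod_lt _ (by omega)
  have hSmem : ∀ j, 1 ≤ j → j ≤ δ - 1 → ∀ k, k < m →
      (j * q ^ k) % (q ^ m - 1) ∈ S := bch_mem_S hq2 hm
  have hNn : S.card ≤ q ^ m - 1 := by
    have hsub : S ⊆ Finset.range (q ^ m - 1) := fun s hs => Finset.mem_range.2 (hSlt s hs)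
    simpa using Finset.card_le_card hsub
  have hSmul : ∀ s ∈ S, (s * q) % (q ^ m - 1) ∈ S := by
    intro s hs
    obtain ⟨⟨j, k⟩, hmem, rfl⟩ := Finset.mem_image.1 hs
    obtain ⟨hjR, hk⟩ := Finset.mem_product.1 hmem
    obtain ⟨hjI, hjq⟩ := Finset.mem_filter.1 hjR
    obtain ⟨hj1, hjδ⟩ := Finset.mem_Ico.1 hjI
    have hk' := Finset.mem_range.1 hk
    have h1 : ((j * q ^ k % (q ^ m - 1)) * q) % (q ^ m - 1) = (j * q ^ (k + 1)) % (q ^ m - 1) := by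
      have := (Nat.mod_modEq (j * q ^ k) (q ^ m - 1)).mul_right q
      rw [pow_succ, ← mul_assoc]
      exact this
    rcases lt_or_ge (k + 1) m with h | h
    · rw [h1]
      exact hSmem j hj1 (by omega) (k + 1) h
    · have hkm : k + 1 = m := by omega
      have h2 : (j * q ^ (k + 1)) % (q ^ m - 1) = (j * q ^ 0) % (q ^ m - 1) := by
        rw [hkm]
        simpa [Nat.ModEq] using (bch_qm_modeq hq2 hm).mul_left j
      rw [h1, h2]
      exact hSmem j hj1 (by omega) 0 hm
  have hσinj : Set.InjOn (fun s => s * q % (q ^ m - 1)) S := by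
    intro s hs t ht hst
    have h1 : s * q ≡ t * q [MOD q ^ m - 1] := hst
    have h2 : s ≡ t [MOD q ^ m - 1] :=
      Nat.ModEq.cancel_right_of_coprime
        (by simpa using (bch_coprime hq2 hm).symm.gcd_eq_one) h1
    have hs' := hSlt s hs
    have ht' := hSlt t ht
    unfold Nat.ModEq at h2
    rwa [Nat.mod_eq_of_lt hs', Nat.mod_eq_of_lt ht'] at h2
  -- the polynomial g and its descent g₀
  set g : Polynomial E := ∏ s ∈ S, (X - C (α ^ s)) with hgdef
  have hgmonic : g.Monic := monic_prod_of_monic _ _ (fun s _ => monic_X_sub_C _)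
  have hgdeg : g.natDegree = S.card := by
    rw [hgdef, natDegree_prod _ _ (fun s _ => X_sub_C_ne_zero _),
      Finset.card_eq_sum_ones]
    exact Finset.sum_congr rfl fun s _ => natDegree_X_sub_C _
  -- Frobenius on coefficients fixes g
  have hφ : ∀ (k : ℕ) (x : E), iterateFrobenius E p (e * k) x = x ^ q ^ k := by
    intro k x
    rw [iterateFrobenius_def, pow_mul, hpe]
  have hmapg : g.map (iterateFrobenius E p (e * 1)) = g := by
    have h1 : g.map (iterateFrobenius E p (e * 1)) =
        ∏ s ∈ S, (X - C (α ^ (s * q % (q ^ m - 1)))) := by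
      rw [hgdef, Polynomial.map_prod]
      refine Finset.prod_congr rfl fun s hs => ?_
      rw [Polynomial.map_sub, Polynomial.map_X, Polynomial.map_C, hφ, ← pow_mul, hαmod]
      simp
    have himg : S.image (fun s => s * q % (q ^ m - 1)) = S := by
      apply Finset.eq_of_subset_of_card_le
      · intro x hx
        obtain ⟨s, hs, rfl⟩ := Finset.mem_image.1 hx
        exact hSmul s hs
      · rw [Finset.card_image_of_injOn hσinj]
    rw [h1]
    calc ∏ s ∈ S, (X - C (α ^ (s * q % (q ^ m - 1))))
        = ∏ x ∈ S.image (fun s => s * q % (q ^ m - 1)), (X - C (α ^ x)) :=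
          (Finset.prod_image (f := fun x => (X - C (α ^ x)))
            (fun a ha b hb h => hσinj ha hb h)).symm
      _ = g := by rw [himg, hgdef]
  have hcoef : ∀ i, (g.coeff i) ^ q = g.coeff i := by
    intro i
    have h1 : (g.map (iterateFrobenius E p (e * 1))).coeff i = g.coeff i := by rw [hmapg]
    rw [Polynomial.coeff_map, hφ] at h1
    simpa using h1
  -- descend g to F
  have hrange : ∀ x : E, x ^ q = x → x ∈ Set.range (algebraMap F E) := by
    intro x hx
    have hPne : (X ^ q - X : Polynomial E) ≠ 0 :=
      FiniteField.X_pow_card_sub_X_ne_zero E (by omega)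
    have hTsub : (Finset.univ.filter (fun y : E => y ^ q = y)) ⊆
        (X ^ q - X : Polynomial E).roots.toFinset := by
      intro y hy
      rw [Multiset.mem_toFinset, mem_roots hPne]
      have := (Finset.mem_filter.1 hy).2
      simp [IsRoot, sub_eq_zero, this]
    have hTcard : (Finset.univ.filter (fun y : E => y ^ q = y)).card ≤ q := by
      calc (Finset.univ.filter (fun y : E => y ^ q = y)).card
          ≤ (X ^ q - X : Polynomial E).roots.toFinset.card := Finset.card_le_card hTsub
        _ ≤ Multiset.card (X ^ q - X : Polynomial E).roots := Multiset.toFinset_card_le _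
        _ ≤ (X ^ q - X : Polynomial E).natDegree := card_roots' _
        _ = q := FiniteField.X_pow_card_sub_X_natDegree_eq E (by omega)
    have hsub : (Finset.univ.image (algebraMap F E)) ⊆
        (Finset.univ.filter (fun y : E => y ^ q = y)) := by
      intro y hy
      obtain ⟨z, _, rfl⟩ := Finset.mem_image.1 hy
      exact Finset.mem_filter.2 ⟨Finset.mem_univ _, hfix z⟩
    have himgcard : (Finset.univ.image (algebraMap F E)).card = q := by
      rw [Finset.card_image_of_injective _ (algebraMap F E).injective,
        Finset.card_univ, hF]
    have heq : Finset.univ.image (algebraMap F E) =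
        Finset.univ.filter (fun y : E => y ^ q = y) :=
      Finset.eq_of_subset_of_card_le hsub (by omega)
    have hxmem : x ∈ Finset.univ.filter (fun y : E => y ^ q = y) :=
      Finset.mem_filter.2 ⟨Finset.mem_univ x, hx⟩
    rw [← heq] at hxmem
    obtain ⟨y, _, hy⟩ := Finset.mem_image.1 hxmem
    exact ⟨y, hy⟩
  have hglift : g ∈ Polynomial.lifts (algebraMap F E) := by
    rw [Polynomial.lifts_iff_coeff_lifts]
    intro i
    exact hrange _ (hcoef i)
  obtain ⟨g₀, hg₀map, hg₀deg, hg₀monic⟩ :=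
    Polynomial.lifts_and_degree_eq_and_monic hglift hgmonic
  have hg₀ne : g₀ ≠ 0 := hg₀monic.ne_zero
  have hg₀deg' : g₀.natDegree = S.card := by
    have h1 : g₀.natDegree = g.natDegree := natDegree_eq_of_degree_eq hg₀deg
    rw [h1, hgdeg]
  -- the linear map
  have hmulmem : ∀ pp : degreeLT F (q ^ m - 1 - S.card),
      g₀ * (pp : Polynomial F) ∈ degreeLT F (q ^ m - 1) := by
    rintro ⟨pp, hpp⟩
    rw [mem_degreeLT]
    by_cases h0 : pp = 0
    · simp only [h0, mul_zero, degree_zero]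
      exact WithBot.bot_lt_coe _
    · rw [mem_degreeLT, ← natDegree_lt_iff_degree_lt h0] at hpp
      rw [← natDegree_lt_iff_degree_lt (mul_ne_zero hg₀ne h0), natDegree_mul hg₀ne h0,
        hg₀deg']
      omega
  set Φ : degreeLT F (q ^ m - 1 - S.card) →ₗ[F] (Fin (q ^ m - 1) → F) :=
    { toFun := fun pp => fun i => (g₀ * (pp : Polynomial F)).coeff i
      map_add' := by
        intro a b
        funext i
        simp [mul_add]
      map_smul' := by
        intro r a
        funext i
        simp [Algebra.mul_smul_comm] } with hΦdef
  have hΦapp : ∀ (pp : degreeLT F (q ^ m - 1 - S.card)) (i : Fin (q ^ m - 1)),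
      Φ pp i = (g₀ * (pp : Polynomial F)).coeff i := fun pp i => rfl
  have hΦinj : Function.Injective Φ := by
    intro a b hab
    have h1 : g₀ * (a : Polynomial F) = g₀ * (b : Polynomial F) := by
      have ha' : (g₀ * (a : Polynomial F)).degree < ((q ^ m - 1 : ℕ) : WithBot ℕ) :=
        mem_degreeLT.1 (hmulmem a)
      have hb' : (g₀ * (b : Polynomial F)).degree < ((q ^ m - 1 : ℕ) : WithBot ℕ) :=
        mem_degreeLT.1 (hmulmem b)
      ext i
      by_cases hi : i < q ^ m - 1
      · have := congrFun hab ⟨i, hi⟩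
        rwa [hΦapp, hΦapp] at this
      · have hle : ((q ^ m - 1 : ℕ) : WithBot ℕ) ≤ (i : WithBot ℕ) := by
          exact_mod_cast (by omega : q ^ m - 1 ≤ i)
        rw [Polynomial.coeff_eq_zero_of_degree_lt (lt_of_lt_of_le ha' hle),
          Polynomial.coeff_eq_zero_of_degree_lt (lt_of_lt_of_le hb' hle)]
    exact Subtype.ext (mul_left_cancel₀ hg₀ne h1)
  -- evaluation bridge
  have hbridge : ∀ (P : Polynomial F) (hP : P ∈ degreeLT F (q ^ m - 1)) (x : E),
      (P.map (algebraMap F E)).eval x =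
        ∑ i : Fin (q ^ m - 1), algebraMap F E (P.coeff i) * x ^ (i : ℕ) := by
    intro P hP x
    have hPE : P.map (algebraMap F E) ∈ degreeLT E (q ^ m - 1) := by
      rw [mem_degreeLT] at hP ⊢
      exact lt_of_le_of_lt degree_map_le hP
    rw [eval_eq_sum_degreeLTEquiv hPE x]
    refine Finset.sum_congr rfl fun i _ => ?_
    congr 1
    simp [degreeLTEquiv, Polynomial.coeff_map]
  -- the key identity of submodules
  have hrangeC : LinearMap.range Φ = bchCode F (q ^ m - 1) α δ := by
    apply le_antisymm
    · rintro _ ⟨pp, rfl⟩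
      intro j hj1 hj2
      have hsum : ∑ i : Fin (q ^ m - 1), algebraMap F E (Φ pp i) * α ^ ((i : ℕ) * j) =
          ((g₀ * (pp : Polynomial F)).map (algebraMap F E)).eval (α ^ j) := by
        rw [hbridge _ (hmulmem pp)]
        refine Finset.sum_congr rfl fun i _ => ?_
        rw [hΦapp, mul_comm (i : ℕ) j, pow_mul]
      rw [hsum, Polynomial.map_mul, hg₀map, eval_mul]
      have hjS : j % (q ^ m - 1) ∈ S := by
        have := hSmem j hj1 hj2 0 hm
        simpa using this
      have hgz : g.eval (α ^ j) = 0 := by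
        rw [hgdef, eval_prod]
        apply Finset.prod_eq_zero hjS
        rw [eval_sub, eval_X, eval_C, hαmod, sub_self]
      rw [hgz, zero_mul]
    · intro c hc
      set P := (Polynomial.degreeLTEquiv F (q ^ m - 1)).symm c with hPdef
      have hcoeffP : ∀ i : Fin (q ^ m - 1), (P : Polynomial F).coeff i = c i := by
        intro i
        have := (Polynomial.degreeLTEquiv F (q ^ m - 1)).apply_symm_apply c
        exact congrFun this i
      have heval0 : ∀ j, 1 ≤ j → j ≤ δ - 1 →
          ((P : Polynomial F).map (algebraMap F E)).eval (α ^ j) = 0 := by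
        intro j h1 h2
        rw [hbridge _ P.2]
        have := hc j h1 h2
        rw [← this]
        refine Finset.sum_congr rfl fun i _ => ?_
        rw [hcoeffP, mul_comm (i : ℕ) j, pow_mul]
      have hevalS : ∀ s ∈ S, ((P : Polynomial F).map (algebraMap F E)).eval (α ^ s) = 0 := by
        intro s hs
        obtain ⟨⟨j, k⟩, hmem, rfl⟩ := Finset.mem_image.1 hs
        obtain ⟨hjR, hk⟩ := Finset.mem_product.1 hmem
        obtain ⟨hjI, hjq⟩ := Finset.mem_filter.1 hjR
        obtain ⟨hj1, hjδ⟩ := Finset.mem_Ico.1 hjI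
        have hPmap : (((P : Polynomial F).map (algebraMap F E)).map
            (iterateFrobenius E p (e * k))) = (P : Polynomial F).map (algebraMap F E) := by
          rw [Polynomial.map_map]
          congr 1
          ext y
          simp only [RingHom.coe_comp, Function.comp_apply]
          rw [hφ]
          exact hfixk k y
        calc ((P : Polynomial F).map (algebraMap F E)).eval (α ^ (j * q ^ k % (q ^ m - 1)))
            = ((P : Polynomial F).map (algebraMap F E)).eval
                (iterateFrobenius E p (e * k) (α ^ j)) := by
              rw [hφ, hαmod, pow_mul]
          _ = (((P : Polynomial F).map (algebraMap F E)).map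
                (iterateFrobenius E p (e * k))).eval
                (iterateFrobenius E p (e * k) (α ^ j)) := by rw [hPmap]
          _ = iterateFrobenius E p (e * k)
                (((P : Polynomial F).map (algebraMap F E)).eval (α ^ j)) := by
              rw [Polynomial.eval_map, Polynomial.eval₂_at_apply]
          _ = 0 := by rw [heval0 j hj1 (by omega), map_zero]
      have hdvdE : g ∣ (P : Polynomial F).map (algebraMap F E) := by
        rw [hgdef]
        apply Finset.prod_dvd_of_coprime
        · intro s hs t ht hst
          apply Polynomial.isCoprime_X_sub_C_of_isUnit_sub
          have hne : α ^ (s : ℕ) ≠ α ^ (t : ℕ) := fun hEq =>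
            hst (hαinj s (hSlt s hs) t (hSlt t ht) hEq)
          exact (sub_ne_zero.2 hne).isUnit
        · intro s hs
          rw [Polynomial.dvd_iff_isRoot]
          exact hevalS s hs
      have hdvdF : g₀ ∣ (P : Polynomial F) := by
        rw [← Polynomial.map_dvd_map' (algebraMap F E), hg₀map]
        exact hdvdE
      obtain ⟨pq, hpq⟩ := hdvdF
      have hpqmem : pq ∈ degreeLT F (q ^ m - 1 - S.card) := by
        rw [mem_degreeLT]
        by_cases hpq0 : pq = 0
        · simp only [hpq0, degree_zero]
          exact WithBot.bot_lt_coe _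
        · have hPne : (P : Polynomial F) ≠ 0 := by
            rw [hpq]
            exact mul_ne_zero hg₀ne hpq0
          have hdegP : (P : Polynomial F).natDegree < q ^ m - 1 := by
            have := mem_degreeLT.1 P.2
            rwa [← natDegree_lt_iff_degree_lt hPne] at this
          have hsplit : (P : Polynomial F).natDegree = g₀.natDegree + pq.natDegree := by
            rw [hpq, natDegree_mul hg₀ne hpq0]
          rw [← natDegree_lt_iff_degree_lt hpq0]
          omega
      refine ⟨⟨pq, hpqmem⟩, ?_⟩
      funext i
      rw [hΦapp]
      show (g₀ * pq).coeff i = c i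
      rw [← hpq]
      exact hcoeffP i
  -- conclude
  rw [← hrangeC, LinearMap.finrank_range_of_inj hΦinj]
  have hfr : Module.finrank F (degreeLT F (q ^ m - 1 - S.card)) = q ^ m - 1 - S.card := by
    rw [LinearEquiv.finrank_eq (Polynomial.degreeLTEquiv F (q ^ m - 1 - S.card))]
    simp
  rw [hfr, hScard]
end

section
/- Let q be a prime power, m a positive integer, and n = q^m − 1. Let α be a primitive element of F_{q^m}, and for an integer δ with 2 ≤ δ ≤ q^{⌈m/2⌉} + 1 let C be the primitive, narrow-sense BCH code of designed distance δ, i.e. C = {c ∈ F_q^n : Σ_{i=0}^{n−1} c_i α^{ij} = 0 for all 1 ≤ j ≤ δ−1}. If Σ_{i=0}^{⌊(δ+1)/2⌋} binom(q^m − 1, i)(q−1)^i > q^{m·⌈(δ−1)(1−1/q)⌉}, then the minimum distance d of C satisfies d = δ or d = δ + 1; if, furthermore, δ ≡ 0 (mod q), then d = δ + 1. -/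
open Finset

lemma pow_inj_of_orderOf {E : Type*} [Field E] {n : ℕ} {α : E}
    (hα : orderOf α = n) (hn : 0 < n) (hα0 : α ≠ 0) :
    ∀ a b : ℕ, a < n → b < n → α ^ a = α ^ b → a = b := by
  have key : ∀ a b : ℕ, a ≤ b → b < n → α ^ a = α ^ b → a = b := by
    intro a b hab hbn h
    by_contra hne
    have h3 : α ^ a * α ^ (b - a) = α ^ a * 1 := by
      rw [mul_one, ← pow_add, show a + (b - a) = b from by omega]
      exact h.symm
    have h4 : α ^ (b - a) = 1 := mul_left_cancel₀ (pow_ne_zero a hα0) h3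
    have h5 := orderOf_dvd_of_pow_eq_one h4
    rw [hα] at h5
    have := Nat.le_of_dvd (by omega) h5
    omega
  intro a b ha hb h
  rcases le_total a b with hab | hab
  · exact key a b hab hb h
  · exact (key b a hab ha h.symm).symm

lemma bch_bound {F E : Type*} [Field F] [DecidableEq F] [Field E] [Algebra F E]
    {n : ℕ} {α : E} (hα : orderOf α = n) (hn : 0 < n)
    {c : Fin n → F} (hc : c ≠ 0) {D : ℕ}
    (hcheck : ∀ j : ℕ, 1 ≤ j → j ≤ D →
      ∑ i : Fin n, algebraMap F E (c i) * α ^ ((i : ℕ) * j) = 0) :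
    D < hammingNorm c := by
  classical
  by_contra hw
  push_neg at hw
  have hα0 : α ≠ 0 := by
    rintro rfl
    have h1 : (0 : E) ^ orderOf (0 : E) = 1 := pow_orderOf_eq_one 0
    rw [hα, zero_pow hn.ne'] at h1
    exact zero_ne_one h1
  set w := hammingNorm c with hwdef
  set S : Finset (Fin n) := univ.filter (fun i => c i ≠ 0) with hS
  have hScard : S.card = w := rfl
  have hw1 : 1 ≤ w := by
    rcases Function.ne_iff.mp hc with ⟨i, hi⟩
    have hiS : i ∈ S := by
      simp only [hS, mem_filter, mem_univ, true_and]
      simpa using hi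
    have := Finset.card_pos.mpr ⟨i, hiS⟩
    omega
  set e := S.orderIsoOfFin hScard with he
  set v : Fin w → E := fun k => α ^ ((e k : Fin n) : ℕ) with hv
  have hvinj : Function.Injective v := by
    intro a b hab
    have : ((e a : Fin n) : ℕ) = ((e b : Fin n) : ℕ) :=
      pow_inj_of_orderOf hα hn hα0 _ _ (e a : Fin n).2 (e b : Fin n).2 hab
    exact e.injective (Subtype.ext (Fin.ext this))
  set A : Matrix (Fin w) (Fin w) E := fun j k => v k ^ ((j : ℕ) + 1) with hA
  set u : Fin w → E := fun k => algebraMap F E (c (e k)) with hu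
  have hAu : A.mulVec u = 0 := by
    funext j
    have hsum := hcheck ((j : ℕ) + 1) (by omega) (by have := j.2; omega)
    calc A.mulVec u j = ∑ k : Fin w, v k ^ ((j : ℕ) + 1) * u k := rfl
      _ = ∑ k : Fin w, algebraMap F E (c (e k)) * α ^ (((e k : Fin n) : ℕ) * ((j : ℕ) + 1)) := by
          apply Finset.sum_congr rfl
          intro k _
          rw [hv, hu]
          show (α ^ ((e k : Fin n) : ℕ)) ^ ((j : ℕ) + 1) * _ = _
          rw [← pow_mul, mul_comm ((e k : Fin n) : ℕ) _, pow_mul, ← pow_mul,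
            mul_comm ((j : ℕ) + 1) _, mul_comm]
      _ = ∑ i ∈ S, algebraMap F E (c i) * α ^ ((i : ℕ) * ((j : ℕ) + 1)) := by
          rw [← Finset.sum_coe_sort S]
          exact Equiv.sum_comp e.toEquiv
            (fun i => algebraMap F E (c (i : Fin n)) * α ^ (((i : Fin n) : ℕ) * ((j : ℕ) + 1)))
      _ = ∑ i : Fin n, algebraMap F E (c i) * α ^ ((i : ℕ) * ((j : ℕ) + 1)) := by
          apply Finset.sum_subset (Finset.subset_univ S)
          intro i _ hi
          simp only [hS, mem_filter, mem_univ, true_and, not_not] at hi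
          rw [hi]; simp
      _ = 0 := hsum
  have hdet : A.det ≠ 0 := by
    have hAeq : A = (Matrix.vandermonde v).transpose * Matrix.diagonal v := by
      funext j k
      rw [hA]
      show v k ^ ((j : ℕ) + 1) = _
      rw [Matrix.mul_apply]
      rw [Finset.sum_eq_single k]
      · simp [Matrix.vandermonde, Matrix.diagonal, Matrix.transpose_apply, pow_succ]
      · intro b _ hb
        simp [Matrix.diagonal, hb]
      · simp
    rw [hAeq, Matrix.det_mul, Matrix.det_transpose, Matrix.det_diagonal]
    apply mul_ne_zero
    · exact Matrix.det_vandermonde_ne_zero_iff.mpr hvinj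
    · exact Finset.prod_ne_zero_iff.mpr (fun k _ => pow_ne_zero _ hα0)
  have hu0 : u = 0 := Matrix.eq_zero_of_mulVec_eq_zero hdet hAu
  have hc0 : c (e ⟨0, hw1⟩) = 0 := by
    have h := congrFun hu0 ⟨0, hw1⟩
    rw [hu] at h
    exact (map_eq_zero (algebraMap F E)).mp h
  exact (mem_filter.mp (e ⟨0, hw1⟩).2).2 hc0

lemma char_of_card {E : Type*} [Field E] [Fintype E] {p k m : ℕ} (hp : p.Prime)
    (hk : 0 < k) (hm : 0 < m) (hE : Fintype.card E = (p ^ k) ^ m) : CharP E p := by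
  set r := ringChar E with hr
  haveI : CharP E r := ringChar.charP E
  obtain ⟨n', hr_prime, hcard⟩ := FiniteField.card E r
  have hpr : p = r := by
    have h1 : p ∣ r ^ (n' : ℕ) := by
      rw [← hcard, hE, ← pow_mul]
      exact dvd_pow_self p (by positivity)
    have h2 : p ∣ r := hp.dvd_of_dvd_pow h1
    exact ((Nat.prime_dvd_prime_iff_eq hp hr_prime).mp h2)
  rw [hpr]
  exact ringChar.charP E

lemma check_mul_q {F E : Type*} [Field F] [Fintype F] [Field E] [Fintype E] [Algebra F E]
    {q : ℕ} (hq : IsPrimePow q) (hF : Fintype.card F = q) {m : ℕ} (hm : 0 < m)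
    (hE : Fintype.card E = q ^ m)
    {n : ℕ} {α : E} {c : Fin n → F} {j : ℕ}
    (h : ∑ i : Fin n, algebraMap F E (c i) * α ^ ((i : ℕ) * j) = 0) :
    ∑ i : Fin n, algebraMap F E (c i) * α ^ ((i : ℕ) * (q * j)) = 0 := by
  obtain ⟨p, k, hp, hk, rfl⟩ := hq
  haveI : CharP E p := char_of_card hp.nat_prime hk hm hE
  haveI : ExpChar E p := ExpChar.prime hp.nat_prime
  have key : (∑ i : Fin n, algebraMap F E (c i) * α ^ ((i : ℕ) * j)) ^ p ^ k
      = ∑ i : Fin n, algebraMap F E (c i) * α ^ ((i : ℕ) * (p ^ k * j)) := by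
    rw [sum_pow_char_pow]
    apply Finset.sum_congr rfl
    intro i _
    rw [mul_pow, ← map_pow, ← pow_mul]
    congr 2
    · rw [← hF]; exact FiniteField.pow_card (c i)
    · ring
  rw [h, zero_pow (pow_pos hp.nat_prime.pos k).ne'] at key
  exact key.symm

/-- checks on non-multiples of `q` in `[1, δ-1]` extend to all of `[1, δ-1]`. -/
lemma checks_extend {F E : Type*} [Field F] [Fintype F] [Field E] [Fintype E] [Algebra F E]
    {q : ℕ} (hq : IsPrimePow q) (hF : Fintype.card F = q) {m : ℕ} (hm : 0 < m)
    (hE : Fintype.card E = q ^ m)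
    {n : ℕ} {α : E} {c : Fin n → F} {δ : ℕ}
    (hJ : ∀ j : ℕ, 1 ≤ j → j ≤ δ - 1 → ¬ q ∣ j →
      ∑ i : Fin n, algebraMap F E (c i) * α ^ ((i : ℕ) * j) = 0) :
    ∀ j : ℕ, 1 ≤ j → j ≤ δ - 1 →
      ∑ i : Fin n, algebraMap F E (c i) * α ^ ((i : ℕ) * j) = 0 := by
  have hq2 : 2 ≤ q := hq.two_le
  intro j
  induction j using Nat.strong_induction_on with
  | _ j ih =>
    intro hj1 hj2
    by_cases hdvd : q ∣ j
    · obtain ⟨j', rfl⟩ := hdvd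
      have hj'1 : 1 ≤ j' := by
        rcases Nat.eq_zero_or_pos j' with rfl | h
        · simp at hj1
        · exact h
      have hlt : j' < q * j' := by nlinarith
      have hle : j' ≤ q * j' := Nat.le_mul_of_pos_left j' (by omega)
      have := ih j' hlt hj'1 (by omega)
      exact check_mul_q hq hF hm hE this
    · exact hJ j hj1 hj2 hdvd

lemma support_card_eq {F : Type*} [Field F] [Fintype F] [DecidableEq F] {n : ℕ} (s : Finset (Fin n)) :
    (univ.filter (fun y : Fin n → F => univ.filter (fun i => y i ≠ 0) = s)).card
      = (Fintype.card F - 1) ^ s.card := by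
  rw [← Fintype.card_subtype]
  have e : {y : Fin n → F // univ.filter (fun i => y i ≠ 0) = s}
      ≃ ({x // x ∈ s} → {a : F // a ≠ 0}) :=
    { toFun := fun y j => ⟨y.1 j.1, by
        have hj : (j : Fin n) ∈ univ.filter (fun i => y.1 i ≠ 0) := by rw [y.2]; exact j.2
        exact (mem_filter.mp hj).2⟩
      invFun := fun g => ⟨fun i => if h : i ∈ s then (g ⟨i, h⟩).1 else 0, by
        ext i
        simp only [mem_filter, mem_univ, true_and]
        by_cases h : i ∈ s
        · simp only [dif_pos h, h, iff_true]
          exact (g ⟨i, h⟩).2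
        · simp [dif_neg h, h]⟩
      left_inv := fun y => by
        apply Subtype.ext
        funext i
        by_cases h : i ∈ s
        · simp [dif_pos h]
        · simp only [dif_neg h]
          have : i ∉ univ.filter (fun i => y.1 i ≠ 0) := by rw [y.2]; exact h
          simp only [mem_filter, mem_univ, true_and, not_not] at this
          exact this.symm
      right_inv := fun g => by
        funext j
        apply Subtype.ext
        simp [dif_pos j.2] }
  rw [Fintype.card_congr e, Fintype.card_fun, Fintype.card_coe]
  congr 1
  have h := Fintype.card_subtype_compl (fun a : F => a = 0)
  rw [Fintype.card_subtype_eq] at h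
  exact h

lemma norm_card_eq {F : Type*} [Field F] [Fintype F] [DecidableEq F] {n : ℕ} (i : ℕ) :
    (univ.filter (fun y : Fin n → F => hammingNorm y = i)).card
      = n.choose i * (Fintype.card F - 1) ^ i := by
  have hnorm : ∀ y : Fin n → F, hammingNorm y = (univ.filter (fun k => y k ≠ 0)).card :=
    fun y => rfl
  rw [Finset.card_eq_sum_card_fiberwise
      (f := fun y : Fin n → F => univ.filter (fun k => y k ≠ 0))
      (t := powersetCard i univ)
      (fun y hy => by
        rw [Finset.mem_coe, mem_powersetCard]
        exact ⟨subset_univ _, by have := (mem_filter.mp hy).2; rw [hnorm] at this; exact this⟩)]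
  have hterm : ∀ s ∈ powersetCard i (univ : Finset (Fin n)),
      ((univ.filter (fun y : Fin n → F => hammingNorm y = i)).filter
        (fun y => univ.filter (fun k => y k ≠ 0) = s)).card
      = (Fintype.card F - 1) ^ i := by
    intro s hs
    have hsc : s.card = i := (mem_powersetCard.mp hs).2
    rw [filter_filter]
    have : (univ.filter (fun y : Fin n → F =>
        hammingNorm y = i ∧ univ.filter (fun k => y k ≠ 0) = s))
        = univ.filter (fun y : Fin n → F => univ.filter (fun k => y k ≠ 0) = s) := by
      apply filter_congr
      intro y _
      constructor
      · exact fun h => h.2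
      · intro h
        exact ⟨by rw [hnorm, h, hsc], h⟩
    rw [this, support_card_eq, hsc]
  rw [Finset.sum_congr rfl hterm, Finset.sum_const, card_powersetCard, card_univ,
    Fintype.card_fin, smul_eq_mul]

lemma ball_card_eq {F : Type*} [Field F] [Fintype F] [DecidableEq F] {n : ℕ} (t : ℕ) :
    (univ.filter (fun y : Fin n → F => hammingNorm y ≤ t)).card
      = ∑ i ∈ range (t + 1), n.choose i * (Fintype.card F - 1) ^ i := by
  rw [Finset.card_eq_sum_card_fiberwise (f := hammingNorm) (t := range (t + 1))
    (fun y hy => mem_range.mpr (by have := (mem_filter.mp hy).2; omega))]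
  apply Finset.sum_congr rfl
  intro i hi
  rw [filter_filter]
  rw [show (univ.filter (fun y : Fin n → F => hammingNorm y ≤ t ∧ hammingNorm y = i))
      = univ.filter (fun y : Fin n → F => hammingNorm y = i) from
    filter_congr (fun y _ => ⟨fun h => h.2, fun h => ⟨by rw [h]; exact Nat.lt_succ_iff.mp (mem_range.mp hi), h⟩⟩)]
  exact norm_card_eq i

lemma ball_card_shift {F : Type*} [Field F] [Fintype F] [DecidableEq F] {n : ℕ} (t : ℕ) (c : Fin n → F) :
    (univ.filter (fun y : Fin n → F => hammingDist y c ≤ t)).card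
      = (univ.filter (fun y : Fin n → F => hammingNorm y ≤ t)).card := by
  apply Finset.card_bij' (fun y _ => y - c) (fun y _ => y + c)
  · intro y hy
    simp only [mem_filter, mem_univ, true_and] at *
    rwa [← neg_add_eq_sub, ← hammingDist_eq_hammingNorm, hammingDist_comm]
  · intro y hy
    simp only [mem_filter, mem_univ, true_and] at *
    rwa [hammingDist_comm, hammingDist_eq_hammingNorm, neg_add_eq_sub, add_sub_cancel_right]
  · intro y _; simp
  · intro y _; simp
/-- The minimum distance of a code: the least Hamming weight of a nonzero
codeword. -/
noncomputable def minDist {F : Type*} [Field F] [DecidableEq F] {n : ℕ}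
    (C : Set (Fin n → F)) : ℕ :=
  sInf {w | ∃ c ∈ C, c ≠ 0 ∧ hammingNorm c = w}
section Main
open Finset

/-- Farr (sphere-packing) bound for BCH codes: if
`∑_{i=0}^{⌊(δ+1)/2⌋} C(q^m-1, i)(q-1)^i > q^{m⌈(δ-1)(1-1/q)⌉}`,
then the minimum distance `d` of the primitive, narrow-sense BCH code of
designed distance `δ` is `δ` or `δ + 1`, and if moreover `q ∣ δ` then
`d = δ + 1`. -/
theorem bch_minDist_of_sphere_packing
    (q m : ℕ) (hq : IsPrimePow q) (hm : 0 < m)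
    (F E : Type*) [Field F] [Fintype F] [DecidableEq F] [Field E] [Fintype E]
    [Algebra F E]
    (hF : Fintype.card F = q) (hE : Fintype.card E = q ^ m)
    (α : E) (hα : orderOf α = q ^ m - 1)
    (δ : ℕ) (hδ1 : 2 ≤ δ) (hδ2 : δ ≤ q ^ ((m + 1) / 2) + 1)
    (hsphere : q ^ (m * ((δ - 1) - (δ - 1) / q)) <
      ∑ i ∈ Finset.range ((δ + 1) / 2 + 1), (q ^ m - 1).choose i * (q - 1) ^ i) :
    (minDist (bchCode F (q ^ m - 1) α δ : Set (Fin (q ^ m - 1) → F)) = δ ∨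
      minDist (bchCode F (q ^ m - 1) α δ : Set (Fin (q ^ m - 1) → F)) = δ + 1) ∧
    (q ∣ δ →
      minDist (bchCode F (q ^ m - 1) α δ : Set (Fin (q ^ m - 1) → F)) = δ + 1) := by
  classical
  have hq2 : 2 ≤ q := hq.two_le
  set n := q ^ m - 1 with hn_def
  have hqm : 2 ≤ q ^ m := by
    calc 2 ≤ q := hq2
    _ = q ^ 1 := (pow_one q).symm
    _ ≤ q ^ m := Nat.pow_le_pow_right (by omega) hm
  have hn : 0 < n := by omega
  set C := bchCode F n α δ with hC_def
  have hmemC : ∀ c : Fin n → F, c ∈ C ↔ (∀ j : ℕ, 1 ≤ j → j ≤ δ - 1 →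
      ∑ i : Fin n, algebraMap F E (c i) * α ^ ((i : ℕ) * j) = 0) := fun c => Iff.rfl
  set N := δ - 1 with hN_def
  set J : Finset ℕ := (Ioc 0 N).filter (fun j => ¬ q ∣ j) with hJ_def
  have hJcard : J.card = N - N / q := by
    rw [hJ_def, Finset.filter_not, Finset.card_sdiff_of_subset (Finset.filter_subset _ _),
      Nat.card_Ioc, Nat.Ioc_filter_dvd_card_eq_div]
    simp
  -- the parity-check homomorphism on the reduced check set J
  set φ : (Fin n → F) →+ ({x // x ∈ J} → E) :=
    { toFun := fun c j => ∑ i : Fin n, algebraMap F E (c i) * α ^ ((i : ℕ) * (j : ℕ))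
      map_zero' := by funext j; simp
      map_add' := by
        intro a b
        funext j
        simp only [Pi.add_apply, map_add, add_mul]
        rw [Finset.sum_add_distrib] } with hφ_def
  have hker : ∀ c : Fin n → F, c ∈ φ.ker ↔ c ∈ C := by
    intro c
    rw [AddMonoidHom.mem_ker, hmemC]
    constructor
    · intro h
      apply checks_extend hq hF hm hE
      intro j hj1 hj2 hjd
      have hjJ : j ∈ J := mem_filter.mpr ⟨mem_Ioc.mpr ⟨hj1, hj2⟩, hjd⟩
      exact congrFun h ⟨j, hjJ⟩
    · intro h
      funext j
      obtain ⟨hj1, hj2⟩ := mem_filter.mp j.2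
      obtain ⟨ha, hb⟩ := mem_Ioc.mp hj1
      exact h (j : ℕ) ha hb
  set CF : Finset (Fin n → F) := univ.filter (· ∈ C) with hCF_def
  have hCF0 : (0 : Fin n → F) ∈ CF := by
    rw [hCF_def, mem_filter]
    exact ⟨mem_univ _, zero_mem C⟩
  have hCFpos : 0 < CF.card := Finset.card_pos.mpr ⟨0, hCF0⟩
  have hdom : Fintype.card (Fin n → F) = q ^ n := by
    rw [Fintype.card_fun, Fintype.card_fin, hF]
  -- cardinality lower bound for the code
  have hcode_card : q ^ n ≤ q ^ (m * J.card) * CF.card := by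
    have h1 : Nat.card (Fin n → F)
        = Nat.card ((Fin n → F) ⧸ φ.ker) * Nat.card φ.ker :=
      AddSubgroup.card_eq_card_quotient_mul_card_addSubgroup φ.ker
    have h2 : Nat.card ((Fin n → F) ⧸ φ.ker) ≤ q ^ (m * J.card) := by
      have e := QuotientAddGroup.quotientKerEquivRange φ
      rw [Nat.card_congr e.toEquiv]
      calc Nat.card φ.range ≤ Nat.card ({x // x ∈ J} → E) :=
            Nat.card_le_card_of_injective _ Subtype.val_injective
        _ = q ^ (m * J.card) := by
            rw [Nat.card_eq_fintype_card, Fintype.card_fun, Fintype.card_coe, hE, ← pow_mul]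
    have h3 : Nat.card φ.ker = CF.card := by
      rw [Nat.card_eq_fintype_card, Fintype.card_subtype]
      congr 1
      apply Finset.filter_congr
      intro x _
      exact iff_iff_eq.mp (hker x) ▸ Iff.rfl
    rw [Nat.card_eq_fintype_card, hdom, h3] at h1
    rw [h1]
    exact Nat.mul_le_mul_right _ h2
  set t := (δ + 1) / 2 with ht_def
  set V := ∑ i ∈ range (t + 1), n.choose i * (q - 1) ^ i with hV_def
  have hV : q ^ (m * J.card) < V := by
    rw [hJcard]
    exact hsphere
  -- existence of a nonzero codeword of weight ≤ δ + 1
  have key : ∃ c ∈ C, c ≠ 0 ∧ hammingNorm c ≤ δ + 1 := by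
    by_contra hcon
    push_neg at hcon
    set B : (Fin n → F) → Finset (Fin n → F) :=
      fun c => univ.filter (fun y => hammingDist y c ≤ t) with hB_def
    have hdisj : ∀ c ∈ CF, ∀ c' ∈ CF, c ≠ c' → Disjoint (B c) (B c') := by
      intro c hc c' hc' hne
      rw [Finset.disjoint_left]
      intro y hy hy'
      rw [hB_def, mem_filter] at hy hy'
      have htri : hammingDist c c' ≤ 2 * t := by
        calc hammingDist c c' ≤ hammingDist c y + hammingDist y c' := hammingDist_triangle c y c'
          _ ≤ t + t := by
              rw [hammingDist_comm c y]
              exact Nat.add_le_add hy.2 hy'.2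
          _ = 2 * t := by ring
      have hsub : c - c' ∈ C := by
        rw [hCF_def, mem_filter] at hc hc'
        exact sub_mem hc.2 hc'.2
      have hsubne : c - c' ≠ 0 := sub_ne_zero_of_ne hne
      have hge := hcon (c - c') hsub hsubne
      rw [← neg_add_eq_sub, ← hammingDist_eq_hammingNorm, hammingDist_comm] at hge
      omega
    have hcount : ∑ c ∈ CF, (B c).card ≤ q ^ n := by
      rw [← Finset.card_biUnion hdisj]
      calc (CF.biUnion B).card ≤ (univ : Finset (Fin n → F)).card :=
            Finset.card_le_card (subset_univ _)
        _ = q ^ n := by rw [card_univ, hdom]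
    have hBcard : ∀ c : Fin n → F, (B c).card = V := by
      intro c
      show (univ.filter (fun y => hammingDist y c ≤ t)).card = V
      rw [ball_card_shift, ball_card_eq, hF]
    rw [Finset.sum_congr rfl (fun c _ => hBcard c), Finset.sum_const, smul_eq_mul] at hcount
    have : q ^ (m * J.card) * CF.card < V * CF.card :=
      (Nat.mul_lt_mul_right hCFpos).mpr hV
    rw [mul_comm V CF.card] at this
    omega
  obtain ⟨c₀, hc₀C, hc₀ne, hc₀w⟩ := key
  have hSne : {w | ∃ c ∈ (C : Set (Fin n → F)), c ≠ 0 ∧ hammingNorm c = w}.Nonempty :=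
    ⟨hammingNorm c₀, c₀, hc₀C, hc₀ne, rfl⟩
  have hdmem : minDist (C : Set (Fin n → F)) ∈
      {w | ∃ c ∈ (C : Set (Fin n → F)), c ≠ 0 ∧ hammingNorm c = w} := Nat.sInf_mem hSne
  obtain ⟨cmin, hcminC, hcminne, hcminw⟩ := hdmem
  have hub : minDist (C : Set (Fin n → F)) ≤ δ + 1 := by
    have hmem' : hammingNorm c₀ ∈
        {w | ∃ c ∈ (C : Set (Fin n → F)), c ≠ 0 ∧ hammingNorm c = w} := ⟨c₀, hc₀C, hc₀ne, rfl⟩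
    exact (Nat.sInf_le hmem').trans hc₀w
  have hlb : δ - 1 < hammingNorm cmin := by
    apply bch_bound hα hn hcminne
    intro j hj1 hj2
    exact hcminC j hj1 hj2
  constructor
  · rw [← hcminw] at hub ⊢
    omega
  · intro hdvd
    have hqle : q ≤ δ := Nat.le_of_dvd (by omega) hdvd
    have hext : ∀ j : ℕ, 1 ≤ j → j ≤ δ →
        ∑ i : Fin n, algebraMap F E (cmin i) * α ^ ((i : ℕ) * j) = 0 := by
      intro j hj1 hj2
      rcases Nat.lt_or_ge j δ with hlt | hge
      · exact hcminC j hj1 (by omega)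
      · have hjδ : j = δ := by omega
        rw [hjδ]
        have hd1 : 1 ≤ δ / q := Nat.one_le_div_iff (by omega) |>.mpr hqle
        have hd2 : δ / q ≤ δ - 1 := by
          have : δ / q ≤ δ / 2 := Nat.div_le_div_left hq2 (by omega)
          have h2 : δ / 2 ≤ δ - 1 := by omega
          omega
        have hch := hcminC (δ / q) hd1 hd2
        have := check_mul_q hq hF hm hE hch
        rwa [Nat.mul_div_cancel' hdvd] at this
    have hlb2 : δ < hammingNorm cmin := bch_bound hα hn hcminne hext
    rw [← hcminw] at hub ⊢
    omega

end Main
end
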